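/- arXiv:2405.19717 — 7 statements merged into one kernel-verified Lean document; each statement's English description precedes it below -/
import Mathlib

section
/- Let G be a graph of order n ≥ 3 in which every vertex lies in a cycle. Then crx_1(G) = e(G) if and only if G is the cycle C_n. -/
open SimpleGraph

/-- `G.CycleThrough S`: there is a cycle in `G` containing all vertices of `S`. -/
def SimpleGraph.CycleThrough {V : Type*} (G : SimpleGraph V) (S : Set V) : Prop :=
  ∃ (u : V) (c : G.Walk u u), c.IsCycle ∧ ∀ v ∈ S, v ∈ c.support

/-- A `k`-rainbow cycle colouring: every `k`-set of vertices lies in a cycle whose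
edges receive pairwise distinct colours. -/
def SimpleGraph.IsRainbowCycleColoring {V : Type*} (G : SimpleGraph V) (k : ℕ)
    (φ : Sym2 V → ℕ) : Prop :=
  ∀ S : Finset V, S.card = k →
    ∃ (u : V) (c : G.Walk u u), c.IsCycle ∧ (∀ v ∈ S, v ∈ c.support) ∧
      (c.edges.map φ).Nodup

/-- The `k`-rainbow cycle index `crx_k(G)`. -/
noncomputable def SimpleGraph.crx {V : Type*} (G : SimpleGraph V) (k : ℕ) : ℕ :=
  sInf {r | ∃ φ : Sym2 V → ℕ, (∀ e ∈ G.edgeSet, φ e < r) ∧ G.IsRainbowCycleColoring k φ}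

/-- Number of edges of `G`. -/
noncomputable def SimpleGraph.numEdges {V : Type*} (G : SimpleGraph V) : ℕ :=
  Nat.card G.edgeSet

/-- A graph is 2-connected if it has more than 2 vertices and deleting any vertex
leaves it connected. -/
def SimpleGraph.IsTwoConnected {V : Type*} (G : SimpleGraph V) : Prop :=
  2 < Nat.card V ∧ ∀ v : V, (G.induce {w | w ≠ v}).Connected

/-- A graph is Hamiltonian if it has a cycle through all its vertices. -/
def SimpleGraph.IsHamiltonianGraph {V : Type*} (G : SimpleGraph V) : Prop :=
  ∃ (u : V) (c : G.Walk u u), c.IsCycle ∧ ∀ v : V, v ∈ c.support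


set_option maxHeartbeats 1000000

namespace Crx
variable {V : Type*} {G : SimpleGraph V}
open SimpleGraph Walk


lemma start_edge_unique {u v : V} {p : G.Walk u v} (hp : p.IsPath)
    {e f : Sym2 V} (he : e ∈ p.edges) (hf : f ∈ p.edges) (hue : u ∈ e) (huf : u ∈ f) :
    e = f := by
  cases p with
  | nil => simp at he
  | cons h q =>
    rename_i w
    rw [Walk.cons_isPath_iff] at hp
    have key : ∀ g : Sym2 V, g ∈ (Walk.cons h q).edges → u ∈ g → g = s(u, w) := by
      intro g hg hug
      rw [Walk.edges_cons, List.mem_cons] at hg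
      rcases hg with hg | hg
      · exact hg
      · obtain ⟨y, rfl⟩ := Sym2.mem_iff_exists.mp hug
        exact absurd (Walk.fst_mem_support_of_mem_edges q hg) hp.2
    rw [key e he hue, key f hf huf]

lemma end_edge_unique {u v : V} {p : G.Walk u v} (hp : p.IsPath)
    {e f : Sym2 V} (he : e ∈ p.edges) (hf : f ∈ p.edges) (hue : v ∈ e) (huf : v ∈ f) :
    e = f := by
  refine start_edge_unique hp.reverse (p := p.reverse) ?_ ?_ hue huf <;>
    simp [Walk.edges_reverse, List.mem_reverse] <;> assumption

/-- decomposition of a cycle based at `v` -/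
lemma cycle_exists_cons {v : V} {d : G.Walk v v} (hd : d.IsCycle) :
    ∃ (w : V) (h : G.Adj v w) (q : G.Walk w v),
      d = Walk.cons h q ∧ q.IsPath ∧ s(v, w) ∉ q.edges := by
  cases d with
  | nil => exact absurd rfl hd.ne_nil
  | cons h q =>
    rename_i w
    obtain ⟨hq, he⟩ := ((Walk.cons_isCycle_iff q h)).mp hd
    exact ⟨w, h, q, rfl, hq, he⟩

/-- a cycle cannot contain three distinct edges incident to one vertex -/
lemma cycle_three_incident [DecidableEq V] {w v : V} {c : G.Walk w w} (hc : c.IsCycle)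
    {e1 e2 e3 : Sym2 V} (m1 : e1 ∈ c.edges) (m2 : e2 ∈ c.edges) (m3 : e3 ∈ c.edges)
    (i1 : v ∈ e1) (i2 : v ∈ e2) (i3 : v ∈ e3)
    (n12 : e1 ≠ e2) (n13 : e1 ≠ e3) (n23 : e2 ≠ e3) : False := by
  obtain ⟨y, rfl⟩ := Sym2.mem_iff_exists.mp i1
  have hv : v ∈ c.support := Walk.fst_mem_support_of_mem_edges c m1
  have hd : (c.rotate v hv).IsCycle := hc.rotate hv
  have hperm := (Walk.rotate_edges c v hv).mem_iff (a := e2)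
  obtain ⟨w', h, q, hdq, hq, hne⟩ := cycle_exists_cons hd
  have m1' : s(v,y) ∈ (c.rotate v hv).edges := ((Walk.rotate_edges c v hv).mem_iff).mpr m1
  have m2' : e2 ∈ (c.rotate v hv).edges := ((Walk.rotate_edges c v hv).mem_iff).mpr m2
  have m3' : e3 ∈ (c.rotate v hv).edges := ((Walk.rotate_edges c v hv).mem_iff).mpr m3
  rw [hdq, Walk.edges_cons, List.mem_cons] at m1' m2' m3'
  rcases m1' with h1 | h1 <;> rcases m2' with h2 | h2 <;> rcases m3' with h3 | h3
  · exact n12 (h1.trans h2.symm)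
  · exact n12 (h1.trans h2.symm)
  · exact n13 (h1.trans h3.symm)
  · exact n23 (end_edge_unique hq h2 h3 i2 i3)
  · exact n23 (h2.trans h3.symm)
  · exact n13 (end_edge_unique hq h1 h3 (by simp) i3)
  · exact n12 (end_edge_unique hq h1 h2 (by simp) i2)
  · exact n12 (end_edge_unique hq h1 h2 (by simp) i2)

/-- every support vertex of a cycle has two distinct incident edges on the cycle -/
lemma cycle_two_incident [DecidableEq V] {w v : V} {c : G.Walk w w} (hc : c.IsCycle)
    (hv : v ∈ c.support) :
    ∃ y z : V, y ≠ z ∧ s(v, y) ∈ c.edges ∧ s(v, z) ∈ c.edges := by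
  have hd : (c.rotate v hv).IsCycle := hc.rotate hv
  obtain ⟨w', h, q, hdq, hq, hne⟩ := cycle_exists_cons hd
  -- last edge of q
  have hvw' : v ≠ w' := h.ne
  obtain ⟨z, h2, r, hqr⟩ := Walk.exists_eq_cons_of_ne hvw' q.reverse
  have hz : s(v, z) ∈ q.edges := by
    have : s(v, z) ∈ q.reverse.edges := by rw [hqr]; simp
    simpa [Walk.edges_reverse, List.mem_reverse] using this
  refine ⟨w', z, ?_, ?_, ?_⟩
  · rintro rfl
    exact hne hz
  · have : s(v, w') ∈ (c.rotate v hv).edges := by rw [hdq]; simp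
    exact ((Walk.rotate_edges c v hv).mem_iff).mp this
  · have : s(v, z) ∈ (c.rotate v hv).edges := by rw [hdq, Walk.edges_cons]; exact List.mem_cons_of_mem _ hz
    exact ((Walk.rotate_edges c v hv).mem_iff).mp this



lemma mem_support_iff_mem_tail {u y : V} {c : G.Walk u u} (hc : ¬ c.Nil) :
    y ∈ c.support ↔ y ∈ c.support.tail := by
  cases c with
  | nil => simp at hc
  | cons h q =>
    simp only [Walk.support_cons, List.tail_cons, List.mem_cons]
    exact ⟨fun h' => h'.elim (fun h'' => h'' ▸ q.end_mem_support) id, Or.inr⟩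

lemma mem_support_rotate_iff [DecidableEq V] {u w y : V} {c : G.Walk w w}
    (hc : c.IsCycle) (hu : u ∈ c.support) :
    y ∈ (c.rotate u hu).support ↔ y ∈ c.support := by
  have h1 : ¬ c.Nil := by
    intro h; exact hc.ne_nil (Walk.nil_iff_eq_nil.mp h)
  have h2 : ¬ (c.rotate u hu).Nil := by
    intro h; exact (hc.rotate hu).ne_nil (Walk.nil_iff_eq_nil.mp h)
  rw [mem_support_iff_mem_tail h1, mem_support_iff_mem_tail h2,
    (Walk.support_rotate c u hu).mem_iff]

/-- removing an edge from a cycle leaves a path with the same support -/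
lemma exists_path_del [DecidableEq V] {w v x : V} {c : G.Walk w w} (hc : c.IsCycle)
    (he : s(v, x) ∈ c.edges) :
    ∃ P : G.Walk v x, P.IsPath ∧ s(v, x) ∉ P.edges ∧
      (∀ y, y ∈ c.support ↔ y ∈ P.support) ∧ (∀ f ∈ P.edges, f ∈ c.edges) := by
  have hv : v ∈ c.support := Walk.fst_mem_support_of_mem_edges c he
  have hd : (c.rotate v hv).IsCycle := hc.rotate hv
  have he' : s(v, x) ∈ (c.rotate v hv).edges := ((Walk.rotate_edges c v hv).mem_iff).mpr he
  have hsup : ∀ y, y ∈ (c.rotate v hv).support ↔ y ∈ c.support :=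
    fun y => mem_support_rotate_iff hc hv
  have hedg : ∀ f, f ∈ (c.rotate v hv).edges ↔ f ∈ c.edges :=
    fun f => (Walk.rotate_edges c v hv).mem_iff
  obtain ⟨w', h, q, hdq, hq, hne⟩ := cycle_exists_cons hd
  have hds : ∀ y, y ∈ (c.rotate v hv).support ↔ y ∈ q.support := by
    intro y
    rw [hdq, Walk.support_cons, List.mem_cons]
    exact ⟨fun h' => h'.elim (fun h'' => h'' ▸ q.end_mem_support) id, Or.inr⟩
  by_cases hx : s(v, x) = s(v, w')
  · have hxw : x = w' := Sym2.congr_right.mp hx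
    subst hxw
    refine ⟨q.reverse, hq.reverse, ?_, ?_, ?_⟩
    · rw [Walk.edges_reverse, List.mem_reverse]; exact hne
    · intro y
      rw [← hsup y, hds y, Walk.support_reverse, List.mem_reverse]
    · intro f hf
      rw [Walk.edges_reverse, List.mem_reverse] at hf
      rw [← hedg f, hdq, Walk.edges_cons]
      exact List.mem_cons_of_mem _ hf
  · have he2 : s(v, x) ∈ q.edges := by
      rw [hdq, Walk.edges_cons, List.mem_cons] at he'
      exact he'.resolve_left hx
    obtain ⟨z, h2, r, hqr⟩ := Walk.exists_eq_cons_of_ne h.ne q.reverse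
    have hqrev : q.reverse.IsPath := hq.reverse
    rw [hqr, Walk.cons_isPath_iff] at hqrev
    have hzx : z = x := by
      have hmem : s(v, x) ∈ q.reverse.edges := by
        rw [Walk.edges_reverse, List.mem_reverse]; exact he2
      rw [hqr, Walk.edges_cons, List.mem_cons] at hmem
      rcases hmem with h' | h'
      · exact (Sym2.congr_right.mp h').symm
      · exact absurd (Walk.fst_mem_support_of_mem_edges r h') hqrev.2
    subst hzx
    refine ⟨Walk.cons h r.reverse, ?_, ?_, ?_, ?_⟩
    · rw [Walk.cons_isPath_iff]
      refine ⟨hqrev.1.reverse, ?_⟩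
      rw [Walk.support_reverse, List.mem_reverse]; exact hqrev.2
    · rw [Walk.edges_cons, List.mem_cons]
      rintro (h' | h')
      · exact hx h'
      · rw [Walk.edges_reverse, List.mem_reverse] at h'
        exact hqrev.2 (Walk.fst_mem_support_of_mem_edges r h')
    · intro y
      rw [← hsup y, hds y, Walk.support_cons, List.mem_cons]
      have : y ∈ q.support ↔ y ∈ q.reverse.support := by
        rw [Walk.support_reverse, List.mem_reverse]
      rw [this, hqr, Walk.support_cons, List.mem_cons]
      simp [Walk.support_reverse, List.mem_reverse]
    · intro f hf
      rw [Walk.edges_cons, List.mem_cons] at hf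
      rcases hf with h' | h'
      · rw [← hedg f, hdq, Walk.edges_cons, h']
        exact List.mem_cons_self
      · rw [Walk.edges_reverse, List.mem_reverse] at h'
        have : f ∈ q.reverse.edges := by
          rw [hqr, Walk.edges_cons]; exact List.mem_cons_of_mem _ h'
        rw [Walk.edges_reverse, List.mem_reverse] at this
        rw [← hedg f, hdq, Walk.edges_cons]
        exact List.mem_cons_of_mem _ this



/-- prefix of a path up to the first vertex belonging to a set -/
lemma exists_prefix_until {S : Set V} [DecidablePred (· ∈ S)] :
    ∀ {u v : V} (W : G.Walk u v), W.IsPath → v ∈ S →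
      ∃ (y : V) (A : G.Walk u y), A.IsPath ∧ y ∈ S ∧ (∀ z ∈ A.support, z ∈ S → z = y) ∧
        (∀ z ∈ A.support, z ∈ W.support) ∧ (∀ f ∈ A.edges, f ∈ W.edges) := by
  intro u v W
  induction W with
  | nil =>
    intro _ hv
    exact ⟨_, Walk.nil, Walk.IsPath.nil, hv, by simp, by simp, by simp⟩
  | @cons a b d h q ih =>
    intro hW hv
    by_cases ha : a ∈ S
    · exact ⟨a, Walk.nil, Walk.IsPath.nil, ha, by simp, by simp, by simp⟩
    · rw [Walk.cons_isPath_iff] at hW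
      obtain ⟨y, A, hA, hy, honly, hsub, hesub⟩ := ih hW.1 hv
      refine ⟨y, Walk.cons h A, ?_, hy, ?_, ?_, ?_⟩
      · rw [Walk.cons_isPath_iff]
        exact ⟨hA, fun hmem => hW.2 (hsub a hmem)⟩
      · intro z hz hzS
        rw [Walk.support_cons, List.mem_cons] at hz
        rcases hz with rfl | hz
        · exact absurd hzS ha
        · exact honly z hz hzS
      · intro z hz
        rw [Walk.support_cons, List.mem_cons] at hz ⊢
        exact hz.imp id (hsub z)
      · intro f hf
        rw [Walk.edges_cons, List.mem_cons] at hf ⊢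
        exact hf.imp id (hesub f)

/-- a path between two vertices on a path, staying on it -/
lemma exists_seg [DecidableEq V] {a b y z : V} {Q : G.Walk a b} (hQ : Q.IsPath)
    (hy : y ∈ Q.support) (hz : z ∈ Q.support) :
    ∃ R : G.Walk y z, R.IsPath ∧ (∀ t ∈ R.support, t ∈ Q.support) ∧
      (∀ f ∈ R.edges, f ∈ Q.edges) := by
  by_cases hyz : y ∈ (Q.takeUntil z hz).support
  · refine ⟨(Q.takeUntil z hz).dropUntil y hyz, (hQ.takeUntil hz).dropUntil hyz, ?_, ?_⟩
    · intro t ht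
      exact Q.support_takeUntil_subset hz (((Q.takeUntil z hz).support_dropUntil_subset hyz) ht)
    · intro f hf
      exact Q.edges_takeUntil_subset hz (((Q.takeUntil z hz).edges_dropUntil_subset hyz) hf)
  · have hy' : y ∈ (Q.dropUntil z hz).support := by
      have := Q.take_spec hz
      rw [← this, Walk.mem_support_append_iff] at hy
      exact hy.resolve_left hyz
    refine ⟨((Q.dropUntil z hz).takeUntil y hy').reverse, ((hQ.dropUntil hz).takeUntil hy').reverse,
      ?_, ?_⟩
    · intro t ht
      rw [Walk.support_reverse, List.mem_reverse] at ht
      exact Q.support_dropUntil_subset hz (((Q.dropUntil z hz).support_takeUntil_subset hy') ht)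
    · intro f hf
      rw [Walk.edges_reverse, List.mem_reverse] at hf
      exact Q.edges_dropUntil_subset hz (((Q.dropUntil z hz).edges_takeUntil_subset hy') hf)

/-- appending two paths that share only the junction vertex -/
lemma append_isPath {a b d : V} {p : G.Walk a b} {q : G.Walk b d}
    (hp : p.IsPath) (hq : q.IsPath) (hdisj : ∀ t, t ∈ p.support → t ∈ q.support → t = b) :
    (p.append q).IsPath := by
  rw [Walk.isPath_def, Walk.support_append]
  apply List.Nodup.append hp.support_nodup (hq.support_nodup.tail)
  intro t htp htq
  have hb : t = b := hdisj t htp (List.mem_of_mem_tail htq)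
  subst hb
  have := hq.support_nodup
  rw [Walk.support_eq_cons, List.nodup_cons] at this
  exact this.1 htq

/-- two internally disjoint paths, the first of length ≥ 2, form a cycle -/
lemma append_isCycle {a b : V} {p : G.Walk a b} {q : G.Walk b a}
    (hp : p.IsPath) (hq : q.IsPath) (hab : a ≠ b) (hlen : 2 ≤ p.length)
    (hdisj : ∀ t, t ∈ p.support → t ∈ q.support → t = a ∨ t = b) :
    (p.append q).IsCycle := by
  rw [Walk.isCycle_def]
  refine ⟨⟨?_⟩, ?_, ?_⟩
  · -- edges nodup
    rw [Walk.edges_append]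
    apply List.Nodup.append hp.isTrail.edges_nodup hq.isTrail.edges_nodup
    intro f hfp hfq
    induction f using Sym2.ind with
    | _ s t =>
    have hs : s = a ∨ s = b := hdisj s (Walk.fst_mem_support_of_mem_edges p hfp)
      (Walk.fst_mem_support_of_mem_edges q hfq)
    have ht : t = a ∨ t = b := hdisj t (Walk.snd_mem_support_of_mem_edges p hfp)
      (Walk.snd_mem_support_of_mem_edges q hfq)
    have hst : s ≠ t := (p.adj_of_mem_edges hfp).ne
    have hfab : s(s, t) = s(a, b) := by
      rcases hs with rfl | rfl <;> rcases ht with rfl | rfl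
      · exact absurd rfl hst
      · rfl
      · exact Sym2.eq_swap
      · exact absurd rfl hst
    rw [hfab] at hfp
    -- but an edge of p incident to the start a must be the first edge; then b appears twice
    cases p with
    | nil => simp at hfp
    | cons h r =>
      rename_i w
      rw [Walk.cons_isPath_iff] at hp
      rw [Walk.edges_cons, List.mem_cons] at hfp
      rcases hfp with h' | h'
      · have hwb : w = b := Sym2.congr_right.mp h'.symm
        subst hwb
        -- r : Walk b b is a path hence nil, contradicting length ≥ 2
        have : r = Walk.nil := (Walk.isPath_iff_eq_nil (p := r)).mp hp.1
        subst this
        simp at hlen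
      · exact hp.2 (Walk.fst_mem_support_of_mem_edges r h')
  · -- nonnil
    intro hnil
    have := congrArg Walk.length hnil
    rw [Walk.length_append] at this
    simp only [Walk.length_nil] at this
    omega
  · -- support tail nodup
    have hsa : (p.append q).support = p.support ++ q.support.tail := Walk.support_append p q
    rw [hsa]
    have hps : p.support = a :: p.support.tail := Walk.support_eq_cons p
    rw [hps, List.cons_append, List.tail_cons]
    apply List.Nodup.append (hp.support_nodup.tail) (hq.support_nodup.tail)
    intro t htp htq
    have h1 : t ∈ p.support := by rw [hps]; exact List.mem_cons_of_mem _ htp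
    have h2 : t ∈ q.support := List.mem_of_mem_tail htq
    rcases hdisj t h1 h2 with rfl | rfl
    · -- a in tail of p.support: a appears twice in p.support
      have := hp.support_nodup
      rw [hps, List.nodup_cons] at this
      exact this.1 htp
    · have := hq.support_nodup
      rw [Walk.support_eq_cons, List.nodup_cons] at this
      exact this.1 htq



lemma one_le_length_of_ne {u y : V} (h : u ≠ y) (A : G.Walk u y) : 1 ≤ A.length := by
  cases A with
  | nil => exact absurd rfl h
  | cons h q => simp [Walk.length_cons]

/-- If two cycles share an edge, and `u` lies on the first but not the second,
then there is a cycle through `u` avoiding the shared edge. -/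
lemma exists_cycle_avoiding [DecidableEq V] {w1 w2 v x u : V} {c1 : G.Walk w1 w1}
    {c2 : G.Walk w2 w2} (h1 : c1.IsCycle) (h2 : c2.IsCycle)
    (he1 : s(v, x) ∈ c1.edges) (he2 : s(v, x) ∈ c2.edges)
    (hu1 : u ∈ c1.support) (hu2 : u ∉ c2.support) :
    ∃ c : G.Walk u u, c.IsCycle ∧ s(v, x) ∉ c.edges := by
  obtain ⟨P, hP, hPe, hPsup, hPedg⟩ := exists_path_del h1 he1
  obtain ⟨Q, hQ, hQe, hQsup, hQedg⟩ := exists_path_del h2 he2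
  have huP : u ∈ P.support := (hPsup u).mp hu1
  have huQ : u ∉ Q.support := fun h => hu2 ((hQsup u).mpr h)
  set P1 := P.takeUntil u huP with hP1def
  set P2 := P.dropUntil u huP with hP2def
  have hP1 : P1.IsPath := hP.takeUntil huP
  have hP2 : P2.IsPath := hP.dropUntil huP
  have hPint : ∀ t, t ∈ P1.support → t ∈ P2.support → t = u := by
    intro t ht1 ht2
    by_contra hne
    have hsp := hP.support_nodup
    rw [← P.take_spec huP, Walk.support_append] at hsp
    have ht2' : t ∈ P2.support.tail := by
      rw [Walk.support_eq_cons] at ht2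
      exact (List.mem_cons.mp ht2).resolve_left hne
    exact (List.disjoint_of_nodup_append hsp) ht1 ht2'
  set S : Set V := {z | z ∈ Q.support} with hSdef
  haveI : DecidablePred (· ∈ S) := Classical.decPred _
  obtain ⟨y, A, hA, hyS, hAonly, hAsup0, hAedg0⟩ :=
    exists_prefix_until (S := S) P1.reverse hP1.reverse (Q.start_mem_support)
  obtain ⟨z, B, hB, hzS, hBonly, hBsup, hBedg⟩ :=
    exists_prefix_until (S := S) P2 hP2 (Q.end_mem_support)
  have hAsup : ∀ t ∈ A.support, t ∈ P1.support := by
    intro t ht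
    have := hAsup0 t ht
    rwa [Walk.support_reverse, List.mem_reverse] at this
  have hAedg : ∀ f ∈ A.edges, f ∈ P1.edges := by
    intro f hf
    have := hAedg0 f hf
    rwa [Walk.edges_reverse, List.mem_reverse] at this
  have hyu : y ≠ u := by rintro rfl; exact huQ hyS
  have hzu : z ≠ u := by rintro rfl; exact huQ hzS
  have hyz : y ≠ z := by
    rintro rfl
    exact hyu (hPint y (hAsup y A.end_mem_support) (hBsup y B.end_mem_support))
  obtain ⟨R, hR, hRsup, hRedg⟩ := exists_seg hQ hyS hzS
  have hpPath : (A.append R).IsPath := by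
    apply append_isPath hA hR
    intro t htA htR
    exact hAonly t htA (hRsup t htR)
  have hlen : 2 ≤ (A.append R).length := by
    rw [Walk.length_append]
    have := one_le_length_of_ne hyu.symm A
    have := one_le_length_of_ne hyz R
    omega
  have hdisj : ∀ t, t ∈ (A.append R).support → t ∈ B.reverse.support → t = u ∨ t = z := by
    intro t htp htq
    rw [Walk.support_reverse, List.mem_reverse] at htq
    rw [Walk.mem_support_append_iff] at htp
    rcases htp with htp | htp
    · exact Or.inl (hPint t (hAsup t htp) (hBsup t htq))
    · exact Or.inr (hBonly t htq (hRsup t htp))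
  refine ⟨(A.append R).append B.reverse,
    append_isCycle hpPath hB.reverse hzu.symm hlen hdisj, ?_⟩
  intro hmem
  rw [Walk.edges_append, List.mem_append, Walk.edges_append, List.mem_append] at hmem
  rcases hmem with (hm | hm) | hm
  · exact hPe (P.edges_takeUntil_subset huP (hAedg _ hm))
  · exact hQe (hRedg _ hm)
  · rw [Walk.edges_reverse, List.mem_reverse] at hm
    exact hPe (P.edges_dropUntil_subset huP (hBedg _ hm))



/-- A good pair of edges: every vertex lies on a cycle containing at most one of them. -/
def GoodPair (G : SimpleGraph V) (a b : Sym2 V) : Prop :=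
  a ∈ G.edgeSet ∧ b ∈ G.edgeSet ∧ a ≠ b ∧
    ∀ u : V, ∃ (w : V) (c : G.Walk w w), c.IsCycle ∧ u ∈ c.support ∧
      ¬(a ∈ c.edges ∧ b ∈ c.edges)

lemma exists_good_pair_of_three_nbrs [DecidableEq V]
    (hF : ∀ v : V, ∃ (w : V) (c : G.Walk w w), c.IsCycle ∧ v ∈ c.support)
    {v x1 x2 x3 : V} (h1 : G.Adj v x1) (h2 : G.Adj v x2) (h3 : G.Adj v x3)
    (h12 : x1 ≠ x2) (h13 : x1 ≠ x3) (h23 : x2 ≠ x3) :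
    ∃ a b, GoodPair G a b := by
  have e12 : s(v, x1) ≠ s(v, x2) := fun h => h12 (Sym2.congr_right.mp h)
  have e13 : s(v, x1) ≠ s(v, x3) := fun h => h13 (Sym2.congr_right.mp h)
  have e23 : s(v, x2) ≠ s(v, x3) := fun h => h23 (Sym2.congr_right.mp h)
  set Bad : Sym2 V → Sym2 V → Prop := fun a b =>
    ∃ u : V, ∀ (w : V) (c : G.Walk w w), c.IsCycle → u ∈ c.support →
      (a ∈ c.edges ∧ b ∈ c.edges) with hBad
  have key : ¬ Bad s(v, x1) s(v, x2) ∨ ¬ Bad s(v, x2) s(v, x3) := by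
    by_contra hcon
    push_neg at hcon
    obtain ⟨⟨u12, hu12⟩, ⟨u23, hu23⟩⟩ := hcon
    obtain ⟨wC, C, hC, hCu⟩ := hF u12
    obtain ⟨wD, D, hD, hDu⟩ := hF u23
    have hCe := hu12 wC C hC hCu
    have hDe := hu23 wD D hD hDu
    have hu12D : u12 ∉ D.support := by
      intro hmem
      have h' := hu12 wD D hD hmem
      exact cycle_three_incident hD h'.1 hDe.1 hDe.2 (Sym2.mem_mk_left v x1) (Sym2.mem_mk_left v x2) (Sym2.mem_mk_left v x3) e12 e13 e23
    obtain ⟨c, hc, hce⟩ :=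
      exists_cycle_avoiding hC hD hCe.2 hDe.1 hCu hu12D
    exact hce (hu12 u12 c hc c.start_mem_support).2
  rcases key with hk | hk
  · refine ⟨s(v, x1), s(v, x2), h1, h2, e12, ?_⟩
    intro u
    simp only [hBad, not_exists, not_forall] at hk
    obtain ⟨w, c, hc, hu, hnot⟩ := hk u
    refine ⟨w, c, hc, hu, ?_⟩
    intro hb
    tauto
  · refine ⟨s(v, x2), s(v, x3), h2, h3, e23, ?_⟩
    intro u
    simp only [hBad, not_exists, not_forall] at hk
    obtain ⟨w, c, hc, hu, hnot⟩ := hk u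
    refine ⟨w, c, hc, hu, ?_⟩
    intro hb
    tauto

lemma reachable_of_mem_support {w u : V} {c : G.Walk w w} (hu : u ∈ c.support) :
    G.Reachable w u := by
  classical
  exact ⟨c.takeUntil u hu⟩

lemma exists_good_pair_of_not_reachable [DecidableEq V]
    (hF : ∀ v : V, ∃ (w : V) (c : G.Walk w w), c.IsCycle ∧ v ∈ c.support)
    {u0 w0 : V} (hur : ¬ G.Reachable u0 w0) :
    ∃ a b, GoodPair G a b := by
  obtain ⟨wC, C, hC, hCu⟩ := hF u0
  obtain ⟨wD, D, hD, hDu⟩ := hF w0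
  -- an edge of C and an edge of D
  have hCne : C.edges ≠ [] := by
    intro h
    have := hC.three_le_length
    rw [← Walk.length_edges, h] at this
    simp at this
  have hDne : D.edges ≠ [] := by
    intro h
    have := hD.three_le_length
    rw [← Walk.length_edges, h] at this
    simp at this
  obtain ⟨a, ha⟩ := List.exists_mem_of_ne_nil _ hCne
  obtain ⟨b, hb⟩ := List.exists_mem_of_ne_nil _ hDne
  -- endpoints of edges in a walk's support are reachable from the base
  have hreach : ∀ {w' : V} (c : G.Walk w' w') (f : Sym2 V), f ∈ c.edges →
      ∀ t ∈ f, G.Reachable w' t := by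
    intro w' c f hf t ht
    obtain ⟨s', rfl⟩ := Sym2.mem_iff_exists.mp ht
    exact reachable_of_mem_support (Walk.fst_mem_support_of_mem_edges c hf)
  have hu0C : G.Reachable u0 wC := (reachable_of_mem_support hCu).symm
  have hw0D : G.Reachable w0 wD := (reachable_of_mem_support hDu).symm
  induction a using Sym2.ind with
  | _ a1 a2 =>
  induction b using Sym2.ind with
  | _ b1 b2 =>
  have hab : s(a1, a2) ≠ s(b1, b2) := by
    intro h
    apply hur
    have ha' : s(a1, a2) ∈ D.edges := by rw [h]; exact hb
    exact (hu0C.trans (hreach C _ ha a1 (by simp))).trans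
      ((hw0D.trans (hreach D _ ha' a1 (by simp))).symm)
  refine ⟨s(a1, a2), s(b1, b2), C.edges_subset_edgeSet ha, D.edges_subset_edgeSet hb, hab, ?_⟩
  intro u
  obtain ⟨w, c, hc, hu⟩ := hF u
  refine ⟨w, c, hc, hu, ?_⟩
  rintro ⟨hac, hbc⟩
  apply hur
  have r1 : G.Reachable wC a1 := hreach C _ ha a1 (by simp)
  have r2 : G.Reachable w a1 := hreach c _ hac a1 (by simp)
  have r3 : G.Reachable w b1 := hreach c _ hbc b1 (by simp)
  have r4 : G.Reachable wD b1 := hreach D _ hb b1 (by simp)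
  exact ((((hu0C.trans r1).trans r2.symm).trans r3).trans r4.symm).trans hw0D.symm



lemma mem_edges_iff_getVert {a b : V} (p : G.Walk a b) (f : Sym2 V) :
    f ∈ p.edges ↔ ∃ k, k < p.length ∧ f = s(p.getVert k, p.getVert (k + 1)) := by
  induction p with
  | nil => simp
  | @cons u w d h q ih =>
    rw [Walk.edges_cons, List.mem_cons, ih]
    constructor
    · rintro (rfl | ⟨k, hk, rfl⟩)
      · refine ⟨0, by simp [Walk.length_cons], ?_⟩
        rw [Walk.getVert_zero, Walk.getVert_cons_succ, Walk.getVert_zero]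
      · exact ⟨k + 1, by simp [Walk.length_cons]; omega,
          by rw [Walk.getVert_cons_succ, Walk.getVert_cons_succ]⟩
    · rintro ⟨k, hk, rfl⟩
      cases k with
      | zero =>
        left
        rw [Walk.getVert_zero, Walk.getVert_cons_succ, Walk.getVert_zero]
      | succ k =>
        right
        refine ⟨k, by rw [Walk.length_cons] at hk; omega, ?_⟩
        rw [Walk.getVert_cons_succ, Walk.getVert_cons_succ]

lemma getVert_eq_support_getElem {a b : V} (p : G.Walk a b) {k : ℕ} (hk : k ≤ p.length) :
    p.support[k]'(by rw [Walk.length_support]; omega) = p.getVert k := by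
  induction p generalizing k with
  | nil =>
    simp only [Walk.length_nil, Nat.le_zero] at hk
    subst hk
    simp [Walk.getVert_zero]
  | @cons u w d h q ih =>
    cases k with
    | zero => simp [Walk.getVert_zero]
    | succ k =>
      rw [Walk.length_cons] at hk
      simp only [Walk.support_cons, List.getElem_cons_succ, Walk.getVert_cons_succ]
      exact ih (by omega)

/-- closure: along a cycle, if no vertex of `G` has three distinct neighbours,
then every edge at a support vertex is an edge of the cycle. -/
lemma closure_step [DecidableEq V]
    (hno3 : ∀ (v y z t : V), G.Adj v y → G.Adj v z → G.Adj v t →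
      y ≠ z → y ≠ t → z ≠ t → False)
    {w u t : V} {c : G.Walk w w} (hc : c.IsCycle) (hu : u ∈ c.support) (ht : G.Adj u t) :
    s(u, t) ∈ c.edges ∧ t ∈ c.support := by
  obtain ⟨y, z, hyz, hy, hz⟩ := cycle_two_incident hc hu
  have hadjy : G.Adj u y := c.adj_of_mem_edges hy
  have hadjz : G.Adj u z := c.adj_of_mem_edges hz
  by_cases hty : t = y
  · subst hty
    exact ⟨hy, Walk.snd_mem_support_of_mem_edges c hy⟩
  by_cases htz : t = z
  · subst htz
    exact ⟨hz, Walk.snd_mem_support_of_mem_edges c hz⟩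
  · exact absurd (hno3 u y z t hadjy hadjz ht hyz (Ne.symm hty) (Ne.symm htz)) id

lemma support_eq_univ [DecidableEq V]
    (hno3 : ∀ (v y z t : V), G.Adj v y → G.Adj v z → G.Adj v t →
      y ≠ z → y ≠ t → z ≠ t → False)
    (hpre : G.Preconnected)
    {w : V} {c : G.Walk w w} (hc : c.IsCycle) :
    ∀ t : V, t ∈ c.support := by
  have step : ∀ {x y : V} (p : G.Walk x y), x ∈ c.support → y ∈ c.support := by
    intro x y p
    induction p with
    | nil => exact id
    | cons h q ih => exact fun hx => ih ((closure_step hno3 hc hx h).2)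
  intro t
  obtain ⟨p⟩ := hpre w t
  exact step p c.start_mem_support

lemma edges_eq_edgeSet [DecidableEq V]
    (hno3 : ∀ (v y z t : V), G.Adj v y → G.Adj v z → G.Adj v t →
      y ≠ z → y ≠ t → z ≠ t → False)
    (hpre : G.Preconnected)
    {w : V} {c : G.Walk w w} (hc : c.IsCycle) :
    ∀ f : Sym2 V, f ∈ c.edges ↔ f ∈ G.edgeSet := by
  intro f
  constructor
  · exact fun h => c.edges_subset_edgeSet h
  · intro hf
    induction f using Sym2.ind with
    | _ s t =>
      rw [SimpleGraph.mem_edgeSet] at hf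
      exact (closure_step hno3 hc (support_eq_univ hno3 hpre hc s) hf).1



lemma iso_of_two_regular [Fintype V] [DecidableEq V] (hn : 3 ≤ Fintype.card V)
    (hno3 : ∀ (v y z t : V), G.Adj v y → G.Adj v z → G.Adj v t →
      y ≠ z → y ≠ t → z ≠ t → False)
    (hpre : G.Preconnected)
    {v0 : V} {c : G.Walk v0 v0} (hc : c.IsCycle) :
    Nonempty (G ≃g cycleGraph (Fintype.card V)) := by
  set n := Fintype.card V with hndef
  haveI : NeZero n := ⟨by omega⟩
  have hone : (1 : Fin n).val = 1 := by
    rw [Fin.val_one']; exact Nat.mod_eq_of_lt (by omega)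
  have hnotnil : ¬ c.Nil := by
    intro h; exact hc.ne_nil (Walk.nil_iff_eq_nil.mp h)
  have hall : ∀ t : V, t ∈ c.support := support_eq_univ hno3 hpre hc
  have halltail : ∀ t : V, t ∈ c.support.tail :=
    fun t => (mem_support_iff_mem_tail hnotnil).mp (hall t)
  have htactl : c.support.tail.length = c.length := by
    have := c.length_support
    have h2 : c.support.tail.length = c.support.length - 1 := by simp
    omega
  have hnd : c.support.tail.Nodup := hc.support_nodup
  have hlen : c.length = n := by
    have h1 : c.support.tail.toFinset = Finset.univ := by
      apply Finset.eq_univ_of_forall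
      intro t
      rw [List.mem_toFinset]
      exact halltail t
    have h2 := List.toFinset_card_of_nodup hnd
    rw [h1, Finset.card_univ] at h2
    omega
  -- support indexing
  have hsupl : c.support.length = n + 1 := by rw [c.length_support, hlen]
  have hsupp_tail : ∀ (k : ℕ) (hk : k < n),
      c.support[k + 1]'(by omega) = c.support.tail[k]'(by rw [htactl, hlen]; omega) := by
    intro k hk
    rw [List.getElem_tail]
  have hgetsup : ∀ (k : ℕ) (hk : k ≤ n),
      c.getVert k = c.support[k]'(by omega) := by
    intro k hk
    exact (getVert_eq_support_getElem c (by omega)).symm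
  set T : Fin n → V := fun i => c.getVert (i.val + 1) with hTdef
  have Tinj : Function.Injective T := by
    intro i j hij
    rw [hTdef] at hij
    simp only at hij
    rw [hgetsup _ (by omega), hgetsup _ (by omega), hsupp_tail _ i.isLt,
      hsupp_tail _ j.isLt] at hij
    exact Fin.ext (hnd.getElem_inj_iff.mp hij)
  have Tsurj : Function.Surjective T := by
    intro t
    obtain ⟨k, hk, hkt⟩ := List.mem_iff_getElem.mp (halltail t)
    have hk' : k < n := by rw [htactl, hlen] at hk; exact hk
    refine ⟨⟨k, hk'⟩, ?_⟩
    rw [hTdef]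
    simp only
    rw [hgetsup _ (by omega), hsupp_tail _ hk']
    exact hkt
  -- getVert in terms of T
  have hT0 : c.getVert 0 = T ⟨n - 1, by omega⟩ := by
    rw [hTdef]
    simp only
    have : n - 1 + 1 = n := by omega
    rw [this, Walk.getVert_zero, ← hlen, Walk.getVert_length]
  have hTk : ∀ (k : ℕ) (hk1 : 1 ≤ k) (hk2 : k ≤ n), c.getVert k = T ⟨k - 1, by omega⟩ := by
    intro k hk1 hk2
    rw [hTdef]
    simp only
    congr 1
    omega
  have hadd : ∀ i : Fin n, (i + 1).val = (i.val + 1) % n := by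
    intro i
    rw [Fin.add_def, Fin.val_one', Nat.mod_eq_of_lt (show 1 < n by omega)]
  -- the key edge characterisation
  have keyE : ∀ i j : Fin n, s(T i, T j) ∈ c.edges ↔ (j = i + 1 ∨ i = j + 1) := by
    intro i j
    rw [mem_edges_iff_getVert]
    constructor
    · rintro ⟨k, hk, heq⟩
      rw [hlen] at hk
      have hgk1 : c.getVert (k + 1) = T ⟨k, hk⟩ := rfl
      rcases Nat.eq_zero_or_pos k with rfl | hkpos
      · rw [hT0, hgk1] at heq
        rcases Sym2.eq_iff.mp heq with ⟨h1, h2⟩ | ⟨h1, h2⟩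
        · left
          have hi : i = ⟨n - 1, by omega⟩ := Tinj h1
          have hj : j = ⟨0, by omega⟩ := Tinj h2
          rw [hi, hj]
          apply Fin.ext
          rw [hadd]
          show 0 = (n - 1 + 1) % n
          rw [show n - 1 + 1 = n by omega, Nat.mod_self]
        · right
          have hi : i = ⟨0, by omega⟩ := Tinj h1
          have hj : j = ⟨n - 1, by omega⟩ := Tinj h2
          rw [hi, hj]
          apply Fin.ext
          rw [hadd]
          show 0 = (n - 1 + 1) % n
          rw [show n - 1 + 1 = n by omega, Nat.mod_self]
      · rw [hTk k hkpos (by omega), hgk1] at heq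
        rcases Sym2.eq_iff.mp heq with ⟨h1, h2⟩ | ⟨h1, h2⟩
        · left
          have hi : i = ⟨k - 1, by omega⟩ := Tinj h1
          have hj : j = ⟨k, hk⟩ := Tinj h2
          rw [hi, hj]
          apply Fin.ext
          rw [hadd]
          show k = (k - 1 + 1) % n
          rw [show k - 1 + 1 = k by omega, Nat.mod_eq_of_lt hk]
        · right
          have hi : i = ⟨k, hk⟩ := Tinj h1
          have hj : j = ⟨k - 1, by omega⟩ := Tinj h2
          rw [hi, hj]
          apply Fin.ext
          rw [hadd]
          show k = (k - 1 + 1) % n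
          rw [show k - 1 + 1 = k by omega, Nat.mod_eq_of_lt hk]
    · intro hij
      have main : ∀ a b : Fin n, b = a + 1 → ∃ k, k < c.length ∧
          s(T a, T b) = s(c.getVert k, c.getVert (k + 1)) := by
        intro a b hb
        rcases Nat.lt_or_ge (a.val + 1) n with hlt | hge
        · refine ⟨a.val + 1, by omega, ?_⟩
          have h1 : c.getVert (a.val + 1) = T a := rfl
          have h2 : c.getVert (a.val + 1 + 1) = T b := by
            rw [hb, hTdef]
            simp only
            congr 1
            rw [hadd, Nat.mod_eq_of_lt hlt]
          rw [h1, h2]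
        · have hav : a.val = n - 1 := by have := a.isLt; omega
          refine ⟨0, by omega, ?_⟩
          have h1 : c.getVert 0 = T a := by
            rw [hT0]
            congr 1
            exact Fin.ext (by simp [hav])
          have h2 : c.getVert 1 = T b := by
            rw [hTk 1 le_rfl (by omega), hb]
            congr 1
            apply Fin.ext
            rw [hadd]
            show 0 = (a.val + 1) % n
            rw [hav, show n - 1 + 1 = n by omega, Nat.mod_self]
          rw [h1, h2]
      rcases hij with hij | hij
      · rw [hlen]
        obtain ⟨k, hk, h⟩ := main i j hij
        exact ⟨k, by omega, h⟩
      · obtain ⟨k, hk, h⟩ := main j i hij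
        refine ⟨k, by omega, ?_⟩
        rw [Sym2.eq_swap] at h
        exact h
  -- adjacency transfer
  have hadj : ∀ i j : Fin n, G.Adj (T i) (T j) ↔ (cycleGraph n).Adj i j := by
    intro i j
    rw [SimpleGraph.cycleGraph_adj']
    have h1 : G.Adj (T i) (T j) ↔ s(T i, T j) ∈ c.edges := by
      rw [edges_eq_edgeSet hno3 hpre hc, SimpleGraph.mem_edgeSet]
    rw [h1, keyE i j]
    have e1 : (i - j).val = 1 ↔ i = j + 1 := by
      rw [← hone, Fin.val_eq_val, sub_eq_iff_eq_add, add_comm]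
    have e2 : (j - i).val = 1 ↔ j = i + 1 := by
      rw [← hone, Fin.val_eq_val, sub_eq_iff_eq_add, add_comm]
    rw [e1, e2]
    tauto
  refine ⟨RelIso.symm ⟨Equiv.ofBijective T ⟨Tinj, Tsurj⟩, ?_⟩⟩
  intro i j
  exact hadj i j


lemma nodup_length_le {l : List ℕ} {r : ℕ} (hn : l.Nodup) (h : ∀ x ∈ l, x < r) :
    l.length ≤ r := by
  rw [← List.toFinset_card_of_nodup hn]
  have : l.toFinset ⊆ Finset.range r :=
    fun x hx => Finset.mem_range.mpr (h x (List.mem_toFinset.mp hx))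
  simpa using Finset.card_le_card this

lemma three_le_numEdges [Fintype V] [DecidableEq V] {w : V} {c : G.Walk w w}
    (hc : c.IsCycle) : 3 ≤ G.numEdges := by
  have h1 : c.edges.toFinset ⊆ G.edgeSet.toFinite.toFinset := by
    intro f hf
    rw [Set.Finite.mem_toFinset]
    exact c.edges_subset_edgeSet (List.mem_toFinset.mp hf)
  have h2 := Finset.card_le_card h1
  rw [List.toFinset_card_of_nodup hc.edges_nodup, Walk.length_edges] at h2
  have h3 := hc.three_le_length
  rw [SimpleGraph.numEdges, Nat.card_eq_card_finite_toFinset G.edgeSet.toFinite]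
  omega

/-- the all-distinct colouring shows `numEdges` is an admissible number of colours -/
lemma numEdges_mem_crxSet [Fintype V] [DecidableEq V]
    (hF : ∀ v : V, ∃ (w : V) (c : G.Walk w w), c.IsCycle ∧ v ∈ c.support) :
    ∃ φ : Sym2 V → ℕ, (∀ e ∈ G.edgeSet, φ e < G.numEdges) ∧
      G.IsRainbowCycleColoring 1 φ := by
  set F := G.edgeSet.toFinite.toFinset with hF'
  have hcard : F.card = G.numEdges := (Nat.card_eq_card_finite_toFinset _).symm
  refine ⟨fun e => if h : e ∈ F then (F.equivFin ⟨e, h⟩ : Fin F.card).val else 0, ?_, ?_⟩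
  · intro e he
    have heF : e ∈ F := (Set.Finite.mem_toFinset _).mpr he
    simp only [dif_pos heF]
    rw [← hcard]
    exact (F.equivFin ⟨e, heF⟩).isLt
  · intro S hS
    obtain ⟨u, rfl⟩ := Finset.card_eq_one.mp hS
    obtain ⟨w, c, hc, hu⟩ := hF u
    refine ⟨w, c, hc, by simpa using hu, ?_⟩
    refine List.Nodup.map_on ?_ hc.edges_nodup
    intro x hx y hy hxy
    have hxF : x ∈ F := (Set.Finite.mem_toFinset _).mpr (c.edges_subset_edgeSet hx)
    have hyF : y ∈ F := (Set.Finite.mem_toFinset _).mpr (c.edges_subset_edgeSet hy)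
    simp only [dif_pos hxF, dif_pos hyF] at hxy
    have := F.equivFin.injective (Fin.ext hxy)
    exact Subtype.ext_iff.mp this

/-- a good pair yields a colouring with `numEdges - 1` colours -/
lemma pair_coloring [Fintype V] [DecidableEq V] {a b : Sym2 V} (hab : GoodPair G a b) :
    ∃ φ : Sym2 V → ℕ, (∀ e ∈ G.edgeSet, φ e < G.numEdges - 1) ∧
      G.IsRainbowCycleColoring 1 φ := by
  obtain ⟨haE, hbE, hne, hgood⟩ := hab
  set F := G.edgeSet.toFinite.toFinset with hFdef
  have hcard : F.card = G.numEdges := (Nat.card_eq_card_finite_toFinset _).symm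
  have hbF : b ∈ F := (Set.Finite.mem_toFinset _).mpr hbE
  set F' := F.erase b with hF'def
  have hcard' : F'.card = G.numEdges - 1 := by
    rw [hF'def, Finset.card_erase_of_mem hbF, hcard]
  have haF' : a ∈ F' := Finset.mem_erase.mpr ⟨hne, (Set.Finite.mem_toFinset _).mpr haE⟩
  refine ⟨fun e => if h : e ∈ F' then (F'.equivFin ⟨e, h⟩ : Fin F'.card).val
    else (F'.equivFin ⟨a, haF'⟩ : Fin F'.card).val, ?_, ?_⟩
  · intro e he
    by_cases h : e ∈ F'
    · simp only [dif_pos h]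
      rw [← hcard']
      exact (F'.equivFin ⟨e, h⟩).isLt
    · simp only [dif_neg h]
      rw [← hcard']
      exact (F'.equivFin ⟨a, haF'⟩).isLt
  · intro S hS
    obtain ⟨u, rfl⟩ := Finset.card_eq_one.mp hS
    obtain ⟨w, c, hc, hu, hnot⟩ := hgood u
    refine ⟨w, c, hc, by simpa using hu, ?_⟩
    refine List.Nodup.map_on ?_ hc.edges_nodup
    intro x hx y hy hxy
    have hxE := c.edges_subset_edgeSet hx
    have hyE := c.edges_subset_edgeSet hy
    have hmemF : ∀ {z : Sym2 V}, z ∈ G.edgeSet → z ∉ F' → z = b := by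
      intro z hz hz'
      by_contra hzb
      exact hz' (Finset.mem_erase.mpr ⟨hzb, (Set.Finite.mem_toFinset _).mpr hz⟩)
    by_cases h1 : x ∈ F' <;> by_cases h2 : y ∈ F'
    · simp only [dif_pos h1, dif_pos h2] at hxy
      exact Subtype.ext_iff.mp (F'.equivFin.injective (Fin.ext hxy))
    · simp only [dif_pos h1, dif_neg h2] at hxy
      have hxa : x = a := Subtype.ext_iff.mp (F'.equivFin.injective (Fin.ext hxy))
      have hyb : y = b := hmemF hyE h2
      exact absurd ⟨hxa ▸ hx, hyb ▸ hy⟩ hnot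
    · simp only [dif_neg h1, dif_pos h2] at hxy
      have hya : y = a := Subtype.ext_iff.mp (F'.equivFin.injective (Fin.ext hxy.symm))
      have hxb : x = b := hmemF hxE h1
      exact absurd ⟨hya ▸ hy, hxb ▸ hx⟩ hnot
    · rw [hmemF hxE h1, hmemF hyE h2]

/-- lower bound: in a connected 2-regular graph every admissible colouring
uses at least `numEdges` colours -/
lemma numEdges_le_of_coloring [Fintype V] [DecidableEq V] [Nonempty V]
    {r : ℕ} {φ : Sym2 V → ℕ}
    (hbound : ∀ e ∈ G.edgeSet, φ e < r) (hrb : G.IsRainbowCycleColoring 1 φ)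
    (hedges : ∀ {w : V} {c : G.Walk w w}, c.IsCycle →
      ∀ f : Sym2 V, f ∈ c.edges ↔ f ∈ G.edgeSet) :
    G.numEdges ≤ r := by
  obtain ⟨u, c, hc, _, hnodup⟩ := hrb {Classical.arbitrary V} (Finset.card_singleton _)
  have hlen : c.edges.length = G.numEdges := by
    have hset : c.edges.toFinset = G.edgeSet.toFinite.toFinset := by
      ext f
      rw [List.mem_toFinset, Set.Finite.mem_toFinset]
      exact hedges hc f
    rw [← List.toFinset_card_of_nodup hc.edges_nodup, hset,
      ← Nat.card_eq_card_finite_toFinset]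
    rfl
  have : (c.edges.map φ).length ≤ r := by
    apply nodup_length_le hnodup
    intro x hx
    obtain ⟨f, hf, rfl⟩ := List.mem_map.mp hx
    exact hbound f (c.edges_subset_edgeSet hf)
  rw [List.length_map, hlen] at this
  exact this



lemma iso_no3 [Fintype V] (hn : 3 ≤ Fintype.card V)
    (φ : G ≃g SimpleGraph.cycleGraph (Fintype.card V)) :
    ∀ (v y z t : V), G.Adj v y → G.Adj v z → G.Adj v t →
      y ≠ z → y ≠ t → z ≠ t → False := by
  set n := Fintype.card V with hndef
  haveI : NeZero n := ⟨by omega⟩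
  have hone : (1 : Fin n).val = 1 := by
    rw [Fin.val_one']; exact Nat.mod_eq_of_lt (by omega)
  intro v y z t hy hz ht hyz hyt hzt
  have key : ∀ w : V, G.Adj v w → φ w = φ v - 1 ∨ φ w = φ v + 1 := by
    intro w hw
    have hadj : (SimpleGraph.cycleGraph n).Adj (φ v) (φ w) := φ.map_rel_iff.mpr hw
    rw [SimpleGraph.cycleGraph_adj'] at hadj
    rcases hadj with h | h
    · left
      have h2 : φ v - φ w = 1 := Fin.ext (by rw [hone]; exact h)
      rw [sub_eq_iff_eq_add] at h2
      rw [h2]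
      exact (add_sub_cancel_left 1 (φ w)).symm
    · right
      have h2 : φ w - φ v = 1 := Fin.ext (by rw [hone]; exact h)
      rw [sub_eq_iff_eq_add] at h2
      rw [h2, add_comm]
  have hy' := key y hy
  have hz' := key z hz
  have ht' := key t ht
  have hinj := φ.toEquiv.injective
  rcases hy' with h1 | h1 <;> rcases hz' with h2 | h2 <;> rcases ht' with h3 | h3
  · exact hyz (hinj (h1.trans h2.symm))
  · exact hyz (hinj (h1.trans h2.symm))
  · exact hyt (hinj (h1.trans h3.symm))
  · exact hzt (hinj (h2.trans h3.symm))
  · exact hzt (hinj (h2.trans h3.symm))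
  · exact hyt (hinj (h1.trans h3.symm))
  · exact hyz (hinj (h1.trans h2.symm))
  · exact hyz (hinj (h1.trans h2.symm))

lemma iso_pre [Fintype V] (φ : G ≃g SimpleGraph.cycleGraph (Fintype.card V)) :
    G.Preconnected := by
  intro u w
  have r : (SimpleGraph.cycleGraph (Fintype.card V)).Reachable (φ u) (φ w) :=
    SimpleGraph.cycleGraph_preconnected _ _
  have := r.map φ.symm.toHom
  simpa using this


end Crx

/-- for G of order n ≥ 3 in which every vertex lies in a cycle,
crx_1(G) = e(G) iff G is the cycle C_n. -/
theorem crx_one_eq_numEdges_iff_cycle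
    {V : Type*} [Fintype V] (G : SimpleGraph V) (hn : 3 ≤ Fintype.card V)
    (hF : ∀ v : V, G.CycleThrough {v}) :
    G.crx 1 = G.numEdges ↔ Nonempty (G ≃g SimpleGraph.cycleGraph (Fintype.card V)) := by
  classical
  have hF' : ∀ v : V, ∃ (w : V) (c : G.Walk w w), c.IsCycle ∧ v ∈ c.support := by
    intro v
    obtain ⟨u, c, hc, hsup⟩ := hF v
    exact ⟨u, c, hc, hsup v rfl⟩
  haveI : Nonempty V := by
    rw [← Fintype.card_pos_iff]; omega
  obtain ⟨w0, c0, hc0, _⟩ := hF' (Classical.arbitrary V)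
  have hne3 : 3 ≤ G.numEdges := Crx.three_le_numEdges hc0
  have hub : G.crx 1 ≤ G.numEdges := by
    obtain ⟨φ, h1, h2⟩ := Crx.numEdges_mem_crxSet hF'
    exact Nat.sInf_le ⟨φ, h1, h2⟩
  have hpairlt : ∀ a b : Sym2 V, Crx.GoodPair G a b → G.crx 1 < G.numEdges := by
    intro a b hab
    obtain ⟨φ, h1, h2⟩ := Crx.pair_coloring hab
    have : G.crx 1 ≤ G.numEdges - 1 := Nat.sInf_le ⟨φ, h1, h2⟩
    omega
  constructor
  · intro hcrx
    by_cases h3n : ∃ v y z t : V, G.Adj v y ∧ G.Adj v z ∧ G.Adj v t ∧ y ≠ z ∧ y ≠ t ∧ z ≠ t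
    · obtain ⟨v, y, z, t, hy, hz, ht, hyz, hyt, hzt⟩ := h3n
      obtain ⟨a, b, hab⟩ := Crx.exists_good_pair_of_three_nbrs hF' hy hz ht hyz hyt hzt
      have := hpairlt a b hab
      exact (by omega : False).elim
    · by_cases hpre : ∀ u w : V, G.Reachable u w
      · have hno3 : ∀ (v y z t : V), G.Adj v y → G.Adj v z → G.Adj v t →
            y ≠ z → y ≠ t → z ≠ t → False := by
          intro v y z t hy hz ht hyz hyt hzt
          exact h3n ⟨v, y, z, t, hy, hz, ht, hyz, hyt, hzt⟩
        exact Crx.iso_of_two_regular hn hno3 hpre hc0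
      · push_neg at hpre
        obtain ⟨u0, ww0, hur⟩ := hpre
        obtain ⟨a, b, hab⟩ := Crx.exists_good_pair_of_not_reachable hF' hur
        have := hpairlt a b hab
        exact (by omega : False).elim
  · rintro ⟨φiso⟩
    have hno3 := Crx.iso_no3 hn φiso
    have hpre := Crx.iso_pre φiso
    have hlb : G.numEdges ≤ G.crx 1 := by
      apply le_csInf
      · obtain ⟨φ, h1, h2⟩ := Crx.numEdges_mem_crxSet hF'
        exact ⟨G.numEdges, φ, h1, h2⟩
      · rintro r ⟨φc, hb, hrb⟩
        exact Crx.numEdges_le_of_coloring hb hrb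
          (fun {w c} hc => Crx.edges_eq_edgeSet hno3 hpre hc)
    omega
end

section
/- Let G be a 2-connected graph of order n ≥ 3. Then crx_2(G) = e(G) if and only if G is minimally 2-connected, i.e., G is 2-connected but G − e is not 2-connected for every edge e. -/
open SimpleGraph

namespace RCI
open SimpleGraph Walk


variable {V : Type*} {G : SimpleGraph V}

/-- Reachability by a walk avoiding vertex set `s` and edge `f`. -/
def Av (G : SimpleGraph V) (f : Sym2 V) (s : Set V) (x y : V) : Prop :=
  ∃ p : G.Walk x y, (∀ z ∈ p.support, z ∉ s) ∧ f ∉ p.edges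

lemma Av.refl {f : Sym2 V} {s : Set V} {x : V} (hx : x ∉ s) : Av G f s x x :=
  ⟨Walk.nil, by simpa using hx, by simp⟩

lemma Av.symm {f : Sym2 V} {s : Set V} {x y : V} (h : Av G f s x y) : Av G f s y x := by
  obtain ⟨p, hs, he⟩ := h
  exact ⟨p.reverse, by simpa [Walk.support_reverse] using hs, by
    simpa [Walk.edges_reverse] using he⟩

lemma Av.trans {f : Sym2 V} {s : Set V} {x y z : V} (h : Av G f s x y) (h' : Av G f s y z) :
    Av G f s x z := by
  obtain ⟨p, hs, he⟩ := h
  obtain ⟨q, hs', he'⟩ := h'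
  refine ⟨p.append q, ?_, ?_⟩
  · intro t ht
    rcases (Walk.mem_support_append_iff _ _).1 ht with h | h
    exacts [hs t h, hs' t h]
  · rw [Walk.edges_append]
    simp only [List.mem_append, not_or]
    exact ⟨he, he'⟩

lemma Av.step {f : Sym2 V} {s : Set V} {x y : V} (h : G.Adj x y) (hx : x ∉ s) (hy : y ∉ s)
    (he : s(x, y) ≠ f) : Av G f s x y :=
  ⟨Walk.cons h Walk.nil, by simp [hx, hy], by simpa using fun h' => he h'.symm⟩

/-- If the endpoints of `f` are `Av`-related, then any walk avoiding `s` relates its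
endpoints. -/
lemma av_of_walk {f : Sym2 V} {s : Set V} {u v : V} (huv : Av G f s u v) (hf : f = s(u, v))
    {x y : V} (p : G.Walk x y) (hp : ∀ z ∈ p.support, z ∉ s) : Av G f s x y := by
  induction p with
  | nil => exact Av.refl (hp _ (Walk.start_mem_support _))
  | cons h q ih =>
    rename_i a b c
    have ha : a ∉ s := hp _ (by simp)
    have hb : b ∉ s := hp _ (by simp)
    have step : Av G f s a b := by
      by_cases he : s(a, b) = f
      · rw [hf, Sym2.eq_iff] at he
        rcases he with ⟨rfl, rfl⟩ | ⟨rfl, rfl⟩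
        · exact huv
        · exact huv.symm
      · exact Av.step h ha hb he
    exact step.trans (ih fun z hz => hp _ (by simp [hz]))

/-- Every walk endpoint avoiding `s` is `Av`-related to the walk's other end or to one of the
endpoints of `f`. -/
lemma av_total {f : Sym2 V} {s : Set V} {u v : V} (hf : f = s(u, v))
    {x y : V} (p : G.Walk x y) (hp : ∀ z ∈ p.support, z ∉ s) :
    Av G f s x y ∨ Av G f s x u ∨ Av G f s x v := by
  induction p with
  | nil => exact Or.inl (Av.refl (hp _ (Walk.start_mem_support _)))
  | cons h q ih =>
    rename_i a b c
    have ha : a ∉ s := hp _ (by simp)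
    have hb : b ∉ s := hp _ (by simp)
    by_cases he : s(a, b) = f
    · rw [hf, Sym2.eq_iff] at he
      rcases he with ⟨rfl, rfl⟩ | ⟨rfl, rfl⟩
      · exact Or.inr (Or.inl (Av.refl ha))
      · exact Or.inr (Or.inr (Av.refl ha))
    · have step : Av G f s a b := Av.step h ha hb he
      rcases ih (fun z hz => hp _ (by simp [hz])) with h1 | h1 | h1
      · exact Or.inl (step.trans h1)
      · exact Or.inr (Or.inl (step.trans h1))
      · exact Or.inr (Or.inr (step.trans h1))

/-- Transfer a walk out of an induced subgraph. -/
lemma exists_walk_of_induce {s : Set V} {a b : ↥s} (p : (G.induce s).Walk a b) :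
    ∃ q : G.Walk a.1 b.1, ∀ x ∈ q.support, x ∈ s := by
  induction p with
  | nil => exact ⟨Walk.nil, by simp⟩
  | cons h q ih =>
    obtain ⟨q', hq'⟩ := ih
    rename_i x y z
    exact ⟨Walk.cons h q', by
      intro t ht
      rcases (by change t ∈ (x : V) :: q'.support at ht; exact List.mem_cons.1 ht : t = (x : V) ∨ t ∈ q'.support) with rfl | ht'
      · exact x.2
      · exact hq' _ ht'⟩

/-- Transfer a walk into an induced subgraph. -/
lemma reachable_induce_of_walk {s : Set V} {a b : V} (ha : a ∈ s) (hb : b ∈ s)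
    (p : G.Walk a b) (hp : ∀ x ∈ p.support, x ∈ s) :
    (G.induce s).Reachable ⟨a, ha⟩ ⟨b, hb⟩ := by
  induction p with
  | nil => rfl
  | cons h q ih =>
    rename_i x y z
    have hy : y ∈ s := hp _ (by simp)
    have step : (G.induce s).Adj ⟨x, ha⟩ ⟨y, hy⟩ := h
    exact (step.reachable).trans (ih hy hb fun t ht => hp _ (by simp [ht]))

lemma end_mem_tail_support {x w : V} (p : G.Walk x w) (h : x ≠ w) : w ∈ p.support.tail := by
  cases p with
  | nil => exact absurd rfl h
  | cons h q => simpa using q.end_mem_support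

lemma mem_tail_support_of_closed {r : V} (c : G.Walk r r) (hc : ¬c.Nil) {x : V}
    (hx : x ∈ c.support) : x ∈ c.support.tail := by
  cases c with
  | nil => simp at hc
  | cons h q =>
    rcases (by simpa using hx : x = r ∨ x ∈ q.support) with rfl | hx'
    · simpa using q.end_mem_support
    · simpa using hx'

lemma mem_support_rotate_iff [DecidableEq V] {r u : V} (c : G.Walk r r) (hc : ¬c.Nil)
    (h : u ∈ c.support) {x : V} : x ∈ (c.rotate u h).support ↔ x ∈ c.support := by
  have hper := c.support_rotate u h
  constructor
  · intro hx
    rw [Walk.support_eq_cons] at hx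
    rcases List.mem_cons.1 hx with rfl | hx'
    · exact h
    · exact List.mem_of_mem_tail (hper.mem_iff.1 hx')
  · intro hx
    have h1 : x ∈ c.support.tail := mem_tail_support_of_closed c hc hx
    exact List.mem_of_mem_tail (hper.mem_iff.2 h1)

/-- Inside a path ending at `w`, the prefix up to any `c ≠ w` avoids `w`. -/
lemma not_mem_takeUntil_of_path [DecidableEq V] {x w c : V} (q : G.Walk x w) (hq : q.IsPath)
    (hc : c ∈ q.support) (hcw : c ≠ w) : w ∉ (q.takeUntil c hc).support := by
  intro hw
  have hsupp : q.support = (q.takeUntil c hc).support ++ (q.dropUntil c hc).support.tail := by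
    rw [← Walk.support_append, q.take_spec hc]
  have hnodup := hq.support_nodup
  rw [hsupp] at hnodup
  have hw2 : w ∈ (q.dropUntil c hc).support.tail :=
    end_mem_tail_support (q.dropUntil c hc) hcw
  exact (List.disjoint_of_nodup_append hnodup) hw hw2

/-- Split a path at two interior vertices, giving a connecting walk avoiding the endpoint `w`. -/
lemma path_split [DecidableEq V] {x w a b : V} (q : G.Walk x w) (hq : q.IsPath)
    (ha : a ∈ q.support) (hb : b ∈ q.support) (haw : a ≠ w) (hbw : b ≠ w) :
    ∃ p : G.Walk a b, w ∉ p.support ∧ ∀ e ∈ p.edges, e ∈ q.edges := by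
  by_cases hab : a ∈ (q.takeUntil b hb).support
  · refine ⟨(q.takeUntil b hb).dropUntil a hab, ?_, ?_⟩
    · intro hw
      exact not_mem_takeUntil_of_path q hq hb hbw
        (Walk.support_dropUntil_subset _ hab hw)
    · intro e he
      exact Walk.edges_takeUntil_subset _ hb (Walk.edges_dropUntil_subset _ hab he)
  · have hsupp : q.support = (q.takeUntil b hb).support ++ (q.dropUntil b hb).support.tail := by
      rw [← Walk.support_append, q.take_spec hb]
    have ha' : a ∈ (q.dropUntil b hb).support := by
      rw [hsupp] at ha
      rcases List.mem_append.1 ha with h | h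
      · exact absurd h hab
      · exact List.mem_of_mem_tail h
    have hd : (q.dropUntil b hb).IsPath := hq.dropUntil hb
    refine ⟨((q.dropUntil b hb).takeUntil a ha').reverse, ?_, ?_⟩
    · rw [Walk.support_reverse, List.mem_reverse]
      exact not_mem_takeUntil_of_path _ hd ha' haw
    · intro e he
      rw [Walk.edges_reverse, List.mem_reverse] at he
      exact Walk.edges_dropUntil_subset _ hb (Walk.edges_takeUntil_subset _ ha' he)

/-- Split a cycle: between any two non-`w` vertices on a cycle there is a walk along the
cycle avoiding `w`. -/
lemma cycle_split [DecidableEq V] {r a b w : V} (C : G.Walk r r) (hC : C.IsCycle)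
    (ha : a ∈ C.support) (hb : b ∈ C.support) (haw : a ≠ w) (hbw : b ≠ w) :
    ∃ p : G.Walk a b, w ∉ p.support ∧ ∀ e ∈ p.edges, e ∈ C.edges := by
  have hnil : ¬C.Nil := hC.not_nil
  by_cases hw : w ∈ C.support
  · have hC' := hC.rotate hw
    set C' := C.rotate w hw with hC'def
    have haC' : a ∈ C'.support := (mem_support_rotate_iff C hnil hw).2 ha
    have hbC' : b ∈ C'.support := (mem_support_rotate_iff C hnil hw).2 hb
    cases hcc : C' with
    | nil => rw [hcc] at hC'; exact absurd (by simp) hC'.not_nil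
    | cons hadj q =>
      have hqpath : q.IsPath := by
        rw [Walk.isPath_def]
        have := hC'.support_nodup
        rw [hcc] at this
        simpa using this
      have haq : a ∈ q.support := by
        rw [hcc] at haC'
        rcases (by simpa using haC' : a = w ∨ a ∈ q.support) with rfl | h
        · exact absurd rfl haw
        · exact h
      have hbq : b ∈ q.support := by
        rw [hcc] at hbC'
        rcases (by simpa using hbC' : b = w ∨ b ∈ q.support) with rfl | h
        · exact absurd rfl hbw
        · exact h
      obtain ⟨p, hpw, hpe⟩ := path_split q hqpath haq hbq haw hbw
      refine ⟨p, hpw, fun e he => ?_⟩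
      have : e ∈ C'.edges := by
        rw [hcc, Walk.edges_cons]
        exact List.mem_cons_of_mem _ (hpe e he)
      exact ((C.rotate_edges w hw).mem_iff).1 this
  · by_cases hab : a = b
    · subst hab
      exact ⟨Walk.nil, by simpa using haw.symm, by simp⟩
    · have hC'' := hC.rotate ha
      set C'' := C.rotate a ha with hdef
      have hbC : b ∈ C''.support := (mem_support_rotate_iff C hnil ha).2 hb
      refine ⟨C''.takeUntil b hbC, ?_, fun e he => ?_⟩
      · intro hwp
        exact hw ((mem_support_rotate_iff C hnil ha).1
          (Walk.support_takeUntil_subset _ hbC hwp))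
      · exact ((C.rotate_edges a ha).mem_iff).1 (Walk.edges_takeUntil_subset _ hbC he)

/-- If two vertices of a cycle are not `Av`-related (avoiding `{w}` and `f`), then the cycle
uses the edge `f`. -/
lemma edge_mem_of_not_av [DecidableEq V] {r a b w : V} {f : Sym2 V} (C : G.Walk r r)
    (hC : C.IsCycle) (ha : a ∈ C.support) (hb : b ∈ C.support) (haw : a ≠ w) (hbw : b ≠ w)
    (hav : ¬Av G f {w} a b) : f ∈ C.edges := by
  by_contra hf
  obtain ⟨p, hpw, hpe⟩ := cycle_split C hC ha hb haw hbw
  exact hav ⟨p, by simpa using fun z hz (h : z = w) => hpw (h ▸ hz),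
    fun h => hf (hpe f h)⟩

/-- A vertex on a cycle has two distinct neighbours on the cycle, via cycle edges. -/
lemma cycle_two_edges [DecidableEq V] {r u : V} (C : G.Walk r r) (hC : C.IsCycle)
    (hu : u ∈ C.support) :
    ∃ x y, x ≠ y ∧ G.Adj u x ∧ G.Adj u y ∧ s(u, x) ∈ C.edges ∧ s(u, y) ∈ C.edges ∧
      x ∈ C.support ∧ y ∈ C.support := by
  have hnil : ¬C.Nil := hC.not_nil
  have hC' := hC.rotate hu
  set C' := C.rotate u hu with hdef
  cases hcc : C' with
  | nil => rw [hcc] at hC'; exact absurd (by simp) hC'.not_nil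
  | cons hadj q =>
    rename_i c
    have hqnil : ¬q.Nil := by
      intro hnil'
      have hq0 : q.length = 0 := Walk.nil_iff_length_eq.1 hnil'
      have h3 := hC'.three_le_length
      rw [hcc] at h3
      simp [hq0] at h3
    cases hrq : q.reverse with
    | nil =>
      rw [← q.reverse_reverse, hrq] at hqnil
      simp at hqnil
    | cons hadj2 q2 =>
      rename_i d
      have hd : G.Adj u d := hadj2
      have hedge2 : s(u, d) ∈ q.edges := by
        have h1 : s(u, d) ∈ q.reverse.edges := by rw [hrq]; simp
        rw [Walk.edges_reverse, List.mem_reverse] at h1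
        exact h1
      have hedges : C'.edges = s(u, c) :: q.edges := by rw [hcc]; simp
      have hcd : c ≠ d := by
        intro h
        subst h
        have hnodup := hC'.isTrail.edges_nodup
        rw [hedges] at hnodup
        exact (List.nodup_cons.1 hnodup).1 hedge2
      have hcsup : c ∈ C'.support := by rw [hcc]; simp
      have hdsup : d ∈ C'.support := by
        rw [hcc]
        simp only [Walk.support_cons, List.mem_cons]
        exact Or.inr (q.snd_mem_support_of_mem_edges hedge2)
      refine ⟨c, d, hcd, hadj, hd, ?_, ?_, ?_, ?_⟩
      · exact ((C.rotate_edges u hu).mem_iff).1 (by rw [hedges]; simp)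
      · exact ((C.rotate_edges u hu).mem_iff).1 (by rw [hedges]; simp [hedge2])
      · exact (mem_support_rotate_iff C hnil hu).1 hcsup
      · exact (mem_support_rotate_iff C hnil hu).1 hdsup
lemma conn_walk_avoid (h2 : G.IsTwoConnected) {w a b : V} (ha : a ≠ w) (hb : b ≠ w) :
    ∃ q : G.Walk a b, ∀ x ∈ q.support, x ∉ ({w} : Set V) := by
  have hc := h2.2 w
  have hr : (G.induce {x | x ≠ w}).Reachable ⟨a, ha⟩ ⟨b, hb⟩ := hc.preconnected _ _
  obtain ⟨p⟩ := hr
  obtain ⟨q, hq⟩ := exists_walk_of_induce p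
  exact ⟨q, fun x hx => by simpa using hq x hx⟩

lemma sep_exists (h2 : G.IsTwoConnected) {u v : V} (huv : G.Adj u v)
    (hnot : ¬(G.deleteEdges {s(u, v)}).IsTwoConnected) :
    ∃ w : V, u ≠ w ∧ v ≠ w ∧ ¬Av G s(u, v) {w} u v ∧
      ∀ x, x ≠ w → Av G s(u, v) {w} x u ∨ Av G s(u, v) {w} x v := by
  classical
  have hcard : 2 < Nat.card V := h2.1
  have hfin : Finite V := by
    rcases Nat.card_pos_iff.1 (by omega : 0 < Nat.card V) with ⟨_, h⟩
    exact h
  have hnontriv : Nontrivial V := by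
    have := Fintype.ofFinite V
    rw [Nat.card_eq_fintype_card] at hcard
    exact Fintype.one_lt_card_iff_nontrivial.1 (by omega)
  rw [SimpleGraph.IsTwoConnected] at hnot
  push_neg at hnot
  obtain ⟨w, hw⟩ := hnot hcard
  obtain ⟨x₀, hx₀⟩ := exists_ne w
  have hne : Nonempty ↥{x : V | x ≠ w} := ⟨⟨x₀, hx₀⟩⟩
  have hpre : ∃ a b : ↥{x : V | x ≠ w},
      ¬((G.deleteEdges {s(u, v)}).induce {x | x ≠ w}).Reachable a b := by
    by_contra h
    push_neg at h
    exact hw ((connected_iff _).2 ⟨fun a b => h a b, hne⟩)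
  obtain ⟨a₀, b₀, hab⟩ := hpre
  -- a₀, b₀ are not Av-related
  have hna : ¬Av G s(u, v) {w} a₀.1 b₀.1 := by
    rintro ⟨p, hsup, hedg⟩
    have hp' : ∀ e ∈ p.edges, e ∉ ({s(u, v)} : Set (Sym2 V)) := by
      intro e he
      simp only [Set.mem_singleton_iff]
      rintro rfl
      exact hedg he
    have hsup' : ∀ x ∈ (p.toDeleteEdges {s(u, v)} hp').support, x ∈ {x : V | x ≠ w} := by
      intro x hx
      rw [Walk.support_transfer] at hx
      simpa using hsup x hx
    have hre := reachable_induce_of_walk a₀.2 b₀.2 _ hsup'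
    rw [Subtype.coe_eta, Subtype.coe_eta] at hre
    exact hab hre
  have haw : (a₀ : V) ≠ w := a₀.2
  have hbw : (b₀ : V) ≠ w := b₀.2
  -- w is not an endpoint of the deleted edge
  have hwu : u ≠ w := by
    rintro rfl
    obtain ⟨q, hq⟩ := conn_walk_avoid h2 haw hbw
    refine hna ⟨q, hq, fun he => ?_⟩
    exact hq u (q.fst_mem_support_of_mem_edges he) rfl
  have hwv : v ≠ w := by
    rintro rfl
    obtain ⟨q, hq⟩ := conn_walk_avoid h2 haw hbw
    refine hna ⟨q, hq, fun he => ?_⟩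
    exact hq v (q.snd_mem_support_of_mem_edges he) rfl
  refine ⟨w, hwu, hwv, ?_, ?_⟩
  · intro hAv
    obtain ⟨q, hq⟩ := conn_walk_avoid h2 haw hbw
    exact hna (av_of_walk hAv rfl q hq)
  · intro x hx
    obtain ⟨q, hq⟩ := conn_walk_avoid h2 hx hwu
    rcases av_total rfl q hq with h | h | h
    · exact Or.inl h
    · exact Or.inl h
    · exact Or.inr h
/-- Degenerate case of the pair-forcing lemma: the cut vertex for `g` is the endpoint `u`
of `f`, and `u`'s side of the separation for `f` is trivial. -/
lemma degenerate [DecidableEq V] {u v u' v' w : V}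
    (huv : G.Adj u v) (hu'v' : G.Adj u' v')
    (hwu : u ≠ w) (hwv : v ≠ w) (hnR : ¬Av G s(u, v) {w} u v)
    (hu'u : u' ≠ u) (hv'u : v' ≠ u) (hnR' : ¬Av G s(u', v') {u} u' v')
    (htot' : ∀ x, x ≠ u → Av G s(u', v') {u} x u' ∨ Av G s(u', v') {u} x v')
    (hside : ∀ x, x ≠ w → x ≠ u → Av G s(u, v) {w} x v) :
    ∃ x y, x ≠ y ∧ ∀ (r : V) (C : G.Walk r r), C.IsCycle → x ∈ C.support → y ∈ C.support →
      s(u, v) ∈ C.edges ∧ s(u', v') ∈ C.edges := by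
  have huvne : u ≠ v := G.ne_of_adj huv
  -- neighbours of u are among {v, w}
  have hnbr : ∀ z, G.Adj u z → z = v ∨ z = w := by
    intro z hz
    by_contra hcon
    push_neg at hcon
    obtain ⟨hzv, hzw⟩ := hcon
    have hne : s(u, z) ≠ s(u, v) := by
      intro h
      rw [Sym2.eq_iff] at h
      rcases h with ⟨-, h⟩ | ⟨h1, -⟩
      exacts [hzv h, huvne h1]
    have hRuz : Av G s(u, v) {w} u z :=
      Av.step hz (by simp [hwu]) (by simp [hzw]) hne
    exact hnR (hRuz.trans (hside z hzw hz.ne'))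
  -- every cycle through u contains f and visits both v and w
  have hkey : ∀ (r : V) (C : G.Walk r r), C.IsCycle → u ∈ C.support →
      s(u, v) ∈ C.edges ∧ v ∈ C.support ∧ w ∈ C.support := by
    intro r C hC hu
    obtain ⟨x, y, hxy, hax, hay, hex, hey, hsx, hsy⟩ := cycle_two_edges C hC hu
    rcases hnbr x hax with rfl | rfl <;> rcases hnbr y hay with rfl | rfl
    · exact absurd rfl hxy
    · exact ⟨hex, hsx, hsy⟩
    · exact ⟨hey, hsy, hsx⟩
    · exact absurd rfl hxy
  rcases htot' v huvne.symm with hvu' | hvv'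
  · -- v is on u'-side: pair (u, v')
    refine ⟨u, v', hv'u.symm, ?_⟩
    intro r C hC hx hy
    obtain ⟨hfC, hvC, hwC⟩ := hkey r C hC hx
    refine ⟨hfC, edge_mem_of_not_av C hC hvC hy huvne.symm hv'u ?_⟩
    intro h
    exact hnR' (hvu'.symm.trans h)
  · -- v is on v'-side: pair (u, u')
    refine ⟨u, u', hu'u.symm, ?_⟩
    intro r C hC hx hy
    obtain ⟨hfC, hvC, hwC⟩ := hkey r C hC hx
    refine ⟨hfC, edge_mem_of_not_av C hC hvC hy huvne.symm hu'u ?_⟩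
    intro h
    exact hnR' (h.symm.trans hvv')

/-- The key lower-bound lemma: in a minimally 2-connected graph, for any two distinct edges
there is a pair of vertices such that every cycle through both vertices uses both edges. -/
lemma pair_forcing [Fintype V] [DecidableEq V] (h2 : G.IsTwoConnected)
    (hmin : ∀ e ∈ G.edgeSet, ¬(G.deleteEdges {e}).IsTwoConnected)
    {f g : Sym2 V} (hf : f ∈ G.edgeSet) (hg : g ∈ G.edgeSet) (hfg : f ≠ g) :
    ∃ x y : V, x ≠ y ∧ ∀ (r : V) (C : G.Walk r r), C.IsCycle → x ∈ C.support →
      y ∈ C.support → f ∈ C.edges ∧ g ∈ C.edges := by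
  revert hf hg hfg
  refine Sym2.ind (fun u v => ?_) f
  refine Sym2.ind (fun u' v' => ?_) g
  intro hf hg hfg
  have huv : G.Adj u v := hf
  have hu'v' : G.Adj u' v' := hg
  have huvne : u ≠ v := G.ne_of_adj huv
  have hu'v'ne : u' ≠ v' := G.ne_of_adj hu'v'
  obtain ⟨w, hwu, hwv, hnR, htot⟩ := sep_exists h2 huv (hmin _ hf)
  obtain ⟨w', hw'u', hw'v', hnR', htot'⟩ := sep_exists h2 hu'v' (hmin _ hg)
  have conclude : ∀ x y : V, x ≠ w → y ≠ w → x ≠ w' → y ≠ w' →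
      ¬Av G s(u, v) {w} x y → ¬Av G s(u', v') {w'} x y →
      ∃ x y : V, x ≠ y ∧ ∀ (r : V) (C : G.Walk r r), C.IsCycle → x ∈ C.support →
        y ∈ C.support → s(u, v) ∈ C.edges ∧ s(u', v') ∈ C.edges := by
    intro x y hxw hyw hxw' hyw' hxy hxy'
    refine ⟨x, y, ?_, fun r C hC hx hy => ⟨edge_mem_of_not_av C hC hx hy hxw hyw hxy,
      edge_mem_of_not_av C hC hx hy hxw' hyw' hxy'⟩⟩
    rintro rfl
    exact hxy (Av.refl (by simp [hxw]))
  by_cases hA : ∃ p q : V, p ≠ w ∧ q ≠ w ∧ p ≠ w' ∧ q ≠ w' ∧ ¬Av G s(u, v) {w} p q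
  · by_cases hB : ∃ p q : V, p ≠ w' ∧ q ≠ w' ∧ p ≠ w ∧ q ≠ w ∧ ¬Av G s(u', v') {w'} p q
    · obtain ⟨p, q, hpw, hqw, hpw', hqw', hpq⟩ := hA
      obtain ⟨p', q', hp'w', hq'w', hp'w, hq'w, hp'q'⟩ := hB
      have htotp : ∀ x, x ≠ w → Av G s(u, v) {w} x p ∨ Av G s(u, v) {w} x q := by
        intro x hx
        rcases htot p hpw with hpu | hpv <;> rcases htot q hqw with hqu | hqv
        · exact absurd (hpu.trans hqu.symm) hpq
        · rcases htot x hx with h | h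
          exacts [Or.inl (h.trans hpu.symm), Or.inr (h.trans hqv.symm)]
        · rcases htot x hx with h | h
          exacts [Or.inr (h.trans hqu.symm), Or.inl (h.trans hpv.symm)]
        · exact absurd (hpv.trans hqv.symm) hpq
      have htotq : ∀ x, x ≠ w' → Av G s(u', v') {w'} x p' ∨ Av G s(u', v') {w'} x q' := by
        intro x hx
        rcases htot' p' hp'w' with hpu | hpv <;> rcases htot' q' hq'w' with hqu | hqv
        · exact absurd (hpu.trans hqu.symm) hp'q'
        · rcases htot' x hx with h | h
          exacts [Or.inl (h.trans hpu.symm), Or.inr (h.trans hqv.symm)]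
        · rcases htot' x hx with h | h
          exacts [Or.inr (h.trans hqu.symm), Or.inl (h.trans hpv.symm)]
        · exact absurd (hpv.trans hqv.symm) hp'q'
      by_cases h1 : Av G s(u', v') {w'} p q
      · by_cases h2' : Av G s(u, v) {w} p' q'
        · rcases htotq p hpw' with hpp' | hpq'
          · rcases htotp p' hp'w with hp'p | hp'q
            · refine conclude q q' hqw hq'w hqw' hq'w' ?_ ?_
              · intro h
                exact hpq ((hp'p.symm.trans h2').trans h.symm)
              · intro h
                exact hp'q' ((h1.symm.trans hpp').symm.trans h)
            · refine conclude p q' hpw hq'w hpw' hq'w' ?_ ?_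
              · intro h
                exact hpq (h.trans (h2'.symm.trans hp'q))
              · intro h
                exact hp'q' (hpp'.symm.trans h)
          · rcases htotp p' hp'w with hp'p | hp'q
            · refine conclude q p' hqw hp'w hqw' hp'w' ?_ ?_
              · intro h
                exact hpq ((h.trans hp'p).symm)
              · intro h
                exact hp'q' ((h1.trans h).symm.trans hpq')
            · refine conclude p p' hpw hp'w hpw' hp'w' ?_ ?_
              · intro h
                exact hpq (h.trans hp'q)
              · intro h
                exact hp'q' (h.symm.trans hpq')
        · exact conclude p' q' hp'w hq'w hp'w' hq'w' h2' hp'q'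
      · exact conclude p q hpw hqw hpw' hqw' hpq h1
    · -- w is an endpoint of g with trivial side
      have hB' : ∀ p q : V, p ≠ w' → q ≠ w' → p ≠ w → q ≠ w → Av G s(u', v') {w'} p q := by
        intro p q h1 h2 h3 h4
        by_contra hc
        exact hB ⟨p, q, h1, h2, h3, h4, hc⟩
      have hw_mem : w = u' ∨ w = v' := by
        by_contra hc
        push_neg at hc
        exact hnR' (hB' u' v' hw'u' hw'v' (Ne.symm hc.1) (Ne.symm hc.2))
      rcases hw_mem with h | h
      · rw [h] at hwu hwv hnR htot
        have hside' : ∀ x, x ≠ w' → x ≠ u' → Av G s(u', v') {w'} x v' := by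
          intro x h1 h2
          exact hB' x v' h1 hw'v' (h ▸ h2) (h ▸ hu'v'ne.symm)
        obtain ⟨x, y, hxy, hall⟩ := degenerate hu'v' huv hw'u' hw'v' hnR'
          hwu hwv hnR htot hside'
        exact ⟨x, y, hxy, fun r C hC hx hy => (hall r C hC hx hy).symm⟩
      · rw [h] at hwu hwv hnR htot
        have hswap : s(u', v') = s(v', u') := Sym2.eq_swap.symm
        have hside' : ∀ x, x ≠ w' → x ≠ v' → Av G s(u', v') {w'} x u' := by
          intro x h1 h2
          exact hB' x u' h1 hw'u' (h ▸ h2) (h ▸ hu'v'ne)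
        obtain ⟨x, y, hxy, hall⟩ := degenerate (G := G) (u := v') (v := u') hu'v'.symm huv
          hw'v' hw'u' (by rw [← hswap]; exact fun hcc => hnR' hcc.symm) hwu hwv hnR htot
          (by rw [← hswap]; exact hside')
        refine ⟨x, y, hxy, fun r C hC hx hy => ?_⟩
        have hcc := hall r C hC hx hy
        rw [← hswap] at hcc
        exact hcc.symm
  · -- w' is an endpoint of f with trivial side
    have hA' : ∀ p q : V, p ≠ w → q ≠ w → p ≠ w' → q ≠ w' → Av G s(u, v) {w} p q := by
      intro p q h1 h2 h3 h4
      by_contra hc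
      exact hA ⟨p, q, h1, h2, h3, h4, hc⟩
    have hw'_mem : w' = u ∨ w' = v := by
      by_contra hc
      push_neg at hc
      exact hnR (hA' u v hwu hwv (Ne.symm hc.1) (Ne.symm hc.2))
    rcases hw'_mem with h | h
    · rw [h] at hw'u' hw'v' hnR' htot'
      have hside : ∀ x, x ≠ w → x ≠ u → Av G s(u, v) {w} x v := by
        intro x h1 h2
        exact hA' x v h1 hwv (h ▸ h2) (h ▸ huvne.symm)
      exact degenerate huv hu'v' hwu hwv hnR hw'u' hw'v' hnR' htot' hside
    · rw [h] at hw'u' hw'v' hnR' htot'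
      have hswap : s(u, v) = s(v, u) := Sym2.eq_swap.symm
      have hside : ∀ x, x ≠ w → x ≠ v → Av G s(u, v) {w} x u := by
        intro x h1 h2
        exact hA' x u h1 hwu (h ▸ h2) (h ▸ huvne)
      obtain ⟨x, y, hxy, hall⟩ := degenerate (G := G) (u := v) (v := u) huv.symm hu'v'
        hwv hwu (by rw [← hswap]; exact fun hcc => hnR hcc.symm) hw'u' hw'v' hnR' htot'
        (by rw [← hswap]; exact hside)
      refine ⟨x, y, hxy, fun r C hC hx hy => ?_⟩
      have hcc := hall r C hC hx hy
      rw [← hswap] at hcc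
      exact hcc

lemma start_not_mem_tail_of_path {a b : V} {p : G.Walk a b} (hp : p.IsPath) :
    a ∉ p.support.tail := by
  have h := hp.support_nodup
  rw [Walk.support_eq_cons] at h
  exact (List.nodup_cons.1 h).1

lemma exists_third (h2 : G.IsTwoConnected) (a b : V) : ∃ c, c ≠ a ∧ c ≠ b := by
  have hcard := h2.1
  have hfin : Finite V := by
    rcases Nat.card_pos_iff.1 (by omega : 0 < Nat.card V) with ⟨_, h⟩
    exact h
  have := Fintype.ofFinite V
  classical
  by_contra hc
  push_neg at hc
  have hsub : (Finset.univ : Finset V) ⊆ {a, b} := by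
    intro t _
    rcases eq_or_ne t a with rfl | h
    · simp
    · simp [hc t h]
  have hle := Finset.card_le_card hsub
  have h2' : ({a, b} : Finset V).card ≤ 2 := by
    have := Finset.card_insert_le a ({b} : Finset V)
    simpa using this
  rw [Finset.card_univ] at hle
  rw [Nat.card_eq_fintype_card] at hcard
  omega

lemma twoconn_connected (h2 : G.IsTwoConnected) : G.Connected := by
  have hcard := h2.1
  have hfin : Finite V := by
    rcases Nat.card_pos_iff.1 (by omega : 0 < Nat.card V) with ⟨_, h⟩
    exact h
  have hne : Nonempty V := by
    rcases Nat.card_pos_iff.1 (by omega : 0 < Nat.card V) with ⟨h, _⟩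
    exact h
  rw [connected_iff]
  refine ⟨fun a b => ?_, hne⟩
  rcases eq_or_ne a b with rfl | hab
  · rfl
  obtain ⟨c, hca, hcb⟩ := exists_third h2 a b
  obtain ⟨q, hq⟩ := conn_walk_avoid h2 (Ne.symm hca) (Ne.symm hcb)
  exact ⟨q⟩
lemma no_bridge (h2 : G.IsTwoConnected) {x y : V} (hadj : G.Adj x y) :
    ∃ p : G.Walk x y, s(x, y) ∉ p.edges := by
  by_contra hbr
  push_neg at hbr
  have hnR2 : ¬Av G s(x, y) (∅ : Set V) x y := by
    rintro ⟨p, -, he⟩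
    exact he (hbr p)
  -- no vertex other than x can reach x avoiding the edge
  have hNoz : ∀ z, z ≠ x → ¬Av G s(x, y) (∅ : Set V) z x := by
    intro z hzx hAv
    obtain ⟨q, hq⟩ := conn_walk_avoid h2 hadj.ne' hzx
    have hqe : s(x, y) ∉ q.edges := by
      intro he
      exact hq x (q.fst_mem_support_of_mem_edges he) rfl
    have h1 : Av G s(x, y) (∅ : Set V) y z := ⟨q, by simp, hqe⟩
    exact hnR2 (h1.trans hAv).symm
  have hNx : ∀ z, G.Adj x z → z = y := by
    intro z hz
    by_contra hzy
    have hne : s(x, z) ≠ s(x, y) := by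
      intro h
      rw [Sym2.eq_iff] at h
      rcases h with ⟨-, h⟩ | ⟨h1, -⟩
      exacts [hzy h, hadj.ne h1]
    exact hNoz z hz.ne' (Av.step hz (by simp) (by simp) hne).symm
  obtain ⟨c, hcx, hcy⟩ := exists_third h2 x y
  obtain ⟨q, hq⟩ := conn_walk_avoid h2 hadj.ne hcy
  cases q with
  | nil => exact hcx rfl
  | cons h q' =>
    rename_i b
    have hby : b = y := hNx b h
    exact hq b (by simp) (by simp [hby])

lemma base_cycle [DecidableEq V] (h2 : G.IsTwoConnected) {x y : V} (hadj : G.Adj x y) :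
    ∃ (r : V) (C : G.Walk r r), C.IsCycle ∧ x ∈ C.support ∧ y ∈ C.support := by
  obtain ⟨p, hp⟩ := no_bridge h2 hadj
  have hp' : s(x, y) ∉ p.bypass.edges := fun h => hp (Walk.edges_bypass_subset _ h)
  refine ⟨y, Walk.cons hadj.symm p.bypass, ?_, ?_, ?_⟩
  · rw [Walk.cons_isCycle_iff]
    exact ⟨p.bypass_isPath, by rwa [Sym2.eq_swap]⟩
  · simp
  · simp

/-- First hit of a walk on the support of a cycle. -/
lemma first_hit [DecidableEq V] {a c r : V} (C : G.Walk r r) (Q : G.Walk a c)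
    (hc : c ∈ C.support) :
    ∃ (w : V) (q : G.Walk a w), w ∈ C.support ∧ q.IsPath ∧
      (∀ t ∈ q.support, t ∈ C.support → t = w) ∧ (∀ t ∈ q.support, t ∈ Q.support) := by
  induction Q with
  | nil =>
    exact ⟨_, Walk.nil, hc, by simp, fun t ht _ => by simpa using ht, fun t ht => ht⟩
  | cons h Q' ih =>
    rename_i x b c'
    by_cases hx : x ∈ C.support
    · exact ⟨x, Walk.nil, hx, by simp, fun t ht _ => by simpa using ht,
        fun t ht => by simp at ht; simp [ht]⟩
    · obtain ⟨w, q, hw, hqp, hfirst, hsub⟩ := ih hc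
      refine ⟨w, (Walk.cons h q).bypass, hw, Walk.bypass_isPath _, ?_, ?_⟩
      · intro t ht htC
        have ht' := Walk.support_bypass_subset _ ht
        rcases (by simpa using ht' : t = x ∨ t ∈ q.support) with rfl | h'
        · exact absurd htC hx
        · exact hfirst t h' htC
      · intro t ht
        have ht' := Walk.support_bypass_subset _ ht
        rcases (by simpa using ht' : t = x ∨ t ∈ q.support) with rfl | h'
        · simp
        · simp [hsub t h']
/-- In a 2-connected graph, any two distinct vertices lie on a common cycle. -/
lemma cycle_through_pair [DecidableEq V] (h2 : G.IsTwoConnected) {x y : V} (hxy : x ≠ y) :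
    ∃ (r : V) (C : G.Walk r r), C.IsCycle ∧ x ∈ C.support ∧ y ∈ C.support := by
  have hconn := twoconn_connected h2
  suffices H : ∀ (n : ℕ) (x y : V), x ≠ y → G.dist x y = n →
      ∃ (r : V) (C : G.Walk r r), C.IsCycle ∧ x ∈ C.support ∧ y ∈ C.support by
    exact H _ x y hxy rfl
  intro n
  induction n using Nat.strong_induction_on with
  | _ n ih =>
    intro x y hxy hd
    match n, hd with
    | 0, hd =>
      exact absurd (hconn.dist_eq_zero_iff.1 hd) hxy
    | 1, hd =>
      obtain ⟨p, hp⟩ := hconn.exists_walk_length_eq_dist x y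
      rw [hd] at hp
      cases p with
      | nil => simp at hp
      | cons h q =>
        have : q.length = 0 := by simpa using hp
        have hbq := Walk.eq_of_length_eq_zero this
        subst hbq
        exact base_cycle h2 h
    | (n + 2), hd =>
      obtain ⟨p, hp⟩ := hconn.exists_walk_length_eq_dist x y
      rw [hd] at hp
      cases hrev : p.reverse with
      | nil =>
        have := congrArg Walk.length hrev
        rw [Walk.length_reverse, hp] at this
        simp at this
      | cons h q' =>
        rename_i z
        -- h : G.Adj y z, q' : G.Walk z x
        have hq'len : q'.length = n + 1 := by
          have := congrArg Walk.length hrev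
          rw [Walk.length_reverse, hp] at this
          simpa using this.symm
        have hdxz : G.dist x z = n + 1 := by
          have hle : G.dist x z ≤ n + 1 := by
            have := dist_le q'.reverse
            rwa [Walk.length_reverse, hq'len] at this
          have hzy : G.dist z y ≤ 1 := by
            have := dist_le (Walk.cons h.symm Walk.nil)
            simpa using this
          have htri := hconn.dist_triangle (u := x) (v := z) (w := y)
          rw [hd] at htri
          omega
        have hxz : x ≠ z := by
          intro hh
          rw [← hh] at hdxz
          rw [hconn.dist_eq_zero_iff.2 rfl] at hdxz
          omega
        have hzy : z ≠ y := h.ne'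
        obtain ⟨r, C, hC, hxC, hzC⟩ := ih (n + 1) (by omega) x z hxz hdxz
        by_cases hyC : y ∈ C.support
        · exact ⟨r, C, hC, hxC, hyC⟩
        -- walk from y to x avoiding z
        obtain ⟨Q, hQ⟩ := conn_walk_avoid h2 hzy.symm ((Ne.symm hxz) : z ≠ x).symm
        -- first hit of Q on C
        obtain ⟨w, q, hwC, hqpath, hfirst, hqsub⟩ := first_hit C Q hxC
        have hq_avoid_z : ∀ t ∈ q.support, t ≠ z := by
          intro t ht
          have := hQ t (hqsub t ht)
          simpa using this
        have hyw : y ≠ w := fun hh => hyC (hh ▸ hwC)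
        have hwz : w ≠ z := hq_avoid_z w q.end_mem_support
        -- rotate the cycle at x and split at z
        have hCnil : ¬C.Nil := hC.not_nil
        have hC₁ := hC.rotate hxC
        set C₁ := C.rotate x hxC with hC₁def
        have hzC₁ : z ∈ C₁.support := (mem_support_rotate_iff C hCnil hxC).2 hzC
        set P₁ := C₁.takeUntil z hzC₁ with hP₁def
        set P₂ := C₁.dropUntil z hzC₁ with hP₂def
        have hsupp : C₁.support = P₁.support ++ P₂.support.tail := by
          rw [← Walk.support_append, C₁.take_spec hzC₁]
        have htail2 : C₁.support.tail = P₁.support.tail ++ P₂.support.tail := by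
          have e1 : x :: C₁.support.tail = x :: (P₁.support.tail ++ P₂.support.tail) := by
            rw [← Walk.support_eq_cons, hsupp, Walk.support_eq_cons (p := P₁)]
            simp only [List.cons_append, List.tail_cons]
          injection e1
        have hT : (P₁.support.tail ++ P₂.support.tail).Nodup := htail2 ▸ hC₁.support_nodup
        obtain ⟨hn1, hn2, hdisjT⟩ := List.nodup_append.1 hT
        have hzP₁t : z ∈ P₁.support.tail := end_mem_tail_support P₁ hxz
        have hxP₂t : x ∈ P₂.support.tail := end_mem_tail_support P₂ (Ne.symm hxz)
        have hxP₁t : x ∉ P₁.support.tail := fun hh => hdisjT _ hh _ hxP₂t rfl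
        have hzP₂t : z ∉ P₂.support.tail := fun hh => hdisjT _ hzP₁t _ hh rfl
        have hP₁path : P₁.IsPath := by
          rw [Walk.isPath_def, Walk.support_eq_cons]
          exact List.nodup_cons.2 ⟨hxP₁t, hn1⟩
        have hP₂path : P₂.IsPath := by
          rw [Walk.isPath_def, Walk.support_eq_cons]
          exact List.nodup_cons.2 ⟨hzP₂t, hn2⟩
        have hdisjsup : ∀ t, t ∈ P₁.support → t ∈ P₂.support → t = x ∨ t = z := by
          intro t ht1 ht2
          rw [Walk.support_eq_cons] at ht1 ht2
          rcases List.mem_cons.1 ht1 with rfl | ht1'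
          · exact Or.inl rfl
          rcases List.mem_cons.1 ht2 with rfl | ht2'
          · exact Or.inr rfl
          · exact absurd ht2' (fun hh => hdisjT _ ht1' _ hh rfl)
        have hwsub : w ∈ C₁.support := (mem_support_rotate_iff C hCnil hxC).2 hwC
        -- membership of supports of P₁, P₂ in C
        have hsubC : ∀ t, (t ∈ P₁.support ∨ t ∈ P₂.support) → t ∈ C.support := by
          intro t ht
          refine (mem_support_rotate_iff C hCnil hxC).1 ?_
          rcases ht with ht | ht
          · exact Walk.support_takeUntil_subset _ hzC₁ ht
          · exact Walk.support_dropUntil_subset _ hzC₁ ht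
        have hyP : ∀ t, (t ∈ P₁.support ∨ t ∈ P₂.support) → t ≠ y := by
          intro t ht hty
          exact hyC (hty ▸ hsubC t ht)
        by_cases hw2 : w ∈ P₂.support
        · -- w on the arc from z to x; cycle : z — y — (q to w) — (P₂ to x) — (P₁ to z)
          set R := P₂.dropUntil w hw2 with hRdef
          have hRpath : R.IsPath := hP₂path.dropUntil hw2
          have hsuffix : P₂.support = (P₂.takeUntil w hw2).support ++ R.support.tail := by
            rw [← Walk.support_append, P₂.take_spec hw2]
          have htail3 : P₂.support.tail =
              (P₂.takeUntil w hw2).support.tail ++ R.support.tail := by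
            have e2 : z :: P₂.support.tail =
                z :: ((P₂.takeUntil w hw2).support.tail ++ R.support.tail) := by
              rw [← Walk.support_eq_cons, hsuffix,
                Walk.support_eq_cons (p := P₂.takeUntil w hw2)]
              simp only [List.cons_append, List.tail_cons]
            injection e2
          have hzR : z ∉ R.support := by
            intro hh
            rw [Walk.support_eq_cons] at hh
            rcases List.mem_cons.1 hh with hh' | hh'
            · exact hwz hh'.symm
            · exact hzP₂t (htail3 ▸ List.mem_append_right _ hh')
          have hinner : (R.append P₁).IsPath := by
            rw [Walk.isPath_def, Walk.support_append, List.nodup_append]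
            refine ⟨hRpath.support_nodup, hn1, ?_⟩
            intro t htR t' htP₁ htt'; subst htt'
            have ht2 : t ∈ P₂.support := Walk.support_dropUntil_subset _ hw2 htR
            have ht1 : t ∈ P₁.support := List.mem_of_mem_tail htP₁
            rcases hdisjsup t ht1 ht2 with rfl | rfl
            · exact hxP₁t htP₁
            · exact hzR htR
          have hinner_tail : (R.append P₁).support.tail =
              R.support.tail ++ P₁.support.tail := Walk.tail_support_append _ _
          have hinnerC : ∀ t, t ∈ (R.append P₁).support → t ∈ C.support := by
            intro t ht
            rcases (Walk.mem_support_append_iff _ _).1 ht with ht | ht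
            · exact hsubC t (Or.inr (Walk.support_dropUntil_subset _ hw2 ht))
            · exact hsubC t (Or.inl ht)
          have hWpath : (q.append (R.append P₁)).IsPath := by
            rw [Walk.isPath_def, Walk.support_append, List.nodup_append]
            refine ⟨hqpath.support_nodup,
              List.Sublist.nodup (List.tail_sublist _) hinner.support_nodup, ?_⟩
            intro t htq t' htt htt'; subst htt'
            have htC : t ∈ C.support := hinnerC t (List.mem_of_mem_tail htt)
            have htw : t = w := hfirst t htq htC
            subst htw
            rw [hinner_tail] at htt
            rcases List.mem_append.1 htt with hh | hh
            · exact start_not_mem_tail_of_path hRpath hh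
            · rcases hdisjsup t (List.mem_of_mem_tail hh)
                (Walk.support_dropUntil_subset _ hw2 R.start_mem_support) with rfl | rfl
              · exact hxP₁t hh
              · exact hwz rfl
          have hWedge : s(z, y) ∉ (q.append (R.append P₁)).edges := by
            rw [Walk.edges_append, List.mem_append]
            rintro (he | he)
            · exact hq_avoid_z z (q.fst_mem_support_of_mem_edges he) rfl
            · rw [Walk.edges_append, List.mem_append] at he
              rcases he with he | he
              · exact hyP y (Or.inr (Walk.support_dropUntil_subset _ hw2
                  (R.snd_mem_support_of_mem_edges he))) rfl
              · exact hyP y (Or.inl (P₁.snd_mem_support_of_mem_edges he)) rfl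
          refine ⟨z, Walk.cons h.symm (q.append (R.append P₁)), ?_, ?_, ?_⟩
          · rw [Walk.cons_isCycle_iff]
            exact ⟨hWpath, hWedge⟩
          · rw [Walk.support_cons]
            refine List.mem_cons_of_mem _ ?_
            rw [Walk.mem_support_append_iff]
            exact Or.inr (by rw [Walk.mem_support_append_iff]
                             exact Or.inl R.end_mem_support)
          · rw [Walk.support_cons]
            exact List.mem_cons_of_mem _ (by rw [Walk.mem_support_append_iff]
                                             exact Or.inl q.start_mem_support)
        · -- w on the arc from x to z
          have hw1 : w ∈ P₁.support := by
            rw [hsupp] at hwsub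
            rcases List.mem_append.1 hwsub with hh | hh
            · exact hh
            · exact absurd (List.mem_of_mem_tail hh) hw2
          have hwx : w ≠ x := by
            rintro rfl
            exact hw2 P₂.end_mem_support
          set T := P₁.takeUntil w hw1 with hTdef
          have hTpath : T.IsPath := hP₁path.takeUntil hw1
          have hsuffix1 : P₁.support = T.support ++ (P₁.dropUntil w hw1).support.tail := by
            rw [← Walk.support_append, P₁.take_spec hw1]
          have hzT : z ∉ T.support := by
            intro hh
            have hzdr : z ∈ (P₁.dropUntil w hw1).support.tail :=
              end_mem_tail_support _ hwz
            exact (List.disjoint_of_nodup_append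
              (hsuffix1 ▸ hP₁path.support_nodup)) hh hzdr
          have hinner : (T.reverse.append P₂.reverse).IsPath := by
            rw [Walk.isPath_def, Walk.support_append, List.nodup_append]
            refine ⟨hTpath.reverse.support_nodup,
              List.Sublist.nodup (List.tail_sublist _) hP₂path.reverse.support_nodup, ?_⟩
            intro t htT t' htt htt'; subst htt'
            have ht1 : t ∈ P₁.support := by
              rw [Walk.support_reverse, List.mem_reverse] at htT
              exact Walk.support_takeUntil_subset _ hw1 htT
            have ht2 : t ∈ P₂.support := by
              have := List.mem_of_mem_tail htt
              rwa [Walk.support_reverse, List.mem_reverse] at this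
            rcases hdisjsup t ht1 ht2 with rfl | rfl
            · exact start_not_mem_tail_of_path hP₂path.reverse htt
            · rw [Walk.support_reverse, List.mem_reverse] at htT
              exact hzT htT
          have hinner_tail : (T.reverse.append P₂.reverse).support.tail =
              T.reverse.support.tail ++ P₂.reverse.support.tail :=
            Walk.tail_support_append _ _
          have hinnerC : ∀ t, t ∈ (T.reverse.append P₂.reverse).support → t ∈ C.support := by
            intro t ht
            rcases (Walk.mem_support_append_iff _ _).1 ht with ht | ht
            · rw [Walk.support_reverse, List.mem_reverse] at ht
              exact hsubC t (Or.inl (Walk.support_takeUntil_subset _ hw1 ht))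
            · rw [Walk.support_reverse, List.mem_reverse] at ht
              exact hsubC t (Or.inr ht)
          have hWpath : (q.append (T.reverse.append P₂.reverse)).IsPath := by
            rw [Walk.isPath_def, Walk.support_append, List.nodup_append]
            refine ⟨hqpath.support_nodup,
              List.Sublist.nodup (List.tail_sublist _) hinner.support_nodup, ?_⟩
            intro t htq t' htt htt'; subst htt'
            have htC : t ∈ C.support := hinnerC t (List.mem_of_mem_tail htt)
            have htw : t = w := hfirst t htq htC
            subst htw
            rw [hinner_tail] at htt
            rcases List.mem_append.1 htt with hh | hh
            · exact start_not_mem_tail_of_path hTpath.reverse hh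
            · have : t ∈ P₂.support := by
                have := List.mem_of_mem_tail hh
                rwa [Walk.support_reverse, List.mem_reverse] at this
              exact hw2 this
          have hWedge : s(z, y) ∉ (q.append (T.reverse.append P₂.reverse)).edges := by
            rw [Walk.edges_append, List.mem_append]
            rintro (he | he)
            · exact hq_avoid_z z (q.fst_mem_support_of_mem_edges he) rfl
            · rw [Walk.edges_append, List.mem_append] at he
              rcases he with he | he
              · have hy' := T.reverse.snd_mem_support_of_mem_edges he
                rw [Walk.support_reverse, List.mem_reverse] at hy'
                exact hyP y (Or.inl (Walk.support_takeUntil_subset _ hw1 hy')) rfl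
              · have hy' := P₂.reverse.snd_mem_support_of_mem_edges he
                rw [Walk.support_reverse, List.mem_reverse] at hy'
                exact hyP y (Or.inr hy') rfl
          refine ⟨z, Walk.cons h.symm (q.append (T.reverse.append P₂.reverse)), ?_, ?_, ?_⟩
          · rw [Walk.cons_isCycle_iff]
            exact ⟨hWpath, hWedge⟩
          · rw [Walk.support_cons]
            refine List.mem_cons_of_mem _ ?_
            rw [Walk.mem_support_append_iff]
            exact Or.inr (by rw [Walk.mem_support_append_iff]
                             exact Or.inl T.reverse.end_mem_support)
          · rw [Walk.support_cons]
            exact List.mem_cons_of_mem _ (by rw [Walk.mem_support_append_iff]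
                                             exact Or.inl q.start_mem_support)

lemma edgeSet_nonempty (h2 : G.IsTwoConnected) : G.edgeSet.Nonempty := by
  have hconn := twoconn_connected h2
  have hcard := h2.1
  have hfin : Finite V := by
    rcases Nat.card_pos_iff.1 (by omega : 0 < Nat.card V) with ⟨_, h⟩
    exact h
  have hnontriv : Nontrivial V := by
    have := Fintype.ofFinite V
    rw [Nat.card_eq_fintype_card] at hcard
    exact Fintype.one_lt_card_iff_nontrivial.1 (by omega)
  obtain ⟨a, b, hab⟩ := hnontriv.exists_pair_ne
  obtain ⟨p⟩ := hconn.preconnected a b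
  cases p with
  | nil => exact absurd rfl hab
  | cons h q => exact ⟨_, G.mem_edgeSet.2 h⟩

lemma exists_inj_coloring (G : SimpleGraph V) [Finite ↥G.edgeSet] :
    ∃ φ : Sym2 V → ℕ, (∀ e ∈ G.edgeSet, φ e < G.numEdges) ∧
      (∀ e ∈ G.edgeSet, ∀ e' ∈ G.edgeSet, φ e = φ e' → e = e') ∧
      (∀ e, e ∉ G.edgeSet → φ e = 0) := by
  classical
  rcases eq_or_ne (Nat.card ↥G.edgeSet) 0 with h0 | h0
  · have hemp : IsEmpty ↥G.edgeSet :=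
      (Nat.card_eq_zero.1 h0).resolve_right (fun h => not_finite ↥G.edgeSet)
    exact ⟨fun _ => 0, fun e he => (hemp.false ⟨e, he⟩).elim,
      fun e he => (hemp.false ⟨e, he⟩).elim, fun _ _ => rfl⟩
  · let eq := Nat.equivFinOfCardPos (α := ↥G.edgeSet) h0
    refine ⟨fun e => if h : e ∈ G.edgeSet then (eq ⟨e, h⟩ : Fin _).val else 0, ?_, ?_, ?_⟩
    · intro e he
      simp only [dif_pos he]
      exact (eq ⟨e, he⟩).isLt
    · intro e he e' he' hphi
      simp only [dif_pos he, dif_pos he'] at hphi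
      exact congrArg Subtype.val (eq.injective (Fin.ext hphi))
    · intro e he
      simp only [dif_neg he]

lemma mk_rainbow [DecidableEq V] {H : SimpleGraph V} (hHG : H ≤ G) (hH2 : H.IsTwoConnected)
    (φ : Sym2 V → ℕ) (hinj : ∀ e ∈ H.edgeSet, ∀ e' ∈ H.edgeSet, φ e = φ e' → e = e') :
    G.IsRainbowCycleColoring 2 φ := by
  intro S hS
  obtain ⟨x, y, hxy, rfl⟩ := Finset.card_eq_two.1 hS
  obtain ⟨r, C, hC, hxC, hyC⟩ := cycle_through_pair hH2 hxy
  refine ⟨r, C.mapLe hHG, hC.mapLe hHG, ?_, ?_⟩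
  · have hsup : (C.mapLe hHG).support = C.support := by
      have hid : ⇑(Hom.ofLE hHG) = id := rfl
      rw [Walk.support_map, hid, List.map_id]
    intro v hv
    rw [hsup]
    rcases Finset.mem_insert.1 hv with rfl | hv'
    · exact hxC
    · rw [Finset.mem_singleton.1 hv']
      exact hyC
  · have hedg : (C.mapLe hHG).edges = C.edges := by
      have hid : ⇑(Hom.ofLE hHG) = id := rfl
      rw [Walk.edges_map, hid, Sym2.map_id, List.map_id]
    rw [hedg]
    refine List.Nodup.map_on ?_ hC.isTrail.edges_nodup
    intro e he e' he' hphi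
    exact hinj e (C.edges_subset_edgeSet he) e' (C.edges_subset_edgeSet he') hphi

end RCI

/-- for a 2-connected G of order n ≥ 3, crx_2(G) = e(G) iff G is
minimally 2-connected. -/
theorem crx_two_eq_numEdges_iff_minimally_two_connected
    {V : Type*} [Fintype V] (G : SimpleGraph V) (hn : 3 ≤ Fintype.card V)
    (h2 : G.IsTwoConnected) :
    G.crx 2 = G.numEdges ↔
      ∀ e ∈ G.edgeSet, ¬ (G.deleteEdges {e}).IsTwoConnected := by
  classical
  have hfinE : Finite ↥G.edgeSet := Set.toFinite _
  have hm1 : 1 ≤ G.numEdges := by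
    obtain ⟨e, he⟩ := RCI.edgeSet_nonempty h2
    have : Nonempty ↥G.edgeSet := ⟨⟨e, he⟩⟩
    exact Nat.card_pos
  obtain ⟨φ₀, hφ₀b, hφ₀i, -⟩ := RCI.exists_inj_coloring G
  have hmem : G.numEdges ∈ {r | ∃ φ : Sym2 V → ℕ, (∀ e ∈ G.edgeSet, φ e < r) ∧
      G.IsRainbowCycleColoring 2 φ} := ⟨φ₀, hφ₀b, RCI.mk_rainbow le_rfl h2 φ₀ hφ₀i⟩
  constructor
  · intro hcrx e he hdel
    set H := G.deleteEdges {e} with hH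
    have hfinE' : Finite ↥H.edgeSet := Set.toFinite _
    obtain ⟨φ, hφb, hφi, hφ0⟩ := RCI.exists_inj_coloring H
    have hHpos : 1 ≤ H.numEdges := by
      obtain ⟨e', he'⟩ := RCI.edgeSet_nonempty hdel
      have : Nonempty ↥H.edgeSet := ⟨⟨e', he'⟩⟩
      exact Nat.card_pos
    have hball : ∀ e' ∈ G.edgeSet, φ e' < H.numEdges := by
      intro e' he'
      by_cases hH' : e' ∈ H.edgeSet
      · exact hφb e' hH'
      · rw [hφ0 e' hH']
        omega
    have hmem' : H.numEdges ∈ {r | ∃ φ : Sym2 V → ℕ, (∀ e ∈ G.edgeSet, φ e < r) ∧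
        G.IsRainbowCycleColoring 2 φ} :=
      ⟨φ, hball, RCI.mk_rainbow (SimpleGraph.deleteEdges_le _) hdel φ hφi⟩
    have hle : G.crx 2 ≤ H.numEdges := by
      simp only [SimpleGraph.crx]
      exact Nat.sInf_le hmem'
    have hHcard : H.numEdges = G.numEdges - 1 := by
      show Nat.card ↥H.edgeSet = G.numEdges - 1
      rw [Nat.card_coe_set_eq, hH, SimpleGraph.edgeSet_deleteEdges,
        Set.ncard_diff_singleton_of_mem he, SimpleGraph.numEdges,
        Nat.card_coe_set_eq]
    rw [hcrx, hHcard] at hle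
    omega
  · intro hmin
    have hub : G.crx 2 ≤ G.numEdges := by
      simp only [SimpleGraph.crx]
      exact Nat.sInf_le hmem
    have hlb : G.numEdges ≤ G.crx 2 := by
      simp only [SimpleGraph.crx]
      refine le_csInf ⟨_, hmem⟩ ?_
      rintro b ⟨φ, hφb, hφr⟩
      by_contra hlt
      push_neg at hlt
      have hFin : Fintype ↥G.edgeSet := Fintype.ofFinite _
      have hcards : Fintype.card (Fin b) < Fintype.card ↥G.edgeSet := by
        rw [Fintype.card_fin]
        have hcc : G.numEdges = Fintype.card ↥G.edgeSet := Nat.card_eq_fintype_card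
        omega
      have hbpos : ∀ x : ↥G.edgeSet, φ x.1 < b := fun x => hφb x.1 x.2
      obtain ⟨e1, e2, hne, heq⟩ := Fintype.exists_ne_map_eq_of_card_lt
        (fun x : ↥G.edgeSet => (⟨φ x.1, hbpos x⟩ : Fin b)) hcards
      have heq' : φ e1.1 = φ e2.1 := congrArg Fin.val heq
      have hne' : e1.1 ≠ e2.1 := fun h => hne (Subtype.ext h)
      obtain ⟨x, y, hxy, hforce⟩ := RCI.pair_forcing h2 hmin e1.2 e2.2 hne'
      obtain ⟨u, c, hc, hmem2, hnd⟩ := hφr {x, y}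
        (by rw [Finset.card_insert_of_notMem (by simpa using hxy), Finset.card_singleton])
      have hxs := hmem2 x (by simp)
      have hys := hmem2 y (by simp)
      obtain ⟨hfm, hgm⟩ := hforce u c hc hxs hys
      exact hne' (List.inj_on_of_nodup_map hnd hfm hgm heq')
    omega
end

section
/- Let G be a Hamiltonian graph of order n ≥ 3 and 1 ≤ k ≤ n. Then crx_k(G) = e(G) if and only if G is the cycle C_n. -/
open SimpleGraph

section Helpers
open Walk
open SimpleGraph Walk

private lemma exists_last_edge {V : Type*} {G : SimpleGraph V} :
    ∀ {y x : V} (q : G.Walk y x), ¬ q.Nil →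
      ∃ z, G.Adj z x ∧ z ∈ q.support ∧ s(z, x) ∈ q.edges
  | _, _, .nil, h => absurd .nil h
  | y, x, .cons h .nil, _ => ⟨y, h, by simp, by simp⟩
  | y, x, .cons h (.cons h' q), _ => by
      obtain ⟨z, hz1, hz2, hz3⟩ := exists_last_edge (.cons h' q) (by simp)
      exact ⟨z, hz1, by rw [support_cons]; exact List.mem_cons_of_mem _ hz2,
        by rw [edges_cons]; exact List.mem_cons_of_mem _ hz3⟩

private lemma start_mem_support_tail {V : Type*} {G : SimpleGraph V} {x : V}
    (c : G.Walk x x) (h : ¬ c.Nil) : x ∈ c.support.tail := by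
  cases c with
  | nil => simp at h
  | cons h q => simp only [support_cons, List.tail_cons]; exact q.end_mem_support

private lemma closed_mem_support_iff {V : Type*} {G : SimpleGraph V} {x v : V}
    {c : G.Walk x x} (h : ¬ c.Nil) : v ∈ c.support ↔ v ∈ c.support.tail := by
  constructor
  · intro hv
    rw [support_eq_cons] at hv
    rcases List.mem_cons.1 hv with rfl | hv
    · exact start_mem_support_tail c h
    · exact hv
  · exact fun hv => List.mem_of_mem_tail hv

private lemma cycle_two_neighbors {V : Type*} {G : SimpleGraph V} {x : V}
    {c : G.Walk x x} (hc : c.IsCycle) :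
    ∃ z w, z ≠ w ∧ G.Adj x z ∧ G.Adj x w ∧ z ∈ c.support ∧ w ∈ c.support := by
  cases c with
  | nil => exact absurd rfl hc.ne_nil
  | cons h q =>
    have hq : ¬ q.Nil := by
      intro hn
      have := hc.three_le_length
      rw [nil_iff_length_eq] at hn
      simp [hn] at this
    obtain ⟨z, hz1, hz2, hz3⟩ := exists_last_edge q hq
    refine ⟨_, z, ?_, h, hz1.symm, by simp, by simp [hz2]⟩
    intro hzw
    have hnd := hc.edges_nodup
    rw [edges_cons, List.nodup_cons] at hnd
    apply hnd.1
    rw [← hzw] at hz3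
    rw [Sym2.eq_swap]
    exact hz3

private lemma spread_of_preconnected {V : Type*} {G : SimpleGraph V} {S : Set V}
    (hS : ∀ x y, x ∈ S → G.Adj x y → y ∈ S) (hG : G.Preconnected) {x0 : V}
    (hx0 : x0 ∈ S) : ∀ v, v ∈ S := by
  intro v
  obtain ⟨p⟩ := hG x0 v
  clear hG
  induction p with
  | nil => exact hx0
  | cons h q ih => exact ih (hS _ _ hx0 h)

-- neighbors of x in cycleGraph n (n ≥ 3) are exactly two distinct vertices x-1, x+1
private lemma cycleGraph_closure {n : ℕ} (hn : 3 ≤ n) {x y : Fin n}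
    {c : (cycleGraph n).Walk x x} (hc : c.IsCycle) {u : Fin n}
    (hu : u ∈ c.support) (huy : (cycleGraph n).Adj u y) : y ∈ c.support := by
  obtain ⟨m, rfl⟩ : ∃ m, n = m + 3 := ⟨n - 3, by omega⟩
  -- rotate the cycle to start at u
  have hc' := hc.rotate hu
  obtain ⟨z, w, hzw, hz, hw, hzs, hws⟩ := cycle_two_neighbors hc'
  have hmem : ∀ a, a ∈ (c.rotate u hu).support → a ∈ c.support := by
    intro a ha
    rw [closed_mem_support_iff hc'.not_nil] at ha
    rw [closed_mem_support_iff hc.not_nil]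
    exact (support_rotate c u hu).mem_iff.1 ha
  have hns : (cycleGraph (m + 3)).neighborSet u = {u - 1, u + 1} := by
    have : ∃ k, m + 3 = k + 2 := ⟨m + 1, by omega⟩
    obtain ⟨k, hk⟩ := this
    exact cycleGraph_neighborSet (n := m + 1) (v := u)
  have hy : y ∈ ({u - 1, u + 1} : Set (Fin (m + 3))) := hns ▸ huy
  have hzmem : z ∈ ({u - 1, u + 1} : Set (Fin (m + 3))) := hns ▸ hz
  have hwmem : w ∈ ({u - 1, u + 1} : Set (Fin (m + 3))) := hns ▸ hw
  simp only [Set.mem_insert_iff, Set.mem_singleton_iff] at hy hzmem hwmem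
  have hne : (u - 1 : Fin (m + 3)) ≠ u + 1 := by
    intro h
    have : (u + 1) - (u - 1) = 0 := by rw [← h]; open Fin.CommRing in ring
    have h2 : ((2 : Fin (m + 3))) = 0 := by
      rw [← this]; open Fin.CommRing in ring
    have := congrArg Fin.val h2
    simp at this
    rw [Nat.mod_eq_of_lt (by omega)] at this; omega
  rcases hy with rfl | rfl
  · rcases hzmem with rfl | h1
    · exact hmem _ hzs
    · rcases hwmem with rfl | h2
      · exact hmem _ hws
      · exact absurd (h1.trans h2.symm) hzw
  · rcases hzmem with h1 | rfl
    · rcases hwmem with h2 | rfl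
      · exact absurd (h1.trans h2.symm) hzw
      · exact hmem _ hws
    · exact hmem _ hzs
private lemma tail_covers_length {V : Type*} [Fintype V] {G : SimpleGraph V} {x : V}
    {c : G.Walk x x} (hc : c.IsCycle) (hall : ∀ v : V, v ∈ c.support) :
    Fintype.card V ≤ c.length := by
  classical
  have hnd : c.support.tail.Nodup := hc.support_nodup
  have hcov : ∀ v : V, v ∈ c.support.tail := fun v =>
    (closed_mem_support_iff hc.not_nil).1 (hall v)
  have hsub : (Finset.univ : Finset V) ⊆ c.support.tail.toFinset := by
    intro v _; simpa using hcov v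
  calc Fintype.card V ≤ c.support.tail.toFinset.card := Finset.card_le_card hsub
    _ = c.support.tail.length := List.toFinset_card_of_nodup hnd
    _ = c.support.length - 1 := by rw [List.length_tail]
    _ = c.length := by rw [length_support]; omega

private lemma cycleGraph_cycle_length {n : ℕ} (hn : 3 ≤ n) {x : Fin n}
    {c : (cycleGraph n).Walk x x} (hc : c.IsCycle) : n ≤ c.length := by
  have hall : ∀ v : Fin n, v ∈ c.support := by
    refine spread_of_preconnected (S := {v | v ∈ c.support})
      (fun a b ha hab => cycleGraph_closure hn hc ha hab) cycleGraph_preconnected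
      (c.start_mem_support)
  simpa using tail_covers_length hc hall

private lemma mem_edges_exists {V : Type*} {G : SimpleGraph V} :
    ∀ {u v : V} (p : G.Walk u v) {e : Sym2 V}, e ∈ p.edges →
      ∃ i, i < p.length ∧ e = s(p.getVert i, p.getVert (i + 1))
  | _, _, .nil, e, he => by simp at he
  | u, v, .cons h q, e, he => by
    rw [edges_cons, List.mem_cons] at he
    rcases he with rfl | he
    · exact ⟨0, by simp, by simp [getVert_zero, getVert_cons_succ]⟩
    · obtain ⟨i, hi, hie⟩ := mem_edges_exists q he
      exact ⟨i + 1, by simpa using hi, by simpa [getVert_cons_succ] using hie⟩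

private lemma getVert_eq_support_getElem {V : Type*} {G : SimpleGraph V} :
    ∀ {u v : V} (p : G.Walk u v) {i : ℕ} (h : i < p.support.length),
      p.getVert i = p.support[i]
  | _, _, .nil, i, h => by
    simp only [support_nil, List.length_singleton] at h
    interval_cases i
    · simp
  | u, v, .cons ha q, i, h => by
    cases i with
    | zero => simp
    | succ i =>
      simp only [support_cons, List.length_cons] at h
      rw [getVert_cons_succ]
      simp only [support_cons, List.getElem_cons_succ]
      exact getVert_eq_support_getElem q (by omega)

private lemma cycle_getVert_injOn {V : Type*} {G : SimpleGraph V} {x : V}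
    {c : G.Walk x x} (hc : c.IsCycle) {i j : ℕ} (hi : i < c.length)
    (hj : j < c.length) (hij : c.getVert i = c.getVert j) : i = j := by
  have hnd : c.support.tail.Nodup := hc.support_nodup
  have hlen : c.support.length = c.length + 1 := length_support c
  have htl : c.support.tail.length = c.length := by
    rw [List.length_tail, hlen]; omega
  have key : ∀ k, (hk : k < c.length) → c.getVert (k + 1) = c.support.tail[k]'(by omega) := by
    intro k hk
    rw [_root_.getVert_eq_support_getElem c (by rw [hlen]; omega)]
    simp
  -- getVert 0 = getVert length
  have h0 : c.getVert 0 = c.getVert c.length := by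
    rw [getVert_zero, getVert_length]
  by_contra hne
  -- wlog via cases on zero-ness
  have inj : ∀ a b, a ≤ c.length → b ≤ c.length → a ≠ 0 → b ≠ 0 →
      c.getVert a = c.getVert b → a = b := by
    intro a b ha hb ha0 hb0 hab
    obtain ⟨a', rfl⟩ : ∃ a', a = a' + 1 := ⟨a - 1, by omega⟩
    obtain ⟨b', rfl⟩ : ∃ b', b = b' + 1 := ⟨b - 1, by omega⟩
    rw [key a' (by omega), key b' (by omega)] at hab
    have := (List.Nodup.getElem_inj_iff hnd).1 hab
    omega
  rcases Nat.eq_zero_or_pos i with rfl | hi0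
  · rcases Nat.eq_zero_or_pos j with rfl | hj0
    · exact hne rfl
    · rw [h0] at hij
      have := inj c.length j (le_refl _) (by omega) (by omega) (by omega) hij
      omega
  · rcases Nat.eq_zero_or_pos j with rfl | hj0
    · rw [h0] at hij
      have := inj i c.length (by omega) (le_refl _) (by omega) (by omega) hij
      omega
    · exact hne (inj i j (by omega) (by omega) (by omega) (by omega) hij)

private lemma numEdges_eq_card_edgeFinset {V : Type*} [Fintype V] [DecidableEq V]
    (G : SimpleGraph V) [DecidableRel G.Adj] : G.numEdges = G.edgeFinset.card := by
  rw [SimpleGraph.numEdges, Nat.card_eq_fintype_card, ← Set.toFinset_card]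
  congr 1

private lemma numEdges_cycleGraph {n : ℕ} (hn : 3 ≤ n) :
    (SimpleGraph.cycleGraph n).numEdges = n := by
  obtain ⟨m, rfl⟩ : ∃ m, n = m + 3 := ⟨n - 3, by omega⟩
  have h := SimpleGraph.sum_degrees_eq_twice_card_edges (SimpleGraph.cycleGraph (m + 3))
  have hdeg : ∀ v : Fin (m + 3), (SimpleGraph.cycleGraph (m + 3)).degree v = 2 :=
    fun v => SimpleGraph.cycleGraph_degree_three_le
  rw [Finset.sum_congr rfl (fun v _ => hdeg v), Finset.sum_const, Finset.card_univ,
    Fintype.card_fin, smul_eq_mul] at h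
  rw [numEdges_eq_card_edgeFinset]
  omega

private lemma numEdges_iso {V W : Type*} {G : SimpleGraph V} {H : SimpleGraph W}
    (f : G ≃g H) : G.numEdges = H.numEdges :=
  Nat.card_congr f.mapEdgeSet
private lemma iso_of_spanning_cycle {V : Type*} [Fintype V] {G : SimpleGraph V} {x0 : V}
    {c : G.Walk x0 x0} (hc : c.IsCycle) (hlen : c.length = Fintype.card V)
    (hedge : ∀ e ∈ G.edgeSet, e ∈ c.edges) :
    Nonempty (G ≃g cycleGraph (Fintype.card V)) := by
  classical
  have hn3 : 3 ≤ Fintype.card V := hlen ▸ hc.three_le_length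
  haveI : NeZero (Fintype.card V) := ⟨by omega⟩
  set n := Fintype.card V with hn
  have hlt : ∀ i : Fin n, (i : ℕ) < c.length := fun i => by rw [hlen]; exact i.isLt
  set g : Fin n → V := fun i => c.getVert i.val with hg
  have ginj : Function.Injective g := fun i j hij =>
    Fin.ext (cycle_getVert_injOn hc (hlt i) (hlt j) hij)
  have gbij : Function.Bijective g :=
    (Fintype.bijective_iff_injective_and_card g).2 ⟨ginj, by simp [hn]⟩
  have hone : ((1 : Fin n) : ℕ) = 1 := by
    rw [Fin.val_one']; exact Nat.mod_eq_of_lt (by omega)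
  have gsucc : ∀ i : Fin n, c.getVert (i.val + 1) = g (i + 1) := by
    intro i
    rcases Nat.lt_or_ge (i.val + 1) n with h | h
    · have : ((i + 1 : Fin n) : ℕ) = i.val + 1 := by
        rw [Fin.val_add, hone]
        exact Nat.mod_eq_of_lt h
      rw [hg]
      simp only [this]
    · have hi : i.val = n - 1 := by omega
      have : (i + 1 : Fin n) = 0 := by
        apply Fin.ext
        rw [Fin.val_add, hone, hi, Fin.val_zero,
          Nat.sub_add_cancel (by omega), Nat.mod_self]
      rw [this, hg]
      simp only [Fin.val_zero, getVert_zero]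
      have : i.val + 1 = c.length := by omega
      rw [this, getVert_length]
  have key : ∀ i j : Fin n, G.Adj (g i) (g j) ↔ (cycleGraph n).Adj i j := by
    intro i j
    constructor
    · intro hadj
      have he : s(g i, g j) ∈ c.edges := hedge _ hadj
      obtain ⟨m, hmlt, hme⟩ := mem_edges_exists c he
      have hmn : m < n := by omega
      have h1 : c.getVert m = g ⟨m, hmn⟩ := rfl
      have h2 : c.getVert (m + 1) = g (⟨m, hmn⟩ + 1) := gsucc ⟨m, hmn⟩
      rw [h1, h2, Sym2.eq_iff] at hme
      rw [cycleGraph_adj']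
      rcases hme with ⟨hia, hja⟩ | ⟨hia, hja⟩
      · rw [ginj hia, ginj hja]
        right
        rw [add_sub_cancel_left]
        exact hone
      · rw [ginj hia, ginj hja]
        left
        rw [add_sub_cancel_left]
        exact hone
    · intro hadj
      rw [cycleGraph_adj'] at hadj
      have hstep : ∀ a : Fin n, G.Adj (g a) (g (a + 1)) := by
        intro a
        rw [← gsucc a]
        exact c.adj_getVert_succ (hlt a)
      rcases hadj with h1 | h1
      · have : i = j + 1 := by
          have : i - j = 1 := Fin.ext (by rw [h1, hone])
          rw [← this]; exact (add_sub_cancel j i).symm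
        rw [this]
        exact (hstep j).symm
      · have : j = i + 1 := by
          have : j - i = 1 := Fin.ext (by rw [h1, hone])
          rw [← this]; exact (add_sub_cancel i j).symm
        rw [this]
        exact hstep i
  exact ⟨(RelIso.mk (Equiv.ofBijective g gbij) (key _ _)).symm⟩

end Helpers

/-- for a Hamiltonian G of order n ≥ 3 and 1 ≤ k ≤ n,
crx_k(G) = e(G) iff G is the cycle C_n. -/
theorem crx_k_eq_numEdges_iff_cycle_of_hamiltonian
    {V : Type*} [Fintype V] (G : SimpleGraph V) (hn : 3 ≤ Fintype.card V)
    (hG : G.IsHamiltonianGraph) (k : ℕ) (hk1 : 1 ≤ k) (hkn : k ≤ Fintype.card V) :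
    G.crx k = G.numEdges ↔ Nonempty (G ≃g SimpleGraph.cycleGraph (Fintype.card V)) := by
  classical
  obtain ⟨x0, c, hc, hall⟩ := hG
  have hndt : c.support.tail.Nodup := hc.support_nodup
  have htlen : c.support.tail.length = c.length := by
    rw [List.length_tail, Walk.length_support]; omega
  have hlen_le : c.length ≤ Fintype.card V := by
    calc c.length = c.support.tail.length := htlen.symm
      _ = c.support.tail.toFinset.card := (List.toFinset_card_of_nodup hndt).symm
      _ ≤ Fintype.card V := Finset.card_le_univ _
  have hlen : c.length = Fintype.card V := le_antisymm hlen_le (tail_covers_length hc hall)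
  have hce_nd : c.edges.Nodup := hc.edges_nodup
  have hce_card : c.edges.toFinset.card = Fintype.card V := by
    rw [List.toFinset_card_of_nodup hce_nd, Walk.length_edges, hlen]
  have hce_sub : c.edges.toFinset ⊆ G.edgeFinset := by
    intro e he
    rw [List.mem_toFinset] at he
    rw [mem_edgeFinset]
    exact c.edges_subset_edgeSet he
  have hne_ge : Fintype.card V ≤ G.numEdges := by
    rw [numEdges_eq_card_edgeFinset, ← hce_card]
    exact Finset.card_le_card hce_sub
  -- the fully injective colouring, giving `numEdges` membership
  have hcardE : Fintype.card G.edgeSet = G.numEdges := Nat.card_eq_fintype_card.symm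
  have hmem_full : G.numEdges ∈
      {r | ∃ φ : Sym2 V → ℕ, (∀ e ∈ G.edgeSet, φ e < r) ∧ G.IsRainbowCycleColoring k φ} := by
    let eqv : G.edgeSet ≃ Fin G.numEdges := Fintype.equivFinOfCardEq hcardE
    refine ⟨fun e => if h : e ∈ G.edgeSet then (eqv ⟨e, h⟩ : ℕ) else 0, ?_, ?_⟩
    · intro e he
      simp only [dif_pos he]
      exact (eqv ⟨e, he⟩).isLt
    · intro S _
      refine ⟨x0, c, hc, fun v _ => hall v, ?_⟩
      refine List.Nodup.map_on ?_ hce_nd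
      intro a ha b hb hab
      have haE := c.edges_subset_edgeSet ha
      have hbE := c.edges_subset_edgeSet hb
      simp only [dif_pos haE, dif_pos hbE] at hab
      have := eqv.injective (Fin.val_injective hab)
      exact Subtype.mk_eq_mk.1 this
  constructor
  · intro hcrx
    -- the cycle-position colouring shows crx ≤ n
    have hmem_c : (Fintype.card V) ∈
        {r | ∃ φ : Sym2 V → ℕ, (∀ e ∈ G.edgeSet, φ e < r) ∧ G.IsRainbowCycleColoring k φ} := by
      refine ⟨fun e => if e ∈ c.edges then c.edges.idxOf e else 0, ?_, ?_⟩
      · intro e _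
        by_cases h : e ∈ c.edges
        · simp only [if_pos h]
          calc c.edges.idxOf e < c.edges.length := List.idxOf_lt_length_iff.2 h
            _ = Fintype.card V := by rw [Walk.length_edges, hlen]
        · simp only [if_neg h]
          omega
      · intro S _
        refine ⟨x0, c, hc, fun v _ => hall v, ?_⟩
        refine List.Nodup.map_on ?_ hce_nd
        intro a ha b hb hab
        simp only [if_pos ha, if_pos hb] at hab
        exact (List.idxOf_inj ha).1 hab
    have hle : G.crx k ≤ Fintype.card V := Nat.sInf_le hmem_c
    have hEq : G.numEdges = Fintype.card V :=
      le_antisymm (by rw [← hcrx]; exact hle) hne_ge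
    have hfin : c.edges.toFinset = G.edgeFinset :=
      Finset.eq_of_subset_of_card_le hce_sub
        (by rw [hce_card, ← hEq, numEdges_eq_card_edgeFinset])
    have hedge : ∀ e ∈ G.edgeSet, e ∈ c.edges := by
      intro e he
      rw [← List.mem_toFinset, hfin, mem_edgeFinset]
      exact he
    exact iso_of_spanning_cycle hc hlen hedge
  · rintro ⟨f⟩
    have hnum : G.numEdges = Fintype.card V :=
      (numEdges_iso f).trans (numEdges_cycleGraph hn)
    apply le_antisymm (Nat.sInf_le hmem_full)
    apply le_csInf ⟨G.numEdges, hmem_full⟩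
    rintro r ⟨φ, hb, hrb⟩
    obtain ⟨S, -, hSc⟩ := Finset.exists_subset_card_eq (s := Finset.univ) (n := k) (by simpa using hkn)
    obtain ⟨u, c', hc', -, hnd⟩ := hrb S hSc
    -- the mapped cycle in cycleGraph has length ≥ n
    have hmap : (c'.map f.toHom).IsCycle := hc'.map f.injective
    have hlen' : Fintype.card V ≤ c'.length := by
      have := cycleGraph_cycle_length hn hmap
      rwa [Walk.length_map] at this
    have hsub : (c'.edges.map φ).toFinset ⊆ Finset.range r := by
      intro a ha
      rw [List.mem_toFinset] at ha
      obtain ⟨e, he, rfl⟩ := List.mem_map.1 ha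
      rw [Finset.mem_range]
      exact hb e (c'.edges_subset_edgeSet he)
    calc G.numEdges = Fintype.card V := hnum
      _ ≤ c'.length := hlen'
      _ = (c'.edges.map φ).length := by rw [List.length_map, Walk.length_edges]
      _ = (c'.edges.map φ).toFinset.card := (List.toFinset_card_of_nodup hnd).symm
      _ ≤ (Finset.range r).card := Finset.card_le_card hsub
      _ = r := Finset.card_range r
end

section
/- If P10 is the Petersen graph, then crx_9(P10) = e(P10) = 15; that is, in any edge-colouring of the Petersen graph with fewer than 15 colours, there exist 9 vertices not all contained in any rainbow cycle. -/
open SimpleGraph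

/-- The Petersen graph: vertices are the 2-subsets of a 5-set, adjacent iff disjoint. -/
def petersenGraph : SimpleGraph {s : Finset (Fin 5) // s.card = 2} :=
  SimpleGraph.fromRel (fun a b => Disjoint a.1 b.1)

abbrev PV := {s : Finset (Fin 5) // s.card = 2}

instance : DecidableRel petersenGraph.Adj :=
  fun a b => inferInstanceAs (Decidable (a ≠ b ∧ (Disjoint a.1 b.1 ∨ Disjoint b.1 a.1)))

def adjB : Nat → Nat → Bool
  | 0, 7 => true
  | 0, 8 => true
  | 0, 9 => true
  | 1, 5 => true
  | 1, 6 => true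
  | 1, 9 => true
  | 2, 4 => true
  | 2, 6 => true
  | 2, 8 => true
  | 3, 4 => true
  | 3, 5 => true
  | 3, 7 => true
  | 4, 2 => true
  | 4, 3 => true
  | 4, 9 => true
  | 5, 1 => true
  | 5, 3 => true
  | 5, 8 => true
  | 6, 1 => true
  | 6, 2 => true
  | 6, 7 => true
  | 7, 0 => true
  | 7, 3 => true
  | 7, 6 => true
  | 8, 0 => true
  | 8, 2 => true
  | 8, 5 => true
  | 9, 0 => true
  | 9, 1 => true
  | 9, 4 => true
  | _, _ => false

def P' : SimpleGraph (Fin 10) where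
  Adj i j := adjB i.val j.val = true
  symm := ⟨fun i j h => by revert h; revert i j; decide⟩
  loopless := ⟨fun i h => by revert h; revert i; decide⟩

instance : DecidableRel P'.Adj := fun a b => inferInstanceAs (Decidable (adjB a.val b.val = true))

def listV : List PV := [(⟨{0, 1}, by decide⟩ : PV), (⟨{0, 2}, by decide⟩ : PV), (⟨{0, 3}, by decide⟩ : PV), (⟨{0, 4}, by decide⟩ : PV), (⟨{1, 2}, by decide⟩ : PV), (⟨{1, 3}, by decide⟩ : PV), (⟨{1, 4}, by decide⟩ : PV), (⟨{2, 3}, by decide⟩ : PV), (⟨{2, 4}, by decide⟩ : PV), (⟨{3, 4}, by decide⟩ : PV)]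
def decV : Fin 10 → PV := ![⟨{0, 1}, by decide⟩, ⟨{0, 2}, by decide⟩, ⟨{0, 3}, by decide⟩, ⟨{0, 4}, by decide⟩, ⟨{1, 2}, by decide⟩, ⟨{1, 3}, by decide⟩, ⟨{1, 4}, by decide⟩, ⟨{2, 3}, by decide⟩, ⟨{2, 4}, by decide⟩, ⟨{3, 4}, by decide⟩]

lemma memListV : ∀ v : PV, v ∈ listV := by decide

def encV : PV → Fin 10 := fun v => ⟨listV.idxOf v, by
  have h := List.idxOf_lt_length_iff.2 (memListV v); simpa [listV] using h⟩

lemma decV_encV : ∀ v : PV, decV (encV v) = v := by decide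
lemma encV_decV : ∀ i : Fin 10, encV (decV i) = i := by decide
lemma adj_iff : ∀ a b : PV, P'.Adj (encV a) (encV b) ↔ petersenGraph.Adj a b := by decide

def isoP : petersenGraph ≃g P' :=
  ⟨⟨encV, decV, decV_encV, encV_decV⟩, @fun a b => adj_iff a b⟩
def ham0 : P'.Walk 1 1 :=
  Walk.cons (show P'.Adj 1 5 by decide) (Walk.cons (show P'.Adj 5 8 by decide) (Walk.cons (show P'.Adj 8 2 by decide) (Walk.cons (show P'.Adj 2 6 by decide) (Walk.cons (show P'.Adj 6 7 by decide) (Walk.cons (show P'.Adj 7 3 by decide) (Walk.cons (show P'.Adj 3 4 by decide) (Walk.cons (show P'.Adj 4 9 by decide) (Walk.cons (show P'.Adj 9 1 by decide) (Walk.nil)))))))))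

def ham1 : P'.Walk 0 0 :=
  Walk.cons (show P'.Adj 0 7 by decide) (Walk.cons (show P'.Adj 7 6 by decide) (Walk.cons (show P'.Adj 6 2 by decide) (Walk.cons (show P'.Adj 2 8 by decide) (Walk.cons (show P'.Adj 8 5 by decide) (Walk.cons (show P'.Adj 5 3 by decide) (Walk.cons (show P'.Adj 3 4 by decide) (Walk.cons (show P'.Adj 4 9 by decide) (Walk.cons (show P'.Adj 9 0 by decide) (Walk.nil)))))))))

def ham2 : P'.Walk 0 0 :=
  Walk.cons (show P'.Adj 0 7 by decide) (Walk.cons (show P'.Adj 7 6 by decide) (Walk.cons (show P'.Adj 6 1 by decide) (Walk.cons (show P'.Adj 1 9 by decide) (Walk.cons (show P'.Adj 9 4 by decide) (Walk.cons (show P'.Adj 4 3 by decide) (Walk.cons (show P'.Adj 3 5 by decide) (Walk.cons (show P'.Adj 5 8 by decide) (Walk.cons (show P'.Adj 8 0 by decide) (Walk.nil)))))))))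

def ham3 : P'.Walk 0 0 :=
  Walk.cons (show P'.Adj 0 7 by decide) (Walk.cons (show P'.Adj 7 6 by decide) (Walk.cons (show P'.Adj 6 1 by decide) (Walk.cons (show P'.Adj 1 5 by decide) (Walk.cons (show P'.Adj 5 8 by decide) (Walk.cons (show P'.Adj 8 2 by decide) (Walk.cons (show P'.Adj 2 4 by decide) (Walk.cons (show P'.Adj 4 9 by decide) (Walk.cons (show P'.Adj 9 0 by decide) (Walk.nil)))))))))

def ham4 : P'.Walk 0 0 :=
  Walk.cons (show P'.Adj 0 7 by decide) (Walk.cons (show P'.Adj 7 3 by decide) (Walk.cons (show P'.Adj 3 5 by decide) (Walk.cons (show P'.Adj 5 8 by decide) (Walk.cons (show P'.Adj 8 2 by decide) (Walk.cons (show P'.Adj 2 6 by decide) (Walk.cons (show P'.Adj 6 1 by decide) (Walk.cons (show P'.Adj 1 9 by decide) (Walk.cons (show P'.Adj 9 0 by decide) (Walk.nil)))))))))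

def ham5 : P'.Walk 0 0 :=
  Walk.cons (show P'.Adj 0 7 by decide) (Walk.cons (show P'.Adj 7 3 by decide) (Walk.cons (show P'.Adj 3 4 by decide) (Walk.cons (show P'.Adj 4 9 by decide) (Walk.cons (show P'.Adj 9 1 by decide) (Walk.cons (show P'.Adj 1 6 by decide) (Walk.cons (show P'.Adj 6 2 by decide) (Walk.cons (show P'.Adj 2 8 by decide) (Walk.cons (show P'.Adj 8 0 by decide) (Walk.nil)))))))))

def ham6 : P'.Walk 0 0 :=
  Walk.cons (show P'.Adj 0 7 by decide) (Walk.cons (show P'.Adj 7 3 by decide) (Walk.cons (show P'.Adj 3 4 by decide) (Walk.cons (show P'.Adj 4 2 by decide) (Walk.cons (show P'.Adj 2 8 by decide) (Walk.cons (show P'.Adj 8 5 by decide) (Walk.cons (show P'.Adj 5 1 by decide) (Walk.cons (show P'.Adj 1 9 by decide) (Walk.cons (show P'.Adj 9 0 by decide) (Walk.nil)))))))))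

def ham7 : P'.Walk 0 0 :=
  Walk.cons (show P'.Adj 0 8 by decide) (Walk.cons (show P'.Adj 8 2 by decide) (Walk.cons (show P'.Adj 2 6 by decide) (Walk.cons (show P'.Adj 6 1 by decide) (Walk.cons (show P'.Adj 1 5 by decide) (Walk.cons (show P'.Adj 5 3 by decide) (Walk.cons (show P'.Adj 3 4 by decide) (Walk.cons (show P'.Adj 4 9 by decide) (Walk.cons (show P'.Adj 9 0 by decide) (Walk.nil)))))))))

def ham8 : P'.Walk 0 0 :=
  Walk.cons (show P'.Adj 0 7 by decide) (Walk.cons (show P'.Adj 7 3 by decide) (Walk.cons (show P'.Adj 3 5 by decide) (Walk.cons (show P'.Adj 5 1 by decide) (Walk.cons (show P'.Adj 1 6 by decide) (Walk.cons (show P'.Adj 6 2 by decide) (Walk.cons (show P'.Adj 2 4 by decide) (Walk.cons (show P'.Adj 4 9 by decide) (Walk.cons (show P'.Adj 9 0 by decide) (Walk.nil)))))))))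

def ham9 : P'.Walk 0 0 :=
  Walk.cons (show P'.Adj 0 7 by decide) (Walk.cons (show P'.Adj 7 3 by decide) (Walk.cons (show P'.Adj 3 4 by decide) (Walk.cons (show P'.Adj 4 2 by decide) (Walk.cons (show P'.Adj 2 6 by decide) (Walk.cons (show P'.Adj 6 1 by decide) (Walk.cons (show P'.Adj 1 5 by decide) (Walk.cons (show P'.Adj 5 8 by decide) (Walk.cons (show P'.Adj 8 0 by decide) (Walk.nil)))))))))


lemma mkCycle {u : Fin 10} {c : P'.Walk u u} (h1 : c.edges.Nodup)
    (h2 : c.support.tail.Nodup) (h3 : c.length ≠ 0) : c.IsCycle := by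
  rw [Walk.isCycle_def, Walk.isTrail_def]
  exact ⟨h1, fun hn => h3 (by rw [hn]; rfl), h2⟩

lemma hamAll : ∀ i : Fin 10, ∃ u, ∃ c : P'.Walk u u,
    c.IsCycle ∧ ∀ w, w ≠ i → w ∈ c.support := by
  intro i
  fin_cases i
  · exact ⟨_, ham0, mkCycle (by decide) (by decide) (by decide), by decide⟩
  · exact ⟨_, ham1, mkCycle (by decide) (by decide) (by decide), by decide⟩
  · exact ⟨_, ham2, mkCycle (by decide) (by decide) (by decide), by decide⟩
  · exact ⟨_, ham3, mkCycle (by decide) (by decide) (by decide), by decide⟩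
  · exact ⟨_, ham4, mkCycle (by decide) (by decide) (by decide), by decide⟩
  · exact ⟨_, ham5, mkCycle (by decide) (by decide) (by decide), by decide⟩
  · exact ⟨_, ham6, mkCycle (by decide) (by decide) (by decide), by decide⟩
  · exact ⟨_, ham7, mkCycle (by decide) (by decide) (by decide), by decide⟩
  · exact ⟨_, ham8, mkCycle (by decide) (by decide) (by decide), by decide⟩
  · exact ⟨_, ham9, mkCycle (by decide) (by decide) (by decide), by decide⟩

def nbrs : Fin 10 → List (Fin 10) := ![[7,8,9],[5,6,9],[4,6,8],[4,5,7],[2,3,9],[1,3,8],[1,2,7],[0,3,6],[0,2,5],[0,1,4]]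

lemma mem_nbrs : ∀ x w : Fin 10, P'.Adj x w → w ∈ nbrs x := by decide

def srch (t : Fin 10) : Fin 10 → List (Fin 10) → Nat → Bool
  | x, _, 0 => adjB x.val t.val
  | x, vis, n+1 => (nbrs x).any (fun w => if w ∈ vis then false else srch t w (w :: vis) n)

set_option maxHeartbeats 2000000 in
lemma srch_false : ∀ w : Fin 10, P'.Adj 0 w → srch 0 w [0, w] 8 = false := by decide

set_option maxHeartbeats 3000000 in
lemma nbr2 : ∀ w v a b x : Fin 10, P'.Adj w v → P'.Adj w a → P'.Adj w b → P'.Adj w x →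
    a ≠ b → a ≠ v → b ≠ v → x ≠ v → (x = a ∨ x = b) := by decide

set_option synthInstance.maxSize 1024 in
set_option maxRecDepth 100000 in
set_option maxHeartbeats 3000000 in
lemma cover : ∀ e ∈ P'.edgeSet, ∀ f ∈ P'.edgeSet, e ≠ f → ∃ v : Fin 10,
    (∀ y ∈ e, ¬ y = v) ∧ (∀ y ∈ f, ¬ y = v) ∧
    (∃ y ∈ e, P'.Adj y v) ∧ (∃ y ∈ f, P'.Adj y v) := by decide

open SimpleGraph.Walk in
lemma exists_last_edge_s6 {V' : Type*} {G : SimpleGraph V'} {a w : V'} (q : G.Walk a w)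
    (hq : q.length ≠ 0) : ∃ b, s(b, w) ∈ q.edges := by
  induction q with
  | nil => exact absurd rfl hq
  | @cons u x v h q' ih =>
    cases q' with
    | nil => exact ⟨u, by simp⟩
    | cons h' q'' =>
      obtain ⟨b, hb⟩ := ih (by simp)
      exact ⟨b, by rw [Walk.edges_cons]; exact List.mem_cons_of_mem _ hb⟩

open SimpleGraph.Walk in
lemma two_edges {u w : Fin 10} {c : P'.Walk u u} (hc : c.IsCycle) (hw : w ∈ c.support) :
    ∃ a b, a ≠ b ∧ s(w, a) ∈ c.edges ∧ s(w, b) ∈ c.edges := by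
  have hd : (c.rotate w hw).IsCycle := hc.rotate hw
  have h3 : 3 ≤ (c.rotate w hw).length := hd.three_le_length
  suffices h : ∃ a b, a ≠ b ∧ s(w, a) ∈ (c.rotate w hw).edges ∧ s(w, b) ∈ (c.rotate w hw).edges by
    obtain ⟨a, b, hab, ha, hb⟩ := h
    exact ⟨a, b, hab, ((c.rotate_edges w hw).mem_iff).1 ha, ((c.rotate_edges w hw).mem_iff).1 hb⟩
  generalize c.rotate w hw = d at hd h3 ⊢
  cases d with
  | nil => simp at h3
  | @cons _ a _ h q =>
    have hql : q.length ≠ 0 := by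
      simp only [length_cons] at h3; omega
    obtain ⟨b, hb⟩ := exists_last_edge_s6 q hql
    have hnodup : (Walk.cons h q).edges.Nodup := ((Walk.isCycle_def _).1 hd).1.edges_nodup
    rw [edges_cons, List.nodup_cons] at hnodup
    refine ⟨a, b, ?_, by simp, ?_⟩
    · rintro rfl
      exact hnodup.1 (by rwa [Sym2.eq_swap] at hb)
    · rw [edges_cons]
      exact List.mem_cons_of_mem _ (by rwa [Sym2.eq_swap] at hb)

lemma forced {u : Fin 10} {c : P'.Walk u u} (hc : c.IsCycle) {v w x : Fin 10}
    (hv : v ∉ c.support) (hw : w ∈ c.support) (hwv : P'.Adj w v) (hwx : P'.Adj w x)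
    (hxv : x ≠ v) : s(w, x) ∈ c.edges := by
  obtain ⟨a, b, hab, ha, hb⟩ := two_edges hc hw
  have haS : a ∈ c.support := c.snd_mem_support_of_mem_edges ha
  have hbS : b ∈ c.support := c.snd_mem_support_of_mem_edges hb
  have hwa : P'.Adj w a := c.edges_subset_edgeSet ha
  have hwb : P'.Adj w b := c.edges_subset_edgeSet hb
  rcases nbr2 w v a b x hwv hwa hwb hwx hab (fun h => hv (h ▸ haS)) (fun h => hv (h ▸ hbS)) hxv with
    rfl | rfl
  · exact ha
  · exact hb

lemma edge_forced (e : Sym2 (Fin 10)) (he : e ∈ P'.edgeSet) {u v : Fin 10} {c : P'.Walk u u}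
    (hc : c.IsCycle) (hv : v ∉ c.support) (hcov : ∀ w : Fin 10, w ≠ v → w ∈ c.support)
    (hne : ∀ y ∈ e, ¬ y = v) (hadj : ∃ y ∈ e, P'.Adj y v) : e ∈ c.edges := by
  induction e using Sym2.ind with
  | _ α β =>
    have hαβ : P'.Adj α β := he
    obtain ⟨y, hy, hyv⟩ := hadj
    rcases Sym2.mem_iff.1 hy with rfl | rfl
    · exact forced hc hv (hcov y (hne y (Sym2.mem_mk_left _ _))) hyv hαβ
        (hne β (Sym2.mem_mk_right _ _))
    · rw [Sym2.eq_swap]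
      exact forced hc hv (hcov y (hne y (Sym2.mem_mk_right _ _))) hyv hαβ.symm
        (hne α (Sym2.mem_mk_left _ _))

open SimpleGraph.Walk in
lemma srch_sound {x t : Fin 10} (q : P'.Walk x t) (hp : q.IsPath) (hl : q.length ≠ 0) :
    ∀ vis : List (Fin 10), (∀ y ∈ vis, y ∈ q.support → y = x ∨ y = t) →
      srch t x vis (q.length - 1) = true := by
  induction q with
  | nil => exact absurd rfl hl
  | @cons u w tE h q' ih =>
    intro vis hvis
    cases q' with
    | nil =>
      show srch _ u vis 0 = true
      exact h
    | @cons _ w' _ h' q'' =>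
      have hp' : (Walk.cons h' q'').IsPath := hp.of_cons
      have hune : u ∉ (Walk.cons h' q'').support := ((Walk.cons_isPath_iff _ _).1 hp).2
      have hw0 : w ≠ tE := by
        rintro rfl
        have h0 := q''.end_mem_support
        have := (Walk.isPath_def _).1 hp'
        rw [Walk.support_cons, List.nodup_cons] at this
        exact this.1 h0
      have hlen : (Walk.cons h (Walk.cons h' q'')).length - 1 = q''.length + 1 := by
        simp [Walk.length_cons]
      rw [hlen]
      show (nbrs u).any _ = true
      rw [List.any_eq_true]
      refine ⟨w, mem_nbrs u w h, ?_⟩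
      have hwvis : w ∉ vis := by
        intro hwv
        rcases hvis w hwv (by
          rw [Walk.support_cons]
          exact List.mem_cons_of_mem _ (Walk.start_mem_support _)) with rfl | rfl
        · exact hune (Walk.start_mem_support _)
        · exact hw0 rfl
      rw [if_neg hwvis]
      have hlen2 : q''.length + 1 = (Walk.cons h' q'').length - 1 + 1 := by
        simp [Walk.length_cons]
      have := ih hp' (by simp [Walk.length_cons]) (w :: vis) ?_
      · have hq'l : (Walk.cons h' q'').length - 1 = q''.length := by simp [Walk.length_cons]
        rw [hq'l] at this
        exact this
      · intro y hy hysupp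
        rcases List.mem_cons.1 hy with rfl | hyv
        · exact Or.inl rfl
        · rcases hvis y hyv (by rw [Walk.support_cons]; exact List.mem_cons_of_mem _ hysupp) with
            rfl | rfl
          · exact absurd hysupp hune
          · exact Or.inr rfl

open SimpleGraph.Walk in
lemma no_c10 (d : P'.Walk 0 0) (hd : d.IsCycle) (hcov : ∀ w : Fin 10, w ∈ d.support.tail) :
    False := by
  cases d with
  | nil => exact hd.ne_nil rfl
  | @cons _ w _ h q =>
    have hq : q.IsPath := by
      rw [Walk.isPath_def]
      have := ((Walk.isCycle_def _).1 hd).2.2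
      rwa [Walk.support_cons, List.tail_cons] at this
    have hcov' : ∀ w' : Fin 10, w' ∈ q.support := by
      intro w'
      have := hcov w'
      rwa [Walk.support_cons, List.tail_cons] at this
    have hnodup : q.support.Nodup := (Walk.isPath_def _).1 hq
    have hcard : q.support.length = 10 := by
      have h1 : q.support.toFinset.card = q.support.length := List.toFinset_card_of_nodup hnodup
      have h2 : q.support.toFinset = Finset.univ := by
        apply Finset.eq_univ_iff_forall.2
        intro w'; exact List.mem_toFinset.2 (hcov' w')
      rw [h2] at h1
      simpa using h1.symm
    have hlen : q.length = 9 := by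
      have := q.length_support
      omega
    have hs := srch_sound q hq (by omega) [0, w] ?_
    · rw [hlen] at hs
      rw [srch_false w h] at hs
      exact Bool.noConfusion hs
    · intro y hy _
      rcases List.mem_cons.1 hy with rfl | hy'
      · exact Or.inr rfl
      · rcases List.mem_cons.1 hy' with rfl | h''
        · exact Or.inl rfl
        · exact absurd h'' (List.not_mem_nil (a := y))

open SimpleGraph.Walk in
lemma not_ham (u : Fin 10) (c : P'.Walk u u) (hc : c.IsCycle)
    (hall : ∀ w : Fin 10, w ∈ c.support) : False := by
  have h0 : (0 : Fin 10) ∈ c.support := hall 0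
  have htail : ∀ w : Fin 10, w ∈ c.support.tail := by
    intro w
    have hw := hall w
    cases c with
    | nil => exact absurd rfl (hc.ne_nil)
    | cons h q =>
      rw [Walk.support_cons, List.tail_cons]
      rw [Walk.support_cons, List.mem_cons] at hw
      rcases hw with rfl | hw
      · exact q.end_mem_support
      · exact hw
  apply no_c10 (c.rotate 0 h0) (hc.rotate h0)
  intro w
  exact ((Walk.support_rotate c 0 h0).mem_iff).2 (htail w)
def edgeL : List (Sym2 PV) := [s((⟨{0,1}, by decide⟩ : PV), (⟨{2,3}, by decide⟩ : PV)), s((⟨{0,1}, by decide⟩ : PV), (⟨{2,4}, by decide⟩ : PV)), s((⟨{0,1}, by decide⟩ : PV), (⟨{3,4}, by decide⟩ : PV)), s((⟨{0,2}, by decide⟩ : PV), (⟨{1,3}, by decide⟩ : PV)), s((⟨{0,2}, by decide⟩ : PV), (⟨{1,4}, by decide⟩ : PV)), s((⟨{0,2}, by decide⟩ : PV), (⟨{3,4}, by decide⟩ : PV)), s((⟨{0,3}, by decide⟩ : PV), (⟨{1,2}, by decide⟩ : PV)), s((⟨{0,3}, by decide⟩ : PV), (⟨{1,4}, by decide⟩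 : PV)), s((⟨{0,3}, by decide⟩ : PV), (⟨{2,4}, by decide⟩ : PV)), s((⟨{0,4}, by decide⟩ : PV), (⟨{1,2}, by decide⟩ : PV)), s((⟨{0,4}, by decide⟩ : PV), (⟨{1,3}, by decide⟩ : PV)), s((⟨{0,4}, by decide⟩ : PV), (⟨{2,3}, by decide⟩ : PV)), s((⟨{1,2}, by decide⟩ : PV), (⟨{3,4}, by decide⟩ : PV)), s((⟨{1,3}, by decide⟩ : PV), (⟨{2,4}, by decide⟩ : PV)), s((⟨{1,4}, by decide⟩ : PV), (⟨{2,3}, by decide⟩ : PV))]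

lemma hom_eq : ⇑isoP.toHom = encV := rfl
lemma hom_symm_eq : ⇑isoP.symm.toHom = decV := rfl

lemma edge_mem_edgeL : ∀ e : Sym2 PV, e ∈ petersenGraph.edgeSet → e ∈ edgeL := by decide

lemma hcardPV : Fintype.card PV = 10 := by decide

lemma hcardE : petersenGraph.edgeFinset.card = 15 := by decide

lemma injEnc : Function.Injective encV := Function.LeftInverse.injective decV_encV
lemma injDec : Function.Injective decV := Function.LeftInverse.injective encV_decV

lemma mapE : ∀ e ∈ petersenGraph.edgeSet, Sym2.map encV e ∈ P'.edgeSet := by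
  intro e
  induction e using Sym2.ind with
  | _ a b =>
    intro h
    rw [Sym2.map_pair_eq]
    exact (adj_iff a b).2 h

lemma mem15 : 15 ∈ {r | ∃ φ : Sym2 PV → ℕ, (∀ e ∈ petersenGraph.edgeSet, φ e < r) ∧
    petersenGraph.IsRainbowCycleColoring 9 φ} := by
  refine ⟨fun e => edgeL.idxOf e, ?_, ?_⟩
  · intro e he
    have := List.idxOf_lt_length_iff.2 (edge_mem_edgeL e he)
    simpa [edgeL] using this
  · intro S hS
    have hex : ∃ v : PV, v ∉ S := by
      by_contra h
      push_neg at h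
      have hU : S = Finset.univ := Finset.eq_univ_iff_forall.2 h
      rw [hU, Finset.card_univ, hcardPV] at hS
      exact absurd hS (by norm_num)
    obtain ⟨v, hv⟩ := hex
    obtain ⟨u', c', hc', hcov'⟩ := hamAll (encV v)
    have hinj2 : Function.Injective ⇑isoP.symm.toHom := by
      rw [hom_symm_eq]; exact injDec
    refine ⟨_, c'.map isoP.symm.toHom, hc'.map hinj2, ?_, ?_⟩
    · intro w hw
      have hwv : encV w ≠ encV v := fun h => hv (injEnc h ▸ hw)
      have hmem := hcov' (encV w) hwv
      rw [Walk.support_map]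
      exact List.mem_map.2 ⟨encV w, hmem, by rw [hom_symm_eq]; exact decV_encV w⟩
    · have ht : (c'.map isoP.symm.toHom).edges.Nodup :=
        ((Walk.isCycle_def _).1 (hc'.map hinj2)).1.edges_nodup
      refine ht.map_on ?_
      intro x hx y hy hxy
      exact (List.idxOf_inj (edge_mem_edgeL x (Walk.edges_subset_edgeSet _ hx))).1 hxy

lemma lb : ∀ r ∈ {r | ∃ φ : Sym2 PV → ℕ, (∀ e ∈ petersenGraph.edgeSet, φ e < r) ∧
    petersenGraph.IsRainbowCycleColoring 9 φ}, 15 ≤ r := by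
  rintro r ⟨φ, hφ, hrb⟩
  by_contra hlt
  push_neg at hlt
  have hmaps : ∀ e ∈ petersenGraph.edgeFinset, φ e ∈ Finset.range r := fun e he =>
    Finset.mem_range.2 (hφ e (SimpleGraph.mem_edgeFinset.1 he))
  obtain ⟨e, he, f, hf, hef, heq⟩ := Finset.exists_ne_map_eq_of_card_lt_of_maps_to
    (by rw [Finset.card_range, hcardE]; omega) hmaps
  have he2 := SimpleGraph.mem_edgeFinset.1 he
  have hf2 := SimpleGraph.mem_edgeFinset.1 hf
  have hne' : Sym2.map encV e ≠ Sym2.map encV f := fun h => hef (Sym2.map.injective injEnc h)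
  obtain ⟨v', hv'e, hv'f, hadje, hadjf⟩ := cover _ (mapE e he2) _ (mapE f hf2) hne'
  have hcard9 : (Finset.univ.erase (decV v')).card = 9 := by
    rw [Finset.card_erase_of_mem (Finset.mem_univ _), Finset.card_univ, hcardPV]
  obtain ⟨u, c, hc, hsupp, hnod⟩ := hrb (Finset.univ.erase (decV v')) hcard9
  have hinj1 : Function.Injective ⇑isoP.toHom := by rw [hom_eq]; exact injEnc
  have hc' : (c.map isoP.toHom).IsCycle := hc.map hinj1
  have hcov : ∀ w : Fin 10, w ≠ v' → w ∈ (c.map isoP.toHom).support := by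
    intro w hw
    have hmem : decV w ∈ Finset.univ.erase (decV v') :=
      Finset.mem_erase.2 ⟨fun h => hw (injDec h), Finset.mem_univ _⟩
    have h2 := hsupp _ hmem
    rw [Walk.support_map]
    exact List.mem_map.2 ⟨decV w, h2, by rw [hom_eq]; exact encV_decV w⟩
  have hv'notin : v' ∉ (c.map isoP.toHom).support := by
    intro hmem
    exact not_ham _ (c.map isoP.toHom) hc' (fun w => by
      by_cases hwv : w = v'
      · exact hwv ▸ hmem
      · exact hcov w hwv)
  have heC := edge_forced _ (mapE e he2) hc' hv'notin hcov hv'e hadje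
  have hfC := edge_forced _ (mapE f hf2) hc' hv'notin hcov hv'f hadjf
  rw [Walk.edges_map, hom_eq] at heC hfC
  obtain ⟨g, hg, hge⟩ := List.mem_map.1 heC
  obtain ⟨g', hg', hgf⟩ := List.mem_map.1 hfC
  rw [Sym2.map.injective injEnc hge] at hg
  rw [Sym2.map.injective injEnc hgf] at hg'
  exact hef (List.inj_on_of_nodup_map hnod hg hg' heq)


/-- crx_9 of the Petersen graph equals its number of edges, namely 15. -/
theorem crx_nine_petersen :
    petersenGraph.crx 9 = petersenGraph.numEdges ∧ petersenGraph.numEdges = 15 := by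
  have hnum : petersenGraph.numEdges = 15 := by
    show Nat.card petersenGraph.edgeSet = 15
    rw [Nat.card_eq_fintype_card, ← SimpleGraph.edgeFinset_card]
    exact hcardE
  refine ⟨?_, hnum⟩
  rw [hnum]
  show sInf _ = 15
  exact le_antisymm (Nat.sInf_le mem15) (le_csInf ⟨15, mem15⟩ lb)
end

section
/- crx_1(W_n) = 3 for every n ≥ 3, where W_n is the wheel on n+1 vertices. -/
open SimpleGraph

/-- The wheel `W_n`: a centre vertex `none` joined to every vertex of the cycle `C_n`. -/
def wheelGraph (n : ℕ) : SimpleGraph (Option (Fin n)) :=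
  SimpleGraph.fromRel (fun u v =>
    u = none ∨ ∃ a b : Fin n, u = some a ∧ v = some b ∧ (SimpleGraph.cycleGraph n).Adj a b)

namespace WheelAux
variable {n : ℕ}

def f (n : ℕ) : Option (Fin n) → Option (Fin n) → ℕ
  | none, none => 0
  | none, some a => a.val % 2
  | some a, none => a.val % 2
  | some _, some _ => 2

def φ (n : ℕ) : Sym2 (Option (Fin n)) → ℕ :=
  Sym2.lift ⟨f n, fun u v => by cases u <;> cases v <;> rfl⟩

lemma adj_hub (a : Fin n) : (wheelGraph n).Adj none (some a) := by
  rw [wheelGraph, fromRel_adj]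
  exact ⟨by simp, Or.inl (Or.inl rfl)⟩

lemma adj_rim {m : ℕ} (hm : m + 1 < n) :
    (wheelGraph n).Adj (some ⟨m, by omega⟩) (some ⟨m+1, hm⟩) := by
  rw [wheelGraph, fromRel_adj]
  refine ⟨by simp [Fin.ext_iff], Or.inl (Or.inr ⟨_, _, rfl, rfl, ?_⟩)⟩
  rw [cycleGraph_adj']
  right
  simp [Fin.sub_def]
  have h1 : (n - m + (m + 1)) = n + 1 := by omega
  rw [h1, Nat.add_mod_left, Nat.mod_eq_of_lt (by omega)]

def tri {m : ℕ} (hm : m + 1 < n) : (wheelGraph n).Walk none none :=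
  .cons (adj_hub ⟨m, by omega⟩) (.cons (adj_rim hm) (.cons (adj_hub ⟨m+1, hm⟩).symm .nil))

lemma tri_isCycle {m : ℕ} (hm : m + 1 < n) : (tri hm).IsCycle := by
  simp [tri, Walk.isCycle_def, Walk.isTrail_def, Fin.ext_iff, Sym2.eq, Sym2.rel_iff',
    List.nodup_cons]

lemma tri_support {m : ℕ} (hm : m + 1 < n) :
    (tri hm).support = [none, some ⟨m, by omega⟩, some ⟨m+1, hm⟩, none] := rfl

lemma tri_rainbow {m : ℕ} (hm : m + 1 < n) : ((tri hm).edges.map (φ n)).Nodup := by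
  simp [tri, φ, f, List.nodup_cons]
  omega

end WheelAux

open WheelAux in
/-- crx_1(W_n) = 3 for n ≥ 3. -/
theorem crx_one_wheel (n : ℕ) (hn : 3 ≤ n) : (wheelGraph n).crx 1 = 3 := by
  have h3 : 3 ∈ {r | ∃ ψ : Sym2 (Option (Fin n)) → ℕ,
      (∀ e ∈ (wheelGraph n).edgeSet, ψ e < r) ∧
      (wheelGraph n).IsRainbowCycleColoring 1 ψ} := by
    refine ⟨φ n, ?_, ?_⟩
    · intro e _
      induction e using Sym2.ind with
      | _ u v =>
        show f n u v < 3
        cases u <;> cases v <;> simp [f] <;> omega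
    · intro S hS
      obtain ⟨v, rfl⟩ := Finset.card_eq_one.mp hS
      match v with
      | none =>
        exact ⟨none, tri (show 0+1 < n by omega), tri_isCycle _,
          by simp [tri_support], tri_rainbow _⟩
      | some a =>
        have hlt := a.isLt
        by_cases h : a.val + 1 < n
        · refine ⟨none, tri h, tri_isCycle _, ?_, tri_rainbow _⟩
          intro v hv
          simp only [Finset.mem_singleton] at hv; subst hv
          rw [tri_support]
          exact List.mem_cons.mpr (Or.inr (List.mem_cons.mpr (Or.inl rfl)))
        · have hm : (a.val - 1) + 1 < n := by omega
          refine ⟨none, tri hm, tri_isCycle _, ?_, tri_rainbow _⟩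
          intro v hv
          simp only [Finset.mem_singleton] at hv; subst hv
          rw [tri_support]
          have : a = ⟨a.val - 1 + 1, hm⟩ := by
            apply Fin.ext; simp; omega
          exact List.mem_cons.mpr (Or.inr (List.mem_cons.mpr (Or.inr
            (List.mem_cons.mpr (Or.inl (congrArg some this))))))
  have hlb : ∀ r ∈ {r | ∃ ψ : Sym2 (Option (Fin n)) → ℕ,
      (∀ e ∈ (wheelGraph n).edgeSet, ψ e < r) ∧
      (wheelGraph n).IsRainbowCycleColoring 1 ψ}, 3 ≤ r := by
    rintro r ⟨ψ, hψ, hr⟩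
    by_contra h
    obtain ⟨u, c, hc, -, hnd⟩ := hr {none} (by simp)
    have hlen : 3 ≤ c.edges.length := by rw [Walk.length_edges]; exact hc.three_le_length
    have hsub : (c.edges.map ψ).toFinset ⊆ Finset.range r := by
      intro x hx
      rw [List.mem_toFinset, List.mem_map] at hx
      obtain ⟨e, he, rfl⟩ := hx
      exact Finset.mem_range.mpr (hψ e (c.edges_subset_edgeSet he))
    have hcard := Finset.card_le_card hsub
    rw [List.toFinset_card_of_nodup hnd, Finset.card_range, List.length_map] at hcard
    omega
  exact le_antisymm (Nat.sInf_le h3) (le_csInf ⟨3, h3⟩ hlb)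
end

section
/- crx_2(K_n) = 3 for every n ≥ 3; that is, there exists a 3-edge-colouring of the complete graph K_n such that any two vertices lie in a rainbow triangle, and no fewer than 3 colours suffice. -/
open SimpleGraph

/-! ### Auxiliary machinery for `crx_two_complete` -/

private def col (u v : ℕ) : ℕ :=
  if min u v % 3 = 0 then max u v % 3
  else if max u v % 3 = 0 then 3 - min u v % 3 else 0

private lemma col_comm (u v : ℕ) : col u v = col v u := by
  simp [col, min_comm, max_comm]

private lemma col_lt (u v : ℕ) : col u v < 3 := by
  unfold col
  split
  · exact Nat.mod_lt _ (by norm_num)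
  · split <;> omega

private lemma col_lt_eq {u v : ℕ} (h : u < v) :
    col u v = if u % 3 = 0 then v % 3 else if v % 3 = 0 then 3 - u % 3 else 0 := by
  simp [col, min_eq_left h.le, max_eq_right h.le]

private lemma col_of {u v : ℕ} (hu : u % 3 ≠ 0) (hv : v % 3 ≠ 0) : col u v = 0 := by
  rcases min_choice u v with h1 | h1 <;> rcases max_choice u v with h2 | h2 <;>
    simp [col, h1, h2, hu, hv]

private lemma exists_wit (u v : ℕ) (h : u < v) :
    ∃ w, w ≤ max v 2 ∧ w ≠ u ∧ w ≠ v ∧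
      col u v ≠ col u w ∧ col u v ≠ col v w ∧ col u w ≠ col v w := by
  have hu3 : u % 3 = 0 ∨ u % 3 = 1 ∨ u % 3 = 2 := by omega
  have hv3 : v % 3 = 0 ∨ v % 3 = 1 ∨ v % 3 = 2 := by omega
  rcases hu3 with hu | hu | hu <;> rcases hv3 with hv | hv | hv
  · -- (0,0) w = u+1
    have e1 : col u v = 0 := by rw [col_lt_eq h]; simp [hu, hv]
    have e2 : col u (u+1) = 1 := by rw [col_lt_eq (by omega)]; simp [hu]; omega
    have e3 : col v (u+1) = 2 := by
      rw [col_comm, col_lt_eq (by omega)]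
      have : (u+1) % 3 = 1 := by omega
      simp [this, hv]
    exact ⟨u+1, by omega, by omega, by omega, by omega, by omega, by omega⟩
  · -- (0,1)
    by_cases hu0 : u = 0
    · subst hu0
      have e1 : col 0 v = 1 := by rw [col_lt_eq h]; simp [hv]
      have e2 : col 0 2 = 2 := by rw [col_lt_eq (by omega)]; simp
      have e3 : col v 2 = 0 := col_of (by omega) (by omega)
      exact ⟨2, by omega, by omega, by omega, by omega, by omega, by omega⟩
    · have hu3 : 3 ≤ u := by omega
      have hw : (u-2) % 3 = 1 := by omega
      have e1 : col u v = 1 := by rw [col_lt_eq h]; simp [hu, hv]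
      have e2 : col u (u-2) = 2 := by
        rw [col_comm, col_lt_eq (by omega)]; simp [hw, hu]
      have e3 : col v (u-2) = 0 := col_of (by omega) (by omega)
      exact ⟨u-2, by omega, by omega, by omega, by omega, by omega, by omega⟩
  · -- (0,2) w = u+1
    have e1 : col u v = 2 := by rw [col_lt_eq h]; simp [hu, hv]
    have e2 : col u (u+1) = 1 := by rw [col_lt_eq (by omega)]; simp [hu]; omega
    have e3 : col v (u+1) = 0 := col_of (by omega) (by omega)
    exact ⟨u+1, by omega, by omega, by omega, by omega, by omega, by omega⟩
  · -- (1,0) w = u-1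
    have hw : (u-1) % 3 = 0 := by omega
    have e1 : col u v = 2 := by rw [col_lt_eq h]; simp [hu, hv]
    have e2 : col u (u-1) = 1 := by
      rw [col_comm, col_lt_eq (by omega)]; simp [hw, hu]
    have e3 : col v (u-1) = 0 := by
      rw [col_comm, col_lt_eq (by omega)]; simp [hw, hv]
    exact ⟨u-1, by omega, by omega, by omega, by omega, by omega, by omega⟩
  · -- (1,1) w = v-1
    have hw : (v-1) % 3 = 0 := by omega
    have e1 : col u v = 0 := col_of (by omega) (by omega)
    have e2 : col u (v-1) = 2 := by
      rw [col_lt_eq (by omega)]; simp [hw, hu]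
    have e3 : col v (v-1) = 1 := by
      rw [col_comm, col_lt_eq (by omega)]; simp [hw, hv]
    exact ⟨v-1, by omega, by omega, by omega, by omega, by omega, by omega⟩
  · -- (1,2) w = u-1
    have hw : (u-1) % 3 = 0 := by omega
    have e1 : col u v = 0 := col_of (by omega) (by omega)
    have e2 : col u (u-1) = 1 := by
      rw [col_comm, col_lt_eq (by omega)]; simp [hw, hu]
    have e3 : col v (u-1) = 2 := by
      rw [col_comm, col_lt_eq (by omega)]; simp [hw, hv]
    exact ⟨u-1, by omega, by omega, by omega, by omega, by omega, by omega⟩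
  · -- (2,0) w = u-1
    have hw : (u-1) % 3 = 1 := by omega
    have e1 : col u v = 1 := by rw [col_lt_eq h]; simp [hu, hv]
    have e2 : col u (u-1) = 0 := col_of (by omega) (by omega)
    have e3 : col v (u-1) = 2 := by
      rw [col_comm, col_lt_eq (by omega)]; simp [hw, hv]
    exact ⟨u-1, by omega, by omega, by omega, by omega, by omega, by omega⟩
  · -- (2,1) w = u-2
    have hw : (u-2) % 3 = 0 := by omega
    have e1 : col u v = 0 := col_of (by omega) (by omega)
    have e2 : col u (u-2) = 2 := by
      rw [col_comm, col_lt_eq (by omega)]; simp [hw, hu]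
    have e3 : col v (u-2) = 1 := by
      rw [col_comm, col_lt_eq (by omega)]; simp [hw, hv]
    exact ⟨u-2, by omega, by omega, by omega, by omega, by omega, by omega⟩
  · -- (2,2) w = u+1
    have hw : (u+1) % 3 = 0 := by omega
    have e1 : col u v = 0 := col_of (by omega) (by omega)
    have e2 : col u (u+1) = 1 := by
      rw [col_lt_eq (by omega)]; simp [hw, hu]
    have e3 : col v (u+1) = 2 := by
      rw [col_comm, col_lt_eq (by omega)]; simp [hw, hv]
    exact ⟨u+1, by omega, by omega, by omega, by omega, by omega, by omega⟩

private lemma tri_cycle {V : Type*} {G : SimpleGraph V} {u v w : V}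
    (h1 : G.Adj u v) (h2 : G.Adj v w) (h3 : G.Adj w u) :
    (Walk.cons h1 (Walk.cons h2 (Walk.cons h3 Walk.nil))).IsCycle := by
  have := h1.ne
  have := h2.ne
  have := h3.ne
  rw [Walk.isCycle_def]
  refine ⟨⟨?_⟩, by simp, ?_⟩
  · simp [Sym2.eq, Sym2.rel_iff']
    aesop
  · simp
    aesop

/-- The 3-colouring of `K n` as a map on `Sym2 (Fin n)`. -/
private def phi (n : ℕ) : Sym2 (Fin n) → ℕ :=
  Sym2.lift ⟨fun i j => col (i : ℕ) (j : ℕ), fun _ _ => col_comm _ _⟩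

private lemma phi_mk {n : ℕ} (u v : Fin n) : phi n s(u, v) = col (u : ℕ) (v : ℕ) := rfl

private lemma rainbow (n : ℕ) (hn : 3 ≤ n) :
    (completeGraph (Fin n)).IsRainbowCycleColoring 2 (phi n) := by
  have key : ∀ u v : Fin n, (u : ℕ) < (v : ℕ) →
      ∃ (x : Fin n) (c : (completeGraph (Fin n)).Walk x x),
        c.IsCycle ∧ (u ∈ c.support ∧ v ∈ c.support) ∧ (c.edges.map (phi n)).Nodup := by
    intro u v huv
    obtain ⟨w0, hwle, hwu, hwv, d1, d2, d3⟩ := exists_wit (u : ℕ) (v : ℕ) huv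
    have hw0 : w0 < n := lt_of_le_of_lt hwle (by
      rcases max_cases (v : ℕ) 2 with ⟨h1, _⟩ | ⟨h1, _⟩ <;> omega)
    let w : Fin n := ⟨w0, hw0⟩
    have hwcoe : (w : ℕ) = w0 := rfl
    have huvne : u ≠ v := fun h => by simp [h] at huv
    have hwune : w ≠ u := fun h => hwu (by rw [← hwcoe, h])
    have hwvne : w ≠ v := fun h => hwv (by rw [← hwcoe, h])
    have h1 : (completeGraph (Fin n)).Adj u v := huvne
    have h2 : (completeGraph (Fin n)).Adj v w := fun h => hwvne h.symm
    have h3 : (completeGraph (Fin n)).Adj w u := hwune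
    have hx1 : phi n s(u, v) ≠ phi n s(v, w) := by
      rw [phi_mk, phi_mk, hwcoe]; exact d2
    have hx2 : phi n s(u, v) ≠ phi n s(w, u) := by
      rw [phi_mk, phi_mk, hwcoe, col_comm w0]; exact d1
    have hx3 : phi n s(v, w) ≠ phi n s(w, u) := by
      rw [phi_mk, phi_mk, hwcoe, col_comm w0 (u : ℕ)]
      exact fun hh => d3 hh.symm
    refine ⟨u, Walk.cons h1 (Walk.cons h2 (Walk.cons h3 Walk.nil)),
      tri_cycle h1 h2 h3, by simp, ?_⟩
    simp only [Walk.edges_cons, Walk.edges_nil, List.map_cons, List.map_nil]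
    rw [List.nodup_cons, List.nodup_cons]
    refine ⟨?_, ?_, List.nodup_singleton _⟩
    · simp [hx1, hx2]
    · simp [hx3]
  intro S hS
  obtain ⟨u, v, huv, rfl⟩ := Finset.card_eq_two.mp hS
  rcases lt_trichotomy (u : ℕ) (v : ℕ) with h | h | h
  · obtain ⟨x, c, hc, ⟨hu, hv⟩, hnd⟩ := key u v h
    exact ⟨x, c, hc, by simp_all, hnd⟩
  · exact absurd (Fin.ext h) huv
  · obtain ⟨x, c, hc, ⟨hu, hv⟩, hnd⟩ := key v u h
    exact ⟨x, c, hc, by simp_all, hnd⟩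

private lemma crx_lower (n : ℕ) (hn : 3 ≤ n) (r : ℕ) (φ : Sym2 (Fin n) → ℕ)
    (hb : ∀ e ∈ (completeGraph (Fin n)).edgeSet, φ e < r)
    (hr : (completeGraph (Fin n)).IsRainbowCycleColoring 2 φ) : 3 ≤ r := by
  let f0 : Fin n := ⟨0, by omega⟩
  let f1 : Fin n := ⟨1, by omega⟩
  have h01 : f0 ≠ f1 := by
    intro h
    exact absurd (congrArg Fin.val h) (by simp [f0, f1])
  obtain ⟨u, c, hc, -, hnd⟩ := hr {f0, f1}
    (by rw [Finset.card_insert_of_notMem (by simp [h01])]; simp)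
  have hlen : 3 ≤ c.edges.length := by rw [SimpleGraph.Walk.length_edges]; exact hc.three_le_length
  have hsub : (c.edges.map φ).toFinset ⊆ Finset.range r := by
    intro x hx
    simp only [List.mem_toFinset, List.mem_map] at hx
    obtain ⟨e, he, rfl⟩ := hx
    exact Finset.mem_range.mpr (hb e (c.edges_subset_edgeSet he))
  calc 3 ≤ (c.edges.map φ).length := by simpa using hlen
    _ = (c.edges.map φ).toFinset.card := (List.toFinset_card_of_nodup hnd).symm
    _ ≤ (Finset.range r).card := Finset.card_le_card hsub
    _ = r := Finset.card_range r

/-- crx_2(K_n) = 3 for n ≥ 3. -/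
theorem crx_two_complete (n : ℕ) (hn : 3 ≤ n) :
    (completeGraph (Fin n)).crx 2 = 3 := by
  have hmem : 3 ∈ {r | ∃ φ : Sym2 (Fin n) → ℕ,
      (∀ e ∈ (completeGraph (Fin n)).edgeSet, φ e < r) ∧
      (completeGraph (Fin n)).IsRainbowCycleColoring 2 φ} := by
    refine ⟨phi n, fun e _ => ?_, rainbow n hn⟩
    induction e using Sym2.ind with
    | _ x y => exact col_lt _ _
  refine le_antisymm (Nat.sInf_le hmem) (le_csInf ⟨3, hmem⟩ ?_)
  rintro r ⟨φ, hb, hr⟩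
  exact crx_lower n hn r φ hb hr
end

section
/- For k ≥ 3, if n ≥ R_{2k−2}(k) (the (2k−2)-colour Ramsey number of K_k), then crx_k(K_n) ≥ 2k − 1; that is, any edge-colouring of K_n with at most 2k−2 colours contains a set of k vertices not lying on any common rainbow cycle. -/
open SimpleGraph

-- helper lemma: path through a nodup list in complete graph
lemma exists_path_through {V : Type*} [DecidableEq V] :
    ∀ (l : List V) (hl : l ≠ []) (a : V), a ∉ l → l.Nodup →
    ∃ p : (completeGraph V).Walk a (l.getLast hl), p.IsPath ∧ p.support = a :: l ∧
      ∀ x, s(a, x) ∈ p.edges → x = l.head hl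
  | [], hl, _, _, _ => absurd rfl hl
  | [x], _, a, ha, _ => by
      have hax : a ≠ x := by simp at ha; exact ha
      refine ⟨Walk.cons (by simpa [completeGraph] using hax) Walk.nil, ?_, ?_, ?_⟩
      · rw [Walk.isPath_def, Walk.support_cons, Walk.support_nil]; simp [hax]
      · rw [Walk.support_cons, Walk.support_nil]; rfl
      · intro y hy
        rw [Walk.edges_cons, Walk.edges_nil] at hy; simp at hy
        rcases hy with h | ⟨h, _⟩
        · exact h
        · exact absurd h hax
  | x :: y :: t, _, a, ha, hnd => by
      have hax : a ≠ x := by simp at ha; tauto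
      have ha' : a ∉ y :: t := by simp at ha ⊢; tauto
      have hnd' : (y :: t).Nodup := hnd.of_cons
      have hx' : x ∉ y :: t := by simp at hnd ⊢; tauto
      obtain ⟨p, hp, hsup, hedge⟩ := exists_path_through (y :: t) (by simp) x hx' hnd'
      refine ⟨(Walk.cons (by simpa [completeGraph] using hax) p).copy rfl ((List.getLast_cons (by simp : (y :: t) ≠ [])).symm), ?_, ?_, ?_⟩
      · rw [Walk.isPath_copy]
        refine (Walk.cons_isPath_iff _ _).2 ⟨hp, ?_⟩
        rw [hsup]; simpa using ha
      · simp [hsup]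
      · intro z hz
        rw [Walk.edges_copy] at hz
        simp only [Walk.edges_cons, List.mem_cons] at hz
        rcases hz with hz | hz
        · simp only [List.head_cons]
          exact Sym2.congr_right.mp hz
        · exact absurd (Walk.fst_mem_support_of_mem_edges p hz) (by rw [hsup]; simpa using ha)


lemma exists_cycle_through {V : Type*} [DecidableEq V] (S : Finset V) (h3 : 3 ≤ S.card) :
    ∃ (u : V) (c : (completeGraph V).Walk u u), c.IsCycle ∧ ∀ v ∈ S, v ∈ c.support := by
  classical
  have hlen : 3 ≤ S.toList.length := by rw [Finset.length_toList]; exact h3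
  have hnd : S.toList.Nodup := S.nodup_toList
  obtain ⟨a, l1, hl⟩ : ∃ a l1, S.toList = a :: l1 := by
    cases h : S.toList with
    | nil => rw [h] at hlen; simp at hlen
    | cons a l1 => exact ⟨a, l1, rfl⟩
  obtain ⟨y, t, hl1⟩ : ∃ y t, l1 = y :: t := by
    cases h : l1 with
    | nil => rw [hl, h] at hlen; simp at hlen
    | cons y t => exact ⟨y, t, rfl⟩
  subst hl1
  rw [hl] at hnd
  have ht : t ≠ [] := by
    intro h; rw [hl, h] at hlen; simp at hlen
  have ha : a ∉ y :: t := by simp at hnd ⊢; tauto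
  obtain ⟨p, hp, hsup, hedge⟩ := exists_path_through (y :: t) (by simp) a ha hnd.of_cons
  have hbt : (y :: t).getLast (by simp) ∈ t := by
    rw [List.getLast_cons ht]
    exact List.getLast_mem ht
  have hab : a ≠ (y :: t).getLast (by simp) := by
    intro h; exact ha (h ▸ by simp [hbt])
  have hyb : y ≠ (y :: t).getLast (by simp) := by
    intro h; simp only [List.nodup_cons] at hnd
    exact hnd.2.1 (h ▸ hbt)
  have hq : p.reverse.IsPath := hp.reverse
  have he : s(a, (y :: t).getLast (by simp)) ∉ p.reverse.edges := by
    rw [Walk.edges_reverse, List.mem_reverse]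
    intro h
    exact hyb ((hedge _ h).symm)
  have hcyc := SimpleGraph.Path.cons_isCycle ⟨p.reverse, hq⟩
    (by simpa [completeGraph] using hab) he
  refine ⟨a, _, hcyc, ?_⟩
  intro v hv
  have : v ∈ p.support := by
    rw [hsup, ← hl]; exact Finset.mem_toList.2 hv
  simp only [Walk.support_cons, List.mem_cons]
  right
  rw [Walk.support_reverse, List.mem_reverse]
  exact this

lemma countP_add_le' {α : Type*} (l : List α) (p q : α → Bool) :
    l.countP p + l.countP q ≤ l.length + l.countP (fun x => p x && q x) := by
  induction l with
  | nil => simp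
  | cons a l ih =>
    simp only [List.countP_cons, List.length_cons]
    cases hp : p a <;> cases hq : q a <;> simp [hp, hq] <;> omega

lemma two_mono_edges {V : Type*} [DecidableEq V] {G : SimpleGraph V} {u : V}
    {c : G.Walk u u} (hc : c.IsCycle) (S : Finset V) (hS : ∀ v ∈ S, v ∈ c.support)
    (hlen : c.length ≤ 2 * S.card - 2) (hcard : 3 ≤ S.card) :
    ∃ e₁ ∈ c.edges, ∃ e₂ ∈ c.edges, e₁ ≠ e₂ ∧ (∀ v ∈ e₁, v ∈ S) ∧ ∀ v ∈ e₂, v ∈ S := by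
  classical
  set k := S.card with hk
  -- the tail of the support
  have hne : c ≠ Walk.nil := hc.ne_nil
  have hu_tail : u ∈ c.support.tail := by
    cases c with
    | nil => exact absurd rfl hne
    | cons h q => simpa using q.end_mem_support
  have hS_tail : ∀ v ∈ S, v ∈ c.support.tail := by
    intro v hv
    have := hS v hv
    rw [Walk.support_eq_cons] at this
    rcases List.mem_cons.1 this with h | h
    · exact h ▸ hu_tail
    · exact h
  have htail_nodup : c.support.tail.Nodup := hc.2
  -- count of S-elements in tail is k
  have hcount_tail : c.support.tail.countP (· ∈ S) = k := by
    rw [List.countP_eq_length_filter]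
    have hnd : (c.support.tail.filter (· ∈ S)).Nodup := htail_nodup.filter _
    have : (c.support.tail.filter (· ∈ S)).toFinset = S := by
      ext v
      simp only [List.toFinset_filter, List.mem_toFinset, Finset.mem_filter, decide_eq_true_eq]
      constructor
      · rintro h; simpa using h.2
      · intro hv; exact ⟨hS_tail v hv, by simpa using hv⟩
    rw [← List.toFinset_card_of_nodup hnd, this]
  -- dropLast is a permutation of tail
  have htne : c.support.tail ≠ [] := by
    intro h
    exact (List.mem_nil_iff u).mp (h ▸ hu_tail)
  have hlast : c.support.tail.getLast htne = u := by
    rw [List.getLast_tail]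
    exact c.getLast_support
  have hperm : c.support.dropLast.Perm c.support.tail := by
    conv_rhs => rw [← List.dropLast_append_getLast htne, hlast]
    rw [Walk.support_eq_cons, List.dropLast_cons_of_ne_nil htne]
    exact (List.perm_append_singleton _ _).symm
  have hcount_drop : c.support.dropLast.countP (· ∈ S) = k :=
    (hperm.countP_eq _).trans hcount_tail
  -- double counting over darts
  have h1 : c.darts.countP (fun d => d.fst ∈ S) = k := by
    rw [← c.map_fst_darts, List.countP_map] at hcount_drop
    exact hcount_drop
  have h2 : c.darts.countP (fun d => d.snd ∈ S) = k := by
    rw [← c.map_snd_darts, List.countP_map] at hcount_tail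
    exact hcount_tail
  have hsum := countP_add_le' c.darts (fun d => d.fst ∈ S) (fun d => d.snd ∈ S)
  rw [h1, h2, c.length_darts] at hsum
  set B := c.darts.countP
      (fun d => decide (d.fst ∈ S) && decide (d.snd ∈ S)) with hB
  have hB2 : 2 ≤ B := by omega
  -- extract two distinct edges
  have hF : ∃ F : List (Sym2 V), F = (c.darts.filter
      (fun d => decide (d.fst ∈ S) && decide (d.snd ∈ S))).map SimpleGraph.Dart.edge := ⟨_, rfl⟩
  obtain ⟨F, hF⟩ := hF
  have hedges : c.edges = c.darts.map SimpleGraph.Dart.edge := rfl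
  have hFsub : F.Sublist c.edges := by
    rw [hF, hedges]; exact List.filter_sublist.map _
  have hFnodup : F.Nodup := hFsub.nodup hc.edges_nodup
  have hFlen : 2 ≤ F.length := by
    rw [hF, List.length_map, ← List.countP_eq_length_filter]
    exact hB2
  have hFmem : ∀ e ∈ F, e ∈ c.edges ∧ ∀ v ∈ e, v ∈ S := by
    intro e he
    refine ⟨hFsub.mem he, ?_⟩
    rw [hF] at he
    simp only [List.mem_map, List.mem_filter] at he
    obtain ⟨d, ⟨_, hd⟩, rfl⟩ := he
    simp only [Bool.and_eq_true, decide_eq_true_eq] at hd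
    intro v hv
    rcases Sym2.mem_iff'.mp hv with h | h
    · exact h ▸ hd.1
    · exact h ▸ hd.2
  obtain ⟨e₁, e₂, rest, hF2⟩ : ∃ e₁ e₂ rest, F = e₁ :: e₂ :: rest := by
    match F, hFlen with
    | x :: y :: r, _ => exact ⟨x, y, r, rfl⟩
  have h₁ := hFmem e₁ (by rw [hF2]; simp)
  have h₂ := hFmem e₂ (by rw [hF2]; simp)
  refine ⟨e₁, h₁.1, e₂, h₂.1, ?_, h₁.2, h₂.2⟩
  rw [hF2] at hFnodup
  simp only [List.nodup_cons, List.mem_cons] at hFnodup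
  tauto

/-- for k ≥ 3, if n is at least the (2k−2)-colour Ramsey number of
K_k (i.e. every (2k−2)-edge-colouring of K_n has a monochromatic K_k), then
crx_k(K_n) ≥ 2k − 1. -/
theorem crx_k_complete_lower (k n : ℕ) (hk : 3 ≤ k)
    (hRamsey : ∀ φ : Sym2 (Fin n) → Fin (2 * k - 2),
      ∃ S : Finset (Fin n), S.card = k ∧ ∃ c : Fin (2 * k - 2),
        ∀ u ∈ S, ∀ v ∈ S, u ≠ v → φ s(u, v) = c) :
    2 * k - 1 ≤ (completeGraph (Fin n)).crx k := by
  classical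
  rw [SimpleGraph.crx]
  apply le_csInf
  · -- nonemptiness via an injective colouring
    refine ⟨Fintype.card (Sym2 (Fin n)),
      fun e => (Fintype.equivFin (Sym2 (Fin n)) e : ℕ),
      fun e _ => (Fintype.equivFin (Sym2 (Fin n)) e).isLt, ?_⟩
    intro S hS
    obtain ⟨u, c, hc, hsup⟩ := exists_cycle_through S (hS ▸ hk)
    refine ⟨u, c, hc, hsup, ?_⟩
    refine hc.edges_nodup.map ?_
    intro a b h
    exact (Fintype.equivFin (Sym2 (Fin n))).injective (Fin.val_injective h)
  · rintro r ⟨φ, hφ, hrb⟩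
    by_contra hlt
    push_neg at hlt
    have hr2 : r ≤ 2 * k - 2 := by omega
    have hpos : 0 < 2 * k - 2 := by omega
    obtain ⟨S, hScard, c0, hmono⟩ :=
      hRamsey (fun e => ⟨φ e % (2 * k - 2), Nat.mod_lt _ hpos⟩)
    obtain ⟨u, c, hc, hsup, hnd⟩ := hrb S hScard
    have hedge_lt : ∀ e ∈ c.edges, φ e < 2 * k - 2 := fun e he =>
      lt_of_lt_of_le (hφ e (c.edges_subset_edgeSet he)) hr2
    have hmono' : ∀ a ∈ S, ∀ b ∈ S, a ≠ b → φ s(a, b) = (c0 : ℕ) := by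
      intro a ha b hb hab
      have h2 := hmono a ha b hb hab
      have h3 : φ s(a, b) % (2 * k - 2) = (c0 : ℕ) := congrArg Fin.val h2
      have h4 : φ s(a, b) < 2 * k - 2 :=
        lt_of_lt_of_le (hφ s(a, b) (by simpa [completeGraph] using hab)) hr2
      rwa [Nat.mod_eq_of_lt h4] at h3
    have hlen : c.length ≤ 2 * S.card - 2 := by
      rw [hScard]
      have h1 : (c.edges.map φ).toFinset ⊆ Finset.range (2 * k - 2) := by
        intro x hx
        simp only [List.mem_toFinset, List.mem_map] at hx
        obtain ⟨e, he, rfl⟩ := hx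
        exact Finset.mem_range.2 (hedge_lt e he)
      have h2 := Finset.card_le_card h1
      rw [List.toFinset_card_of_nodup hnd, Finset.card_range, List.length_map,
        c.length_edges] at h2
      exact h2
    obtain ⟨e₁, he₁, e₂, he₂, hne, hin₁, hin₂⟩ :=
      two_mono_edges hc S hsup hlen (hScard ▸ hk)
    have key : ∀ e ∈ c.edges, (∀ v ∈ e, v ∈ S) → φ e = (c0 : ℕ) := by
      intro e he hin
      induction e with
      | h a b =>
        have hab : a ≠ b := by
          have := c.edges_subset_edgeSet he
          rw [mem_edgeSet] at this
          simpa [completeGraph] using this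
        exact hmono' a (hin a (Sym2.mem_mk_left a b)) b (hin b (Sym2.mem_mk_right a b)) hab
    exact hne (List.inj_on_of_nodup_map hnd he₁ he₂
      (by rw [key e₁ he₁ hin₁, key e₂ he₂ hin₂]))
end
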